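/- arXiv:1903.04242 — 4 statements merged into one kernel-verified Lean document; each statement's English description precedes it below -/
import Mathlib

section
/- For every ζ ∈ ℂ there exists a unique continuous function φ(·,ζ) : [0,∞) → ℂ satisfying the Volterra integral equation φ(x,ζ) = S_ζ(x) + ∫₀ˣ S_ζ(x−y) v(y) φ(y,ζ) dy for all x ≥ 0 (this unique solution is called the regular solution). -/
open MeasureTheory Set

/-- `S ζ t = sin(ζ t)/ζ` for `ζ ≠ 0`, and `S 0 t = t`. -/
noncomputable def S (ζ : ℂ) (t : ℝ) : ℂ :=
  if ζ = 0 then (t : ℂ) else Complex.sin (ζ * t) / ζ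

namespace RegSol

variable {w : ℝ → ℂ} {C₀ : ℝ}

lemma S_cont (ζ : ℂ) : Continuous (S ζ) := by
  unfold S
  split_ifs with h
  · exact Complex.continuous_ofReal
  · exact (Complex.continuous_sin.comp (continuous_const.mul Complex.continuous_ofReal)).div_const ζ

lemma norm_mul3_le {a b c : ℂ} {A B C : ℝ} (ha : ‖a‖ ≤ A) (hb : ‖b‖ ≤ B) (hc : ‖c‖ ≤ C)
    (hA : 0 ≤ A) : ‖a * b * c‖ ≤ A * B * C := by
  have hB : 0 ≤ B := le_trans (norm_nonneg _) hb
  calc ‖a * b * c‖ = ‖a‖ * ‖b‖ * ‖c‖ := by rw [norm_mul, norm_mul]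
    _ ≤ A * B * C := mul_le_mul (mul_le_mul ha hb (norm_nonneg _) hA) hc (norm_nonneg _)
      (by positivity)

lemma II3 (hw : Measurable w) (hwb : ∀ y, ‖w y‖ ≤ C₀)
    {h g : ℝ → ℂ} (hh : Continuous h) (hg : Continuous g) (a b : ℝ) :
    IntervalIntegrable (fun y => h y * w y * g y) volume a b := by
  rw [intervalIntegrable_iff]
  obtain ⟨Ch, hCh⟩ := isCompact_uIcc.exists_bound_of_continuousOn (hh.continuousOn (s := uIcc a b))
  obtain ⟨Cg, hCg⟩ := isCompact_uIcc.exists_bound_of_continuousOn (hg.continuousOn (s := uIcc a b))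
  have hCh0 : 0 ≤ Ch := le_trans (norm_nonneg _) (hCh a left_mem_uIcc)
  apply Measure.integrableOn_of_bounded (M := Ch * C₀ * Cg)
  · rw [uIoc_eq_union]
    exact ((measure_union_le _ _).trans_lt (by simp [measure_Ioc_lt_top])).ne
  · exact ((hh.aestronglyMeasurable.mul hw.aestronglyMeasurable).mul hg.aestronglyMeasurable)
  · refine (ae_restrict_iff' measurableSet_uIoc).2 (ae_of_all _ fun y hy => ?_)
    have hy' := uIoc_subset_uIcc hy
    exact norm_mul3_le (hCh y hy') (hwb y) (hCg y hy') hCh0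

lemma II3' (hw : Measurable w) (hwb : ∀ y, ‖w y‖ ≤ C₀)
    {h : ℝ → ℂ} (hh : Continuous h) {x : ℝ} (hx : 0 ≤ x) {g : ℝ → ℂ}
    (hg : AEStronglyMeasurable g (volume.restrict (Ioc 0 x))) {c : ℝ}
    (hgb : ∀ y ∈ Ioc 0 x, ‖g y‖ ≤ c) :
    IntervalIntegrable (fun y => h y * w y * g y) volume 0 x := by
  rw [intervalIntegrable_iff, uIoc_of_le hx]
  obtain ⟨Ch, hCh⟩ := isCompact_Icc.exists_bound_of_continuousOn (hh.continuousOn (s := Icc 0 x))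
  have hCh0 : 0 ≤ Ch := le_trans (norm_nonneg _) (hCh 0 ⟨le_rfl, hx⟩)
  refine Integrable.mono' (g := fun _ => Ch * C₀ * c)
    (integrableOn_const measure_Ioc_lt_top.ne)
    (((hh.aestronglyMeasurable).restrict.mul (hw.aestronglyMeasurable).restrict).mul hg) ?_
  refine (ae_restrict_iff' measurableSet_Ioc).2 (ae_of_all _ fun y hy => ?_)
  exact norm_mul3_le (hCh y (Ioc_subset_Icc_self hy)) (hwb y) (hgb y hy) hCh0

lemma cont_T (ζ : ℂ) (hw : Measurable w) (hwb : ∀ y, ‖w y‖ ≤ C₀)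
    {u : ℝ → ℂ} (hu : Continuous u) :
    Continuous fun x => ∫ y in (0:ℝ)..x, S ζ (x - y) * w y * u y := by
  by_cases hζ : ζ = 0
  · subst hζ
    have hof : Continuous fun y : ℝ => (y : ℂ) := Complex.continuous_ofReal
    have hone : Continuous fun _ : ℝ => (1 : ℂ) := continuous_const
    have key : ∀ x : ℝ, ∫ y in (0:ℝ)..x, S 0 (x - y) * w y * u y
        = ((x : ℂ) * ∫ y in (0:ℝ)..x, (1 : ℂ) * w y * u y)
          - ∫ y in (0:ℝ)..x, (y : ℂ) * w y * u y := by
      intro x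
      calc ∫ y in (0:ℝ)..x, S 0 (x - y) * w y * u y
          = ∫ y in (0:ℝ)..x, ((x : ℂ) * ((1:ℂ) * w y * u y) - (y : ℂ) * w y * u y) := by
            refine intervalIntegral.integral_congr fun y hy => ?_
            simp only [S, if_pos rfl]
            push_cast
            ring
        _ = (∫ y in (0:ℝ)..x, (x : ℂ) * ((1:ℂ) * w y * u y))
              - ∫ y in (0:ℝ)..x, (y : ℂ) * w y * u y :=
            intervalIntegral.integral_sub ((II3 hw hwb hone hu 0 x).const_mul _)
              (II3 hw hwb hof hu 0 x)
        _ = ((x : ℂ) * ∫ y in (0:ℝ)..x, (1:ℂ) * w y * u y)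
              - ∫ y in (0:ℝ)..x, (y : ℂ) * w y * u y := by
            rw [intervalIntegral.integral_const_mul]
    simp only [key]
    exact (Complex.continuous_ofReal.mul
        (intervalIntegral.continuous_primitive (fun a b => II3 hw hwb hone hu a b) 0)).sub
      (intervalIntegral.continuous_primitive (fun a b => II3 hw hwb hof hu a b) 0)
  · have hcos : Continuous fun y : ℝ => Complex.cos (ζ * y) :=
      Complex.continuous_cos.comp (continuous_const.mul Complex.continuous_ofReal)
    have hsin : Continuous fun y : ℝ => Complex.sin (ζ * y) :=
      Complex.continuous_sin.comp (continuous_const.mul Complex.continuous_ofReal)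
    have key : ∀ x : ℝ, ∫ y in (0:ℝ)..x, S ζ (x - y) * w y * u y
        = ((Complex.sin (ζ * x) / ζ) * ∫ y in (0:ℝ)..x, Complex.cos (ζ * y) * w y * u y)
          - (Complex.cos (ζ * x) / ζ) * ∫ y in (0:ℝ)..x, Complex.sin (ζ * y) * w y * u y := by
      intro x
      calc ∫ y in (0:ℝ)..x, S ζ (x - y) * w y * u y
          = ∫ y in (0:ℝ)..x, ((Complex.sin (ζ * x) / ζ) * (Complex.cos (ζ * y) * w y * u y)
              - (Complex.cos (ζ * x) / ζ) * (Complex.sin (ζ * y) * w y * u y)) := by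
            refine intervalIntegral.integral_congr fun y hy => ?_
            simp only [S, if_neg hζ]
            have h1 : ζ * ((x : ℝ) - (y : ℝ) : ℝ) = ζ * x - ζ * y := by
              push_cast; ring
            rw [h1, Complex.sin_sub]
            field_simp
        _ = (∫ y in (0:ℝ)..x, (Complex.sin (ζ * x) / ζ) * (Complex.cos (ζ * y) * w y * u y))
              - ∫ y in (0:ℝ)..x, (Complex.cos (ζ * x) / ζ) * (Complex.sin (ζ * y) * w y * u y) :=
            intervalIntegral.integral_sub ((II3 hw hwb hcos hu 0 x).const_mul _)
              ((II3 hw hwb hsin hu 0 x).const_mul _)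
        _ = _ := by rw [intervalIntegral.integral_const_mul, intervalIntegral.integral_const_mul]
    simp only [key]
    have hc1 : Continuous fun x : ℝ => Complex.sin (ζ * x) / ζ := hsin.div_const ζ
    have hc2 : Continuous fun x : ℝ => Complex.cos (ζ * x) / ζ := hcos.div_const ζ
    have hp1 : Continuous fun x : ℝ => ∫ y in (0:ℝ)..x, Complex.cos (ζ * y) * w y * u y :=
      intervalIntegral.continuous_primitive (fun a b => II3 hw hwb hcos hu a b) 0
    have hp2 : Continuous fun x : ℝ => ∫ y in (0:ℝ)..x, Complex.sin (ζ * y) * w y * u y :=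
      intervalIntegral.continuous_primitive (fun a b => II3 hw hwb hsin hu a b) 0
    exact (hc1.mul hp1).sub (hc2.mul hp2)

lemma key_est (ζ : ℂ) (hwb : ∀ y, ‖w y‖ ≤ C₀)
    {x B c : ℝ} (hx : 0 ≤ x) (hc : 0 ≤ c)
    (hB : ∀ t ∈ Icc 0 x, ‖S ζ t‖ ≤ B)
    {g : ℝ → ℂ} (n : ℕ)
    (hgb : ∀ y ∈ Ioc 0 x, ‖S ζ (x - y) * w y * g y‖ ≤ B * C₀ * (c * y ^ n / n.factorial)) :
    ‖∫ y in (0:ℝ)..x, S ζ (x - y) * w y * g y‖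
      ≤ B * C₀ * c * x ^ (n+1) / (n+1).factorial := by
  have hB0 : 0 ≤ B := le_trans (norm_nonneg _) (hB 0 ⟨le_rfl, hx⟩)
  have hC₀0 : 0 ≤ C₀ := le_trans (norm_nonneg _) (hwb 0)
  have hbound_int : IntervalIntegrable (fun y => B * C₀ * c / n.factorial * y ^ n) volume 0 x :=
    (Continuous.intervalIntegrable (by continuity)) 0 x
  have hae : ∀ᵐ y ∂(volume.restrict (uIoc 0 x)),
      ‖S ζ (x - y) * w y * g y‖ ≤ B * C₀ * c / n.factorial * y ^ n := by
    rw [uIoc_of_le hx]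
    refine (ae_restrict_iff' measurableSet_Ioc).2 (ae_of_all _ fun y hy => ?_)
    calc ‖S ζ (x - y) * w y * g y‖ ≤ B * C₀ * (c * y ^ n / n.factorial) := hgb y hy
      _ = B * C₀ * c / n.factorial * y ^ n := by ring
  have hcnn : 0 ≤ B * C₀ * c * x ^ (n+1) / (n+1).factorial := by positivity
  have key := intervalIntegral.norm_integral_le_abs_of_norm_le hae hbound_int
  rw [intervalIntegral.integral_const_mul, integral_pow] at key
  have hfac : ((n+1).factorial : ℝ) = (n+1) * n.factorial := by
    rw [Nat.factorial_succ]; push_cast; ring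
  have heq : B * C₀ * c / n.factorial * ((x ^ (n+1) - 0 ^ (n+1)) / ((n:ℝ) + 1))
      = B * C₀ * c * x ^ (n+1) / (n+1).factorial := by
    rw [zero_pow (Nat.succ_ne_zero n), sub_zero, hfac, div_mul_div_comm,
      mul_comm ((n:ℝ)+1) (n.factorial : ℝ)]
  rw [heq] at key
  calc ‖∫ y in (0:ℝ)..x, S ζ (x - y) * w y * g y‖
      ≤ |B * C₀ * c * x ^ (n+1) / (n+1).factorial| := key
    _ = B * C₀ * c * x ^ (n+1) / (n+1).factorial := abs_of_nonneg hcnn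

noncomputable def pic (ζ : ℂ) (w : ℝ → ℂ) : ℕ → ℝ → ℂ
  | 0 => fun x => S ζ x
  | n + 1 => fun x => ∫ y in (0:ℝ)..x, S ζ (x - y) * w y * pic ζ w n y

end RegSol
/-- Existence and uniqueness of the regular solution of the Volterra integral
equation `φ(x,ζ) = S_ζ(x) + ∫₀ˣ S_ζ(x−y) v(y) φ(y,ζ) dy` among continuous
functions on `[0,∞)`. -/
theorem regular_solution_exists_unique
    (v : ℝ → ℝ) (hv_meas : Measurable v) (C₀ ρ : ℝ)
    (hC₀ : 0 < C₀) (hρ : 2 < ρ)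
    (hv : ∀ x : ℝ, 0 ≤ x → |v x| ≤ C₀ * (1 + x) ^ (-ρ)) (ζ : ℂ) :
    ∃ φ : ℝ → ℂ,
      (ContinuousOn φ (Set.Ici 0) ∧
        ∀ x : ℝ, 0 ≤ x →
          φ x = S ζ x + ∫ y in (0:ℝ)..x, S ζ (x - y) * (v y : ℂ) * φ y) ∧
      ∀ ψ : ℝ → ℂ,
        ContinuousOn ψ (Set.Ici 0) →
        (∀ x : ℝ, 0 ≤ x →
          ψ x = S ζ x + ∫ y in (0:ℝ)..x, S ζ (x - y) * (v y : ℂ) * ψ y) →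
        Set.EqOn ψ φ (Set.Ici 0) := by
  classical
  open RegSol in
  set w : ℝ → ℂ := fun y => if 0 < y then (v y : ℂ) else 0 with hw_def
  have hw_meas : Measurable w := Measurable.ite measurableSet_Ioi
    (Complex.measurable_ofReal.comp hv_meas) measurable_const
  have hwb : ∀ y, ‖w y‖ ≤ C₀ := by
    intro y
    by_cases hy : 0 < y
    · simp only [hw_def, if_pos hy]
      rw [Complex.norm_real]
      calc ‖v y‖ ≤ C₀ * (1 + y) ^ (-ρ) := hv y hy.le
        _ ≤ C₀ * 1 := mul_le_mul_of_nonneg_left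
            (Real.rpow_le_one_of_one_le_of_nonpos (by linarith) (by linarith)) hC₀.le
        _ = C₀ := mul_one C₀
    · simp only [hw_def, if_neg hy, norm_zero]; exact hC₀.le
  have hw0 : ∀ y : ℝ, y ≤ 0 → w y = 0 := fun y hy => if_neg (not_lt.2 hy)
  set u : ℕ → ℝ → ℂ := RegSol.pic ζ w with hu_def
  have hu0 : ∀ x, u 0 x = S ζ x := fun x => rfl
  have huS : ∀ n x, u (n+1) x = ∫ y in (0:ℝ)..x, S ζ (x - y) * w y * u n y := fun n x => rfl
  have hu_cont : ∀ n, Continuous (u n) := by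
    intro n; induction n with
    | zero => exact RegSol.S_cont ζ
    | succ n ih => exact RegSol.cont_T ζ hw_meas hwb ih
  have hSd : ∀ x : ℝ, Continuous fun y : ℝ => S ζ (x - y) := fun x =>
    (RegSol.S_cont ζ).comp (continuous_const.sub continuous_id')
  -- per-interval bounds
  have hBex : ∀ T : ℝ, 0 ≤ T → ∃ B : ℝ, 0 ≤ B ∧ (∀ t ∈ Icc (0:ℝ) T, ‖S ζ t‖ ≤ B) ∧
      ∀ n, ∀ x ∈ Icc (0:ℝ) T, ‖u n x‖ ≤ B * ((B * C₀) ^ n * x ^ n / n.factorial) := by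
    intro T hT
    obtain ⟨B, hB⟩ := isCompact_Icc.exists_bound_of_continuousOn
      ((RegSol.S_cont ζ).continuousOn (s := Icc 0 T))
    have hB0 : 0 ≤ B := le_trans (norm_nonneg _) (hB 0 ⟨le_rfl, hT⟩)
    refine ⟨B, hB0, hB, ?_⟩
    intro n
    induction n with
    | zero => intro x hx; simpa [hu0] using hB x hx
    | succ n ih =>
      intro x hx
      have hx0 : 0 ≤ x := hx.1
      rw [huS]
      have hkey := RegSol.key_est (w := w) ζ hwb hx0 (c := B * (B*C₀)^n) (by positivity)
        (fun t ht => hB t ⟨ht.1, ht.2.trans hx.2⟩) (g := u n) n ?_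
      · calc ‖∫ y in (0:ℝ)..x, S ζ (x - y) * w y * u n y‖
            ≤ B * C₀ * (B * (B*C₀)^n) * x^(n+1) / (n+1).factorial := hkey
          _ = B * ((B*C₀)^(n+1) * x^(n+1) / (n+1).factorial) := by
              rw [pow_succ]; ring
      · intro y hy
        have hyT : y ∈ Icc (0:ℝ) T := ⟨hy.1.le, hy.2.trans hx.2⟩
        have h1 : ‖S ζ (x - y)‖ ≤ B := hB _ ⟨by linarith [hy.2], by linarith [hy.1.le, hx.2]⟩
        calc ‖S ζ (x - y) * w y * u n y‖
            ≤ B * C₀ * (B * ((B*C₀)^n * y^n / n.factorial)) :=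
              RegSol.norm_mul3_le h1 (hwb y) (ih y hyT) hB0
          _ = B * C₀ * ((B * (B*C₀)^n) * y^n / n.factorial) := by ring
  have hu_neg : ∀ n (x : ℝ), x ≤ 0 → u (n+1) x = 0 := by
    intro n x hx
    rw [huS]
    have hEq : EqOn (fun y => S ζ (x - y) * w y * u n y) (fun _ => (0:ℂ)) (uIcc 0 x) := by
      intro y hy
      rw [uIcc_of_ge hx] at hy
      simp [hw0 y hy.2]
    rw [intervalIntegral.integral_congr hEq]
    simp
  have hsummable : ∀ x : ℝ, Summable fun n => u n x := by
    intro x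
    rcases le_or_gt x 0 with hx | hx
    · refine (summable_nat_add_iff 1).1 ?_
      have hz : (fun n : ℕ => u (n+1) x) = fun _ => 0 := funext fun n => hu_neg n x hx
      rw [hz]; exact summable_zero
    · obtain ⟨B, hB0, hB, hbd⟩ := hBex x hx.le
      refine Summable.of_norm ?_
      refine Summable.of_nonneg_of_le (fun n => norm_nonneg _) (fun n => ?_)
        ((Real.summable_pow_div_factorial (B*C₀*x)).mul_left B)
      calc ‖u n x‖ ≤ B * ((B*C₀)^n * x^n / n.factorial) := hbd n x ⟨hx.le, le_rfl⟩
        _ = B * ((B*C₀*x)^n / n.factorial) := by rw [mul_pow (B*C₀) x n]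
  set φ : ℝ → ℂ := fun x => ∑' n, u n x with hφ_def
  -- continuity of φ on Ici 0
  have hφ_cont : ContinuousOn φ (Ici 0) := by
    intro x₀ hx₀
    have hx₀' : (0:ℝ) ≤ x₀ := hx₀
    obtain ⟨B, hB0, hB, hbd⟩ := hBex (x₀ + 1) (by linarith)
    have hcont : ContinuousOn φ (Icc 0 (x₀+1)) := by
      refine continuousOn_tsum (fun n => (hu_cont n).continuousOn)
        ((Real.summable_pow_div_factorial (B*C₀*(x₀+1))).mul_left B) ?_
      intro n x hx
      calc ‖u n x‖ ≤ B * ((B*C₀)^n * x^n / n.factorial) := hbd n x hx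
        _ ≤ B * ((B*C₀*(x₀+1))^n / n.factorial) := by
            rw [mul_pow (B*C₀) (x₀+1) n]
            have hxp : x^n ≤ (x₀+1)^n := pow_le_pow_left₀ hx.1 hx.2 n
            gcongr
    have hmem : Icc (0:ℝ) (x₀+1) ∈ nhdsWithin x₀ (Ici 0) := by
      rw [← Ici_inter_Iic]
      exact Filter.inter_mem self_mem_nhdsWithin
        (mem_nhdsWithin_of_mem_nhds (Iic_mem_nhds (by linarith)))
    exact (hcont.continuousWithinAt ⟨hx₀', by linarith⟩).mono_of_mem_nhdsWithin hmem
  -- the equation with kernel w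
  have heqw : ∀ x : ℝ, 0 ≤ x → φ x = S ζ x + ∫ y in (0:ℝ)..x, S ζ (x - y) * w y * φ y := by
    intro x hx
    obtain ⟨B, hB0, hB, hbd⟩ := hBex x hx
    have hFi : ∀ n : ℕ, Integrable (fun y => S ζ (x - y) * w y * u n y)
        (volume.restrict (Ioc 0 x)) := by
      intro n
      have h := RegSol.II3 hw_meas hwb (hSd x) (hu_cont n) 0 x
      rw [intervalIntegrable_iff, uIoc_of_le hx] at h
      exact h
    have hFnorm : ∀ n : ℕ, (∫ y in Ioc (0:ℝ) x, ‖S ζ (x - y) * w y * u n y‖)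
        ≤ (B * C₀ * B * x) * ((B*C₀*x) ^ n / n.factorial) := by
      intro n
      have hptw : ∀ y ∈ Ioc (0:ℝ) x, ‖S ζ (x - y) * w y * u n y‖
          ≤ B * C₀ * (B * ((B*C₀*x)^n / n.factorial)) := by
        intro y hy
        have h3 : ‖u n y‖ ≤ B * ((B*C₀*x)^n / n.factorial) := by
          calc ‖u n y‖ ≤ B * ((B*C₀)^n * y^n / n.factorial) := hbd n y ⟨hy.1.le, hy.2⟩
            _ ≤ B * ((B*C₀)^n * x^n / n.factorial) := by
                have := pow_le_pow_left₀ hy.1.le hy.2 n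
                gcongr
            _ = B * ((B*C₀*x)^n / n.factorial) := by rw [mul_pow (B*C₀) x n]
        exact RegSol.norm_mul3_le (hB _ ⟨by linarith [hy.2], by linarith [hy.1.le]⟩)
          (hwb y) h3 hB0
      calc (∫ y in Ioc (0:ℝ) x, ‖S ζ (x - y) * w y * u n y‖)
          ≤ ∫ _ in Ioc (0:ℝ) x, (B * C₀ * (B * ((B*C₀*x)^n / n.factorial))) :=
            setIntegral_mono_on (hFi n).norm
              (integrableOn_const measure_Ioc_lt_top.ne) measurableSet_Ioc hptw
        _ = (B * C₀ * (B * ((B*C₀*x)^n / n.factorial))) * x := by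
            rw [setIntegral_const, measureReal_def, Real.volume_Ioc, smul_eq_mul, sub_zero,
              ENNReal.toReal_ofReal hx, mul_comm]
        _ = (B * C₀ * B * x) * ((B*C₀*x) ^ n / n.factorial) := by ring
    have hFsum : Summable fun n => ∫ y in Ioc (0:ℝ) x, ‖S ζ (x - y) * w y * u n y‖ :=
      Summable.of_nonneg_of_le (fun n => integral_nonneg fun y => norm_nonneg _) hFnorm
        ((Real.summable_pow_div_factorial (B*C₀*x)).mul_left _)
    have hswap := MeasureTheory.integral_tsum_of_summable_integral_norm hFi hFsum
    have hptsum : ∀ y : ℝ, (∑' n, S ζ (x - y) * w y * u n y) = S ζ (x - y) * w y * φ y := by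
      intro y
      simp_rw [mul_assoc]
      rw [tsum_mul_left, tsum_mul_left]
    calc φ x = u 0 x + ∑' n, u (n+1) x := Summable.tsum_eq_zero_add (hsummable x)
      _ = S ζ x + ∑' n, ∫ y in Ioc (0:ℝ) x, S ζ (x - y) * w y * u n y := by
          rw [hu0]
          congr 1
          refine tsum_congr fun n => ?_
          rw [huS, intervalIntegral.integral_of_le hx]
      _ = S ζ x + ∫ y in Ioc (0:ℝ) x, ∑' n, S ζ (x - y) * w y * u n y := by rw [hswap]
      _ = S ζ x + ∫ y in Ioc (0:ℝ) x, S ζ (x - y) * w y * φ y := by simp_rw [hptsum]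
      _ = S ζ x + ∫ y in (0:ℝ)..x, S ζ (x - y) * w y * φ y := by
          rw [intervalIntegral.integral_of_le hx]
  -- kernel congruence between v and w
  have hwv : ∀ (f : ℝ → ℂ) (x : ℝ), 0 ≤ x →
      (∫ y in (0:ℝ)..x, S ζ (x - y) * (v y : ℂ) * f y)
        = ∫ y in (0:ℝ)..x, S ζ (x - y) * w y * f y := by
    intro f x hx
    refine intervalIntegral.integral_congr_ae (ae_of_all _ fun y hy => ?_)
    rw [uIoc_of_le hx] at hy
    simp only [hw_def, if_pos hy.1]
  refine ⟨φ, ⟨hφ_cont, fun x hx => by rw [hwv φ x hx]; exact heqw x hx⟩, ?_⟩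
  -- uniqueness
  intro ψ hψc hψeq x₀ hx₀
  have hx₀' : (0:ℝ) ≤ x₀ := hx₀
  have hψw : ∀ x : ℝ, 0 ≤ x → ψ x = S ζ x + ∫ y in (0:ℝ)..x, S ζ (x - y) * w y * ψ y := by
    intro x hx
    rw [hψeq x hx, hwv ψ x hx]
  obtain ⟨B, hB0, hB, _⟩ := hBex x₀ hx₀'
  have hψm : AEStronglyMeasurable ψ (volume.restrict (Ici (0:ℝ))) :=
    hψc.aestronglyMeasurable measurableSet_Ici
  have hφm : AEStronglyMeasurable φ (volume.restrict (Ici (0:ℝ))) :=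
    hφ_cont.aestronglyMeasurable measurableSet_Ici
  have hrestr : ∀ t : ℝ, volume.restrict (Ioc (0:ℝ) t) ≤ volume.restrict (Ici (0:ℝ)) :=
    fun t => Measure.restrict_mono (fun y hy => hy.1.le) le_rfl
  obtain ⟨Cψ, hCψ⟩ := isCompact_Icc.exists_bound_of_continuousOn
    (hψc.mono Icc_subset_Ici_self : ContinuousOn ψ (Icc 0 x₀))
  obtain ⟨Cφ, hCφ⟩ := isCompact_Icc.exists_bound_of_continuousOn
    (hφ_cont.mono Icc_subset_Ici_self : ContinuousOn φ (Icc 0 x₀))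
  obtain ⟨D, hD⟩ := isCompact_Icc.exists_bound_of_continuousOn
    (((hψc.mono Icc_subset_Ici_self).sub (hφ_cont.mono Icc_subset_Ici_self)) :
      ContinuousOn (fun y => ψ y - φ y) (Icc 0 x₀))
  have hD0 : 0 ≤ D := le_trans (norm_nonneg _) (hD 0 ⟨le_rfl, hx₀'⟩)
  have hdiff : ∀ x ∈ Icc (0:ℝ) x₀, ψ x - φ x
      = ∫ y in (0:ℝ)..x, S ζ (x - y) * w y * (ψ y - φ y) := by
    intro x hx
    have hintψ : IntervalIntegrable (fun y => S ζ (x - y) * w y * ψ y) volume 0 x :=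
      RegSol.II3' hw_meas hwb (hSd x) hx.1 (hψm.mono_measure (hrestr x))
        (fun y hy => hCψ y ⟨hy.1.le, hy.2.trans hx.2⟩)
    have hintφ : IntervalIntegrable (fun y => S ζ (x - y) * w y * φ y) volume 0 x :=
      RegSol.II3' hw_meas hwb (hSd x) hx.1 (hφm.mono_measure (hrestr x))
        (fun y hy => hCφ y ⟨hy.1.le, hy.2.trans hx.2⟩)
    rw [hψw x hx.1, heqw x hx.1, add_sub_add_left_eq_sub,
      ← intervalIntegral.integral_sub hintψ hintφ]
    refine intervalIntegral.integral_congr fun y hy => ?_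
    ring
  have hiter : ∀ n : ℕ, ∀ x ∈ Icc (0:ℝ) x₀,
      ‖ψ x - φ x‖ ≤ D * ((B*C₀)^n * x^n / n.factorial) := by
    intro n
    induction n with
    | zero => intro x hx; simpa using hD x hx
    | succ n ih =>
      intro x hx
      rw [hdiff x hx]
      have hkey := RegSol.key_est (w := w) ζ hwb hx.1 (c := D * (B*C₀)^n) (by positivity)
        (fun t ht => hB t ⟨ht.1, ht.2.trans hx.2⟩) (g := fun y => ψ y - φ y) n ?_
      · calc ‖∫ y in (0:ℝ)..x, S ζ (x - y) * w y * (ψ y - φ y)‖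
            ≤ B * C₀ * (D * (B*C₀)^n) * x^(n+1) / (n+1).factorial := hkey
          _ = D * ((B*C₀)^(n+1) * x^(n+1) / (n+1).factorial) := by rw [pow_succ]; ring
      · intro y hy
        have h1 : ‖S ζ (x - y)‖ ≤ B := hB _ ⟨by linarith [hy.2], by linarith [hy.1.le, hx.2]⟩
        calc ‖S ζ (x - y) * w y * (ψ y - φ y)‖
            ≤ B * C₀ * (D * ((B*C₀)^n * y^n / n.factorial)) :=
              RegSol.norm_mul3_le h1 (hwb y) (ih y ⟨hy.1.le, hy.2.trans hx.2⟩) hB0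
          _ = B * C₀ * ((D * (B*C₀)^n) * y^n / n.factorial) := by ring
  have hlim : Filter.Tendsto (fun n : ℕ => D * ((B*C₀)^n * x₀^n / n.factorial))
      Filter.atTop (nhds 0) := by
    have h1 : (fun n : ℕ => D * ((B*C₀)^n * x₀^n / n.factorial))
        = fun n : ℕ => D * ((B*C₀*x₀)^n / n.factorial) := funext fun n => by
          rw [mul_pow (B*C₀) x₀ n]
    rw [h1]
    simpa using ((Real.summable_pow_div_factorial (B*C₀*x₀)).tendsto_atTop_zero).const_mul D
  have hle : ‖ψ x₀ - φ x₀‖ ≤ 0 :=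
    le_of_tendsto_of_tendsto' tendsto_const_nhds hlim (fun n => hiter n x₀ ⟨hx₀', le_rfl⟩)
  exact sub_eq_zero.1 (norm_le_zero_iff.1 hle)
end

section
/- For each fixed x ≥ 0 the map ζ ↦ φ(x,ζ) is an entire function of ζ, and φ(x,ζ) = φ(x,−ζ) for all ζ ∈ ℂ. -/
open MeasureTheory Set Metric

lemma S_neg (ζ : ℂ) (t : ℝ) : S (-ζ) t = S ζ t := by
  unfold S
  rcases eq_or_ne ζ 0 with h | h
  · simp [h]
  · rw [if_neg h, if_neg (neg_ne_zero.mpr h)]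
    rw [neg_mul, Complex.sin_neg, neg_div_neg_eq]

lemma norm_cos_le_exp (z : ℂ) : ‖Complex.cos z‖ ≤ Real.exp ‖z‖ := by
  rw [Complex.cos]
  calc ‖(Complex.exp (z * Complex.I) + Complex.exp (-z * Complex.I)) / 2‖
      ≤ (‖Complex.exp (-z * Complex.I)‖ + ‖Complex.exp (z * Complex.I)‖) / 2 := by
        rw [norm_div]
        have := norm_add_le (Complex.exp (z * Complex.I)) (Complex.exp (-z * Complex.I))
        simp only [Complex.norm_ofNat]
        linarith
    _ ≤ (Real.exp ‖z‖ + Real.exp ‖z‖) / 2 := by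
        gcongr <;> rw [Complex.norm_exp] <;> apply Real.exp_le_exp.mpr
        · calc (-z * Complex.I).re ≤ ‖-z * Complex.I‖ := Complex.re_le_norm _
            _ = ‖z‖ := by simp
        · calc (z * Complex.I).re ≤ ‖z * Complex.I‖ := Complex.re_le_norm _
            _ = ‖z‖ := by simp
    _ = Real.exp ‖z‖ := by ring

lemma hasDerivAt_S_t (ζ : ℂ) (s : ℝ) :
    HasDerivAt (fun u : ℝ => S ζ u) (Complex.cos (ζ * s)) s := by
  rcases eq_or_ne ζ 0 with h | h
  · simp only [S, h, if_true, zero_mul, Complex.cos_zero]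
    simpa using (hasDerivAt_id s).ofReal_comp
  · simp only [S, if_neg h]
    have h1 : HasDerivAt (fun u : ℝ => Complex.sin (ζ * u)) (Complex.cos (ζ * s) * ζ) s := by
      have h2 : HasDerivAt (fun u : ℝ => (ζ * u : ℂ)) ζ s := by
        simpa using ((Complex.ofRealCLM.hasDerivAt (x := s)).const_mul ζ)
      exact (Complex.hasDerivAt_sin (ζ * s)).comp s h2
    have := h1.div_const ζ
    rw [mul_div_assoc] at this
    rw [div_self h, mul_one] at this
    exact this

lemma S_integral (ζ : ℂ) (t : ℝ) : S ζ t = ∫ s in (0:ℝ)..t, Complex.cos (ζ * s) := by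
  have := intervalIntegral.integral_eq_sub_of_hasDerivAt
    (f := fun u : ℝ => S ζ u) (f' := fun u : ℝ => Complex.cos (ζ * u)) (a := 0) (b := t)
    (fun s _ => hasDerivAt_S_t ζ s) ?_
  · rw [this]; simp [S]
  · apply Continuous.intervalIntegrable
    exact Complex.continuous_cos.comp (continuous_const.mul Complex.continuous_ofReal)

lemma norm_S_le {ζ : ℂ} {t : ℝ} (ht : 0 ≤ t) : ‖S ζ t‖ ≤ t * Real.exp (‖ζ‖ * t) := by
  rw [S_integral]
  have := intervalIntegral.norm_integral_le_of_norm_le_const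
    (f := fun s => Complex.cos (ζ * s)) (a := 0) (b := t) (C := Real.exp (‖ζ‖ * t)) ?_
  · calc ‖∫ s in (0:ℝ)..t, Complex.cos (ζ * s)‖ ≤ Real.exp (‖ζ‖ * t) * |t - 0| := this
      _ = t * Real.exp (‖ζ‖ * t) := by rw [sub_zero, abs_of_nonneg ht]; ring
  · intro s hs
    rw [uIoc_of_le ht] at hs
    calc ‖Complex.cos (ζ * s)‖ ≤ Real.exp ‖(ζ * s : ℂ)‖ := norm_cos_le_exp _
      _ ≤ Real.exp (‖ζ‖ * t) := by
          apply Real.exp_le_exp.mpr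
          rw [norm_mul, Complex.norm_real, Real.norm_eq_abs, abs_of_pos hs.1]
          exact mul_le_mul_of_nonneg_left hs.2 (norm_nonneg ζ)

lemma S_sub (ζ : ℂ) (a b : ℝ) :
    S ζ (a - b) = S ζ a * Complex.cos (ζ * b) - Complex.cos (ζ * a) * S ζ b := by
  unfold S
  rcases eq_or_ne ζ 0 with h | h
  · simp only [h, if_true, zero_mul, Complex.cos_zero, mul_one, one_mul, Complex.ofReal_sub]
  · rw [if_neg h, if_neg h, if_neg h]
    rw [Complex.ofReal_sub, mul_sub, Complex.sin_sub]
    field_simp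

-- Cauchy estimate
lemma deriv_bound_of_ball (f : ℂ → ℂ) (hf : Differentiable ℂ f) (z : ℂ) {M : ℝ}
    (hM : ∀ w ∈ closedBall z 1, ‖f w‖ ≤ M) : ‖deriv f z‖ ≤ M := by
  have h := Complex.norm_deriv_le_of_forall_mem_sphere_norm_le (c := z) (R := 1) (C := M)
    one_pos (hf.diffContOnCl) (fun w hw => hM w (sphere_subset_closedBall hw))
  simpa using h

-- integrability from ae-measurability + bound on Ioc
lemma II_of_bound {t : ℝ} (ht : 0 ≤ t) {f : ℝ → ℂ}
    (hm : AEStronglyMeasurable f (volume.restrict (Ioc (0:ℝ) t))) {C : ℝ}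
    (hb : ∀ y ∈ Ioc (0:ℝ) t, ‖f y‖ ≤ C) : IntervalIntegrable f volume 0 t := by
  rw [intervalIntegrable_iff, uIoc_of_le ht]
  apply Integrable.mono' (g := fun _ => C) (integrable_const C) hm
  exact (ae_restrict_iff' measurableSet_Ioc).mpr (Filter.Eventually.of_forall hb)

-- measurability of parametric deriv
lemma aesm_deriv {F : ℂ → ℝ → ℂ} {μ : Measure ℝ} (ζ₀ : ℂ)
    (hm : ∀ ζ : ℂ, AEStronglyMeasurable (F ζ) μ)
    (hd : ∀ᵐ y ∂μ, DifferentiableAt ℂ (fun z => F z y) ζ₀) :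
    AEStronglyMeasurable (fun y => deriv (fun z => F z y) ζ₀) μ := by
  have key : ∀ᵐ y ∂μ, Filter.Tendsto
      (fun n : ℕ => ((n:ℂ)+1) * (F (ζ₀ + ((n:ℂ)+1)⁻¹) y - F ζ₀ y)) Filter.atTop
      (nhds (deriv (fun z => F z y) ζ₀)) := by
    filter_upwards [hd] with y hy
    have hder := hy.hasDerivAt
    rw [hasDerivAt_iff_tendsto_slope_zero] at hder
    have hseq : Filter.Tendsto (fun n : ℕ => ((n:ℂ)+1)⁻¹) Filter.atTop
        (nhdsWithin (0:ℂ) {(0:ℂ)}ᶜ) := by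
      apply tendsto_nhdsWithin_of_tendsto_nhds_of_eventually_within
      · rw [tendsto_zero_iff_norm_tendsto_zero]
        have : ∀ n : ℕ, ‖((n:ℂ)+1)⁻¹‖ = 1/((n:ℝ)+1) := by
          intro n
          rw [norm_inv, one_div]
          congr 1
          have : ((n:ℂ)+1) = (((n:ℝ)+1 : ℝ) : ℂ) := by push_cast; ring
          rw [this, Complex.norm_real, Real.norm_eq_abs, abs_of_pos (by positivity)]
        simp only [this]
        exact tendsto_one_div_add_atTop_nhds_zero_nat
      · apply Filter.Eventually.of_forall
        intro n
        simp only [mem_compl_iff, mem_singleton_iff]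
        apply inv_ne_zero
        intro hc
        have : ((n:ℂ)+1).re = 0 := by rw [hc]; simp
        simp at this
        linarith [this]
    have := hder.comp hseq
    simp only [Function.comp_def, smul_eq_mul] at this
    convert this using 2 with n
    rw [inv_inv]
  exact aestronglyMeasurable_of_tendsto_ae Filter.atTop
    (fun n => ((hm _).sub (hm _)).const_mul _) key

lemma diffAt_param_integral {t : ℝ} (ht : 0 ≤ t) {G : ℂ → ℝ → ℂ} {ζ₀ : ℂ} {M : ℝ}
    (hmeas : ∀ ζ : ℂ, AEStronglyMeasurable (G ζ) (volume.restrict (Ioc (0:ℝ) t)))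
    (hdiff : ∀ y ∈ Ioc (0:ℝ) t, Differentiable ℂ (fun z => G z y))
    (hbound : ∀ y ∈ Ioc (0:ℝ) t, ∀ z ∈ closedBall ζ₀ 2, ‖G z y‖ ≤ M) :
    DifferentiableAt ℂ (fun ζ => ∫ y in (0:ℝ)..t, G ζ y) ζ₀ := by
  have hI : uIoc (0:ℝ) t = Ioc (0:ℝ) t := uIoc_of_le ht
  have key := intervalIntegral.hasDerivAt_integral_of_dominated_loc_of_deriv_le
    (μ := volume) (a := 0) (b := t) (F := G)
    (F' := fun ζ y => deriv (fun z => G z y) ζ) (x₀ := ζ₀)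
    (bound := fun _ => M) (s := ball ζ₀ 1) (ball_mem_nhds ζ₀ one_pos)
    (Filter.Eventually.of_forall (fun ζ => hI ▸ hmeas ζ))
    (II_of_bound ht (hmeas ζ₀) (fun y hy => hbound y hy ζ₀ (mem_closedBall_self (by norm_num))))
    ?_ ?_ intervalIntegrable_const ?_
  · exact key.2.differentiableAt
  · rw [hI]
    apply aesm_deriv ζ₀ hmeas
    rw [ae_restrict_iff' measurableSet_Ioc]
    exact Filter.Eventually.of_forall (fun y hy => (hdiff y hy) ζ₀)
  · apply Filter.Eventually.of_forall
    intro y hy z hz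
    rw [hI] at hy
    apply deriv_bound_of_ball _ (hdiff y hy)
    intro w hw
    apply hbound y hy
    rw [mem_closedBall] at *
    rw [mem_ball] at hz
    calc dist w ζ₀ ≤ dist w z + dist z ζ₀ := dist_triangle _ _ _
      _ ≤ 1 + 1 := by apply add_le_add hw hz.le
      _ ≤ 2 := by norm_num
  · apply Filter.Eventually.of_forall
    intro y hy z _
    rw [hI] at hy
    exact ((hdiff y hy) z).hasDerivAt

lemma continuous_S (ζ : ℂ) : Continuous (fun t : ℝ => S ζ t) := by
  rw [continuous_iff_continuousAt]
  intro s
  exact (hasDerivAt_S_t ζ s).continuousAt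

lemma norm_S_le' {ζ : ℂ} {t R x : ℝ} (ht : 0 ≤ t) (htx : t ≤ x) (hζ : ‖ζ‖ ≤ R)
    (hR : 0 ≤ R) : ‖S ζ t‖ ≤ x * Real.exp (R * x) := by
  refine (norm_S_le ht).trans ?_
  have hx : (0:ℝ) ≤ x := le_trans ht htx
  have h1 : ‖ζ‖ * t ≤ R * x := mul_le_mul hζ htx ht hR
  exact mul_le_mul htx (Real.exp_le_exp.mpr h1) (Real.exp_nonneg _) hx

lemma norm_mem_cb {z ζ₀ : ℂ} (hz : z ∈ closedBall ζ₀ 2) : ‖z‖ ≤ ‖ζ₀‖ + 2 := by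
  rw [mem_closedBall, dist_eq_norm] at hz
  have := norm_sub_norm_le z ζ₀
  linarith

lemma norm_cos_mul_le {z : ℂ} {y A t : ℝ} (hy0 : 0 ≤ y) (hyt : y ≤ t) (hz : ‖z‖ ≤ A)
    (hA : 0 ≤ A) : ‖Complex.cos (z * y)‖ ≤ Real.exp (A * t) := by
  refine (norm_cos_le_exp _).trans (Real.exp_le_exp.mpr ?_)
  rw [norm_mul, Complex.norm_real, Real.norm_eq_abs, abs_of_nonneg hy0]
  exact mul_le_mul hz hyt hy0 hA

lemma S_diff {t : ℝ} (ht : 0 ≤ t) : Differentiable ℂ fun ζ => S ζ t := by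
  intro ζ₀
  have heq : (fun ζ : ℂ => S ζ t) = fun ζ => ∫ s in (0:ℝ)..t, Complex.cos (ζ * s) :=
    funext fun ζ => S_integral ζ t
  rw [heq]
  apply diffAt_param_integral ht (M := Real.exp ((‖ζ₀‖ + 2) * t))
  · intro ζ
    exact (Complex.continuous_cos.comp (continuous_const.mul Complex.continuous_ofReal)).aestronglyMeasurable
  · intro y _
    exact Complex.differentiable_cos.comp (differentiable_id.mul_const _)
  · intro y hy z hz
    exact norm_cos_mul_le hy.1.le hy.2 (norm_mem_cb hz) (by positivity)

section Picard

variable (v : ℝ → ℝ)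

noncomputable def picard : ℕ → ℂ → ℝ → ℂ
  | 0 => fun ζ t => S ζ t
  | n+1 => fun ζ t => S ζ t + ∫ y in (0:ℝ)..t, S ζ (t - y) * (v y : ℂ) * picard n ζ y

lemma picard_neg (n : ℕ) (ζ : ℂ) (t : ℝ) : picard v n (-ζ) t = picard v n ζ t := by
  induction n generalizing t with
  | zero => exact S_neg ζ t
  | succ n ih =>
      show S (-ζ) t + _ = S ζ t + _
      rw [S_neg]
      congr 1
      apply intervalIntegral.integral_congr
      intro y _
      simp only [S_neg, ih]

variable {v}

lemma aesm_kernel_Icc (hv_meas : Measurable v) {t : ℝ} {g : ℝ → ℂ} (hg : Continuous g)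
    {f : ℝ → ℂ} (hf : ContinuousOn f (Icc 0 t)) :
    AEStronglyMeasurable (fun y => g y * (v y : ℂ) * f y)
      (volume.restrict (Icc (0:ℝ) t)) :=
  (hg.aestronglyMeasurable.mul
      ((Complex.measurable_ofReal.comp hv_meas).aestronglyMeasurable)).mul
    (hf.aestronglyMeasurable measurableSet_Icc)

lemma integrableOn_Icc_of_bound {x : ℝ} {f : ℝ → ℂ}
    (hm : AEStronglyMeasurable f (volume.restrict (Icc (0:ℝ) x))) {C : ℝ}
    (hb : ∀ y ∈ Icc (0:ℝ) x, ‖f y‖ ≤ C) : IntegrableOn f (Icc (0:ℝ) x) :=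
  Integrable.mono' (integrable_const C) hm
    ((ae_restrict_iff' measurableSet_Icc).mpr (Filter.Eventually.of_forall hb))

lemma integral_split {ζ : ℂ} {t : ℝ} (f : ℝ → ℂ)
    (h₁ : IntervalIntegrable (fun y => Complex.cos (ζ * y) * (v y:ℂ) * f y) volume 0 t)
    (h₂ : IntervalIntegrable (fun y => S ζ y * (v y:ℂ) * f y) volume 0 t) :
    ∫ y in (0:ℝ)..t, S ζ (t - y) * (v y:ℂ) * f y
      = S ζ t * (∫ y in (0:ℝ)..t, Complex.cos (ζ * y) * (v y:ℂ) * f y)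
        - Complex.cos (ζ * t) * (∫ y in (0:ℝ)..t, S ζ y * (v y:ℂ) * f y) := by
  rw [← intervalIntegral.integral_const_mul, ← intervalIntegral.integral_const_mul,
    ← intervalIntegral.integral_sub (h₁.const_mul _) (h₂.const_mul _)]
  apply intervalIntegral.integral_congr
  intro y _
  show S ζ (t - y) * (v y:ℂ) * f y = _
  rw [S_sub]
  ring

lemma picard_props (hv_meas : Measurable v) {Cb : ℝ} (hCb : 0 ≤ Cb)
    (hvb : ∀ y : ℝ, 0 ≤ y → |v y| ≤ Cb) :
    ∀ n : ℕ,
    (∀ (ζ : ℂ) (x : ℝ), 0 ≤ x → ContinuousOn (picard v n ζ) (Icc 0 x)) ∧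
    (∀ R : ℝ, 0 ≤ R → ∀ x : ℝ, 0 ≤ x → ∃ P : ℝ, 0 ≤ P ∧
      ∀ ζ : ℂ, ‖ζ‖ ≤ R → ∀ t ∈ Icc (0:ℝ) x, ‖picard v n ζ t‖ ≤ P) ∧
    (∀ t : ℝ, 0 ≤ t → Differentiable ℂ (fun ζ => picard v n ζ t)) := by
  intro n
  induction n with
  | zero =>
      refine ⟨fun ζ x _ => (continuous_S ζ).continuousOn, ?_, fun t ht => S_diff ht⟩
      intro R hR x hx
      refine ⟨x * Real.exp (R * x), by positivity, ?_⟩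
      intro ζ hζ t htmem
      exact norm_S_le' htmem.1 htmem.2 hζ hR
  | succ n ih =>
      obtain ⟨ihc, ihb, ihd⟩ := ih
      -- kernel bound helper
      have hvC : ∀ y : ℝ, 0 < y → ‖(v y : ℂ)‖ ≤ Cb := by
        intro y hy
        rw [Complex.norm_real, Real.norm_eq_abs]
        exact hvb y hy.le
      -- interval integrability of both kernels for any ζ, t ≥ 0
      have hII : ∀ (ζ : ℂ) (t : ℝ), 0 ≤ t →
          IntervalIntegrable (fun y => Complex.cos (ζ * y) * (v y:ℂ) * picard v n ζ y)
            volume 0 t ∧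
          IntervalIntegrable (fun y => S ζ y * (v y:ℂ) * picard v n ζ y) volume 0 t := by
        intro ζ t ht
        obtain ⟨P, hP0, hP⟩ := ihb ‖ζ‖ (norm_nonneg ζ) t ht
        constructor
        · apply II_of_bound ht
            ((aesm_kernel_Icc hv_meas (Complex.continuous_cos.comp (continuous_const.mul Complex.continuous_ofReal))
              (ihc ζ t ht)).mono_measure
                (Measure.restrict_mono Ioc_subset_Icc_self le_rfl))
            (C := Real.exp (‖ζ‖ * t) * Cb * P)
          intro y hy
          rw [norm_mul, norm_mul]
          have h1 : ‖Complex.cos (ζ * y)‖ ≤ Real.exp (‖ζ‖ * t) :=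
            norm_cos_mul_le hy.1.le hy.2 le_rfl (norm_nonneg ζ)
          have h2 := hvC y hy.1
          have h3 := hP ζ le_rfl y ⟨hy.1.le, hy.2⟩
          have := mul_le_mul (mul_le_mul h1 h2 (norm_nonneg _) (Real.exp_nonneg _)) h3
            (norm_nonneg _) (by positivity)
          exact this
        · apply II_of_bound ht
            ((aesm_kernel_Icc hv_meas (continuous_S ζ) (ihc ζ t ht)).mono_measure
              (Measure.restrict_mono Ioc_subset_Icc_self le_rfl))
            (C := t * Real.exp (‖ζ‖ * t) * Cb * P)
          intro y hy
          rw [norm_mul, norm_mul]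
          have h1 : ‖S ζ y‖ ≤ t * Real.exp (‖ζ‖ * t) :=
            norm_S_le' hy.1.le hy.2 le_rfl (norm_nonneg ζ)
          have h2 := hvC y hy.1
          have h3 := hP ζ le_rfl y ⟨hy.1.le, hy.2⟩
          exact mul_le_mul (mul_le_mul h1 h2 (norm_nonneg _) (by positivity)) h3
            (norm_nonneg _) (by positivity)
      -- split identity for picard (n+1)
      have hsplit : ∀ (ζ : ℂ) (t : ℝ), 0 ≤ t →
          picard v (n+1) ζ t = S ζ t +
            (S ζ t * (∫ y in (0:ℝ)..t, Complex.cos (ζ * y) * (v y:ℂ) * picard v n ζ y)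
              - Complex.cos (ζ * t) *
                  (∫ y in (0:ℝ)..t, S ζ y * (v y:ℂ) * picard v n ζ y)) := by
        intro ζ t ht
        show S ζ t + _ = _
        congr 1
        exact integral_split _ (hII ζ t ht).1 (hII ζ t ht).2
      refine ⟨?_, ?_, ?_⟩
      · -- continuity
        intro ζ x hx
        obtain ⟨P, hP0, hP⟩ := ihb ‖ζ‖ (norm_nonneg ζ) x hx
        have hA : ContinuousOn
            (fun t => ∫ y in (0:ℝ)..t, Complex.cos (ζ * y) * (v y:ℂ) * picard v n ζ y)
            (Icc 0 x) := by
          have hio : IntegrableOn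
              (fun y : ℝ => Complex.cos (ζ * y) * (v y:ℂ) * picard v n ζ y) (uIcc 0 x) := by
            rw [uIcc_of_le hx]
            apply integrableOn_Icc_of_bound
              (aesm_kernel_Icc hv_meas (Complex.continuous_cos.comp (continuous_const.mul Complex.continuous_ofReal))
                (ihc ζ x hx)) (C := Real.exp (‖ζ‖ * x) * Cb * P)
            intro y hy
            rw [norm_mul, norm_mul]
            have h1 : ‖Complex.cos (ζ * y)‖ ≤ Real.exp (‖ζ‖ * x) :=
              norm_cos_mul_le hy.1 hy.2 le_rfl (norm_nonneg ζ)
            have h2 : ‖(v y : ℂ)‖ ≤ Cb := by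
              rw [Complex.norm_real, Real.norm_eq_abs]; exact hvb y hy.1
            exact mul_le_mul (mul_le_mul h1 h2 (norm_nonneg _) (Real.exp_nonneg _))
              (hP ζ le_rfl y hy) (norm_nonneg _) (by positivity)
          have := intervalIntegral.continuousOn_primitive_interval hio
          rwa [uIcc_of_le hx] at this
        have hB : ContinuousOn
            (fun t => ∫ y in (0:ℝ)..t, S ζ y * (v y:ℂ) * picard v n ζ y) (Icc 0 x) := by
          have hio : IntegrableOn
              (fun y : ℝ => S ζ y * (v y:ℂ) * picard v n ζ y) (uIcc 0 x) := by
            rw [uIcc_of_le hx]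
            apply integrableOn_Icc_of_bound
              (aesm_kernel_Icc hv_meas (continuous_S ζ) (ihc ζ x hx))
              (C := x * Real.exp (‖ζ‖ * x) * Cb * P)
            intro y hy
            rw [norm_mul, norm_mul]
            have h1 : ‖S ζ y‖ ≤ x * Real.exp (‖ζ‖ * x) :=
              norm_S_le' hy.1 hy.2 le_rfl (norm_nonneg ζ)
            have h2 : ‖(v y : ℂ)‖ ≤ Cb := by
              rw [Complex.norm_real, Real.norm_eq_abs]; exact hvb y hy.1
            exact mul_le_mul (mul_le_mul h1 h2 (norm_nonneg _) (by positivity))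
              (hP ζ le_rfl y hy) (norm_nonneg _) (by positivity)
          have := intervalIntegral.continuousOn_primitive_interval hio
          rwa [uIcc_of_le hx] at this
        apply ContinuousOn.congr
          (f := fun t => S ζ t +
            (S ζ t * (∫ y in (0:ℝ)..t, Complex.cos (ζ * y) * (v y:ℂ) * picard v n ζ y)
              - Complex.cos (ζ * t) *
                  (∫ y in (0:ℝ)..t, S ζ y * (v y:ℂ) * picard v n ζ y)))
        · exact (continuous_S ζ).continuousOn.add
            (((continuous_S ζ).continuousOn.mul hA).sub
              (((Complex.continuous_cos.comp (continuous_const.mul Complex.continuous_ofReal)).continuousOn).mul hB))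
        · intro t htmem
          exact hsplit ζ t htmem.1
      · -- bound
        intro R hR x hx
        obtain ⟨P, hP0, hP⟩ := ihb R hR x hx
        set E := x * Real.exp (R * x) with hE
        have hE0 : 0 ≤ E := by positivity
        refine ⟨E + E * Cb * P * x, by positivity, ?_⟩
        intro ζ hζ t htmem
        obtain ⟨ht, htx⟩ := htmem
        have hb : ‖∫ y in (0:ℝ)..t, S ζ (t - y) * (v y:ℂ) * picard v n ζ y‖
            ≤ E * Cb * P * x := by
          have := intervalIntegral.norm_integral_le_of_norm_le_const
            (f := fun y => S ζ (t - y) * (v y:ℂ) * picard v n ζ y) (a := 0) (b := t)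
            (C := E * Cb * P) ?_
          · refine this.trans ?_
            rw [sub_zero, abs_of_nonneg ht]
            exact mul_le_mul_of_nonneg_left htx (by positivity)
          · intro y hy
            rw [uIoc_of_le ht] at hy
            rw [norm_mul, norm_mul]
            have h1 : ‖S ζ (t - y)‖ ≤ E := by
              rw [hE]
              exact norm_S_le' (by linarith [hy.2]) (by linarith [hy.1, hy.2]) hζ hR
            have h2 : ‖(v y : ℂ)‖ ≤ Cb := by
              rw [Complex.norm_real, Real.norm_eq_abs]; exact hvb y hy.1.le
            have h3 : ‖picard v n ζ y‖ ≤ P := hP ζ hζ y ⟨hy.1.le, hy.2.trans htx⟩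
            exact mul_le_mul (mul_le_mul h1 h2 (norm_nonneg _) hE0) h3
              (norm_nonneg _) (by positivity)
        calc ‖picard v (n+1) ζ t‖
            ≤ ‖S ζ t‖ + ‖∫ y in (0:ℝ)..t, S ζ (t - y) * (v y:ℂ) * picard v n ζ y‖ :=
              norm_add_le _ _
          _ ≤ E + E * Cb * P * x := add_le_add (norm_S_le' ht htx hζ hR) hb
      · -- differentiability
        intro t ht ζ₀
        obtain ⟨P, hP0, hP⟩ := ihb (‖ζ₀‖ + 2) (by positivity) t ht
        have heq : (fun ζ => picard v (n+1) ζ t) = fun ζ => S ζ t +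
            (S ζ t * (∫ y in (0:ℝ)..t, Complex.cos (ζ * y) * (v y:ℂ) * picard v n ζ y)
              - Complex.cos (ζ * t) *
                  (∫ y in (0:ℝ)..t, S ζ y * (v y:ℂ) * picard v n ζ y)) :=
          funext fun ζ => hsplit ζ t ht
        rw [heq]
        have hmeas₁ : ∀ ζ : ℂ, AEStronglyMeasurable
            (fun y : ℝ => Complex.cos (ζ * y) * (v y:ℂ) * picard v n ζ y)
            (volume.restrict (Ioc (0:ℝ) t)) := fun ζ =>
          (aesm_kernel_Icc hv_meas (Complex.continuous_cos.comp (continuous_const.mul Complex.continuous_ofReal))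
            (ihc ζ t ht)).mono_measure (Measure.restrict_mono Ioc_subset_Icc_self le_rfl)
        have hmeas₂ : ∀ ζ : ℂ, AEStronglyMeasurable
            (fun y => S ζ y * (v y:ℂ) * picard v n ζ y)
            (volume.restrict (Ioc (0:ℝ) t)) := fun ζ =>
          (aesm_kernel_Icc hv_meas (continuous_S ζ) (ihc ζ t ht)).mono_measure
            (Measure.restrict_mono Ioc_subset_Icc_self le_rfl)
        have hA : DifferentiableAt ℂ
            (fun ζ => ∫ y in (0:ℝ)..t, Complex.cos (ζ * y) * (v y:ℂ) * picard v n ζ y) ζ₀ := by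
          apply diffAt_param_integral ht
            (G := fun ζ y => Complex.cos (ζ * y) * (v y:ℂ) * picard v n ζ y)
            (M := Real.exp ((‖ζ₀‖ + 2) * t) * Cb * P) (fun ζ => hmeas₁ ζ)
          · intro y hy
            exact ((Complex.differentiable_cos.comp
              (differentiable_id.mul_const _)).mul (differentiable_const _)).mul
              (ihd y hy.1.le)
          · intro y hy z hz
            rw [norm_mul, norm_mul]
            have h1 : ‖Complex.cos (z * y)‖ ≤ Real.exp ((‖ζ₀‖ + 2) * t) :=
              norm_cos_mul_le hy.1.le hy.2 (norm_mem_cb hz) (by positivity)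
            have h2 : ‖(v y : ℂ)‖ ≤ Cb := hvC y hy.1
            have h3 : ‖picard v n z y‖ ≤ P :=
              hP z (norm_mem_cb hz) y ⟨hy.1.le, hy.2⟩
            exact mul_le_mul (mul_le_mul h1 h2 (norm_nonneg _) (Real.exp_nonneg _)) h3
              (norm_nonneg _) (by positivity)
        have hB : DifferentiableAt ℂ
            (fun ζ => ∫ y in (0:ℝ)..t, S ζ y * (v y:ℂ) * picard v n ζ y) ζ₀ := by
          apply diffAt_param_integral ht
            (G := fun ζ y => S ζ y * (v y:ℂ) * picard v n ζ y)
            (M := t * Real.exp ((‖ζ₀‖ + 2) * t) * Cb * P) (fun ζ => hmeas₂ ζ)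
          · intro y hy
            exact ((S_diff hy.1.le).mul (differentiable_const _)).mul (ihd y hy.1.le)
          · intro y hy z hz
            rw [norm_mul, norm_mul]
            have h1 : ‖S z y‖ ≤ t * Real.exp ((‖ζ₀‖ + 2) * t) :=
              norm_S_le' hy.1.le hy.2 (norm_mem_cb hz) (by positivity)
            have h2 : ‖(v y : ℂ)‖ ≤ Cb := hvC y hy.1
            have h3 : ‖picard v n z y‖ ≤ P :=
              hP z (norm_mem_cb hz) y ⟨hy.1.le, hy.2⟩
            exact mul_le_mul (mul_le_mul h1 h2 (norm_nonneg _) (by positivity)) h3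
              (norm_nonneg _) (by positivity)
        have hS : DifferentiableAt ℂ (fun ζ => S ζ t) ζ₀ := S_diff ht ζ₀
        have hcos : DifferentiableAt ℂ (fun ζ : ℂ => Complex.cos (ζ * t)) ζ₀ :=
          (Complex.differentiable_cos.comp (differentiable_id.mul_const _)) ζ₀
        exact hS.add ((hS.mul hA).sub (hcos.mul hB))

end Picard

lemma integral_pow_bound {h : ℝ → ℂ} {t c : ℝ} {n : ℕ} (ht : 0 ≤ t) (hc : 0 ≤ c)
    (hii : IntervalIntegrable h volume 0 t)
    (hb : ∀ y ∈ Icc (0:ℝ) t, ‖h y‖ ≤ c * y ^ n) :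
    ‖∫ y in (0:ℝ)..t, h y‖ ≤ c * t ^ (n + 1) / (n + 1) := by
  have hpoly : IntervalIntegrable (fun y : ℝ => c * y ^ n) volume 0 t :=
    (continuous_const.mul (continuous_pow n)).intervalIntegrable 0 t
  calc ‖∫ y in (0:ℝ)..t, h y‖ ≤ ∫ y in (0:ℝ)..t, ‖h y‖ :=
        intervalIntegral.norm_integral_le_integral_norm ht
    _ ≤ ∫ y in (0:ℝ)..t, c * y ^ n :=
        intervalIntegral.integral_mono_on ht hii.norm hpoly hb
    _ = c * t ^ (n + 1) / (n + 1) := by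
        rw [intervalIntegral.integral_const_mul, integral_pow]
        rw [zero_pow (Nat.succ_ne_zero n)]
        ring

lemma gronwall_sum {E B D₀ x : ℝ} (hE : 0 ≤ E) (hB : 0 ≤ B) (hD₀ : 0 ≤ D₀) (hx : 0 ≤ x)
    {u : ℝ → ℝ} (hu_cont : ContinuousOn u (Icc 0 x))
    (hu_nonneg : ∀ t ∈ Icc (0:ℝ) x, 0 ≤ u t)
    (hub : ∀ t ∈ Icc (0:ℝ) x, u t ≤ D₀)
    (hrec : ∀ t ∈ Icc (0:ℝ) x, u t ≤ E + B * ∫ y in (0:ℝ)..t, u y) :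
    ∀ t ∈ Icc (0:ℝ) x, u t ≤ E * Real.exp (B * x) := by
  have fact_pos : ∀ k : ℕ, (0:ℝ) < k.factorial := fun k => by
    exact_mod_cast Nat.factorial_pos k
  have key : ∀ n : ℕ, ∀ t ∈ Icc (0:ℝ) x,
      u t ≤ E * (∑ k ∈ Finset.range (n+1), B ^ k * t ^ k / k.factorial)
        + D₀ * B ^ n * t ^ n / n.factorial := by
    intro n
    induction n with
    | zero =>
        intro t htm
        have := hub t htm
        simp only [zero_add, Finset.range_one, Finset.sum_singleton, pow_zero,
          Nat.factorial_zero, Nat.cast_one, mul_one, one_mul, div_one]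
        linarith
    | succ n ihn =>
        intro t htm
        obtain ⟨ht0, htx⟩ := htm
        have hu_int : IntervalIntegrable u volume 0 t :=
          (hu_cont.mono (by rw [uIcc_of_le ht0]; exact Icc_subset_Icc le_rfl htx)).intervalIntegrable
        set g : ℝ → ℝ := fun y =>
          E * (∑ k ∈ Finset.range (n+1), B ^ k * y ^ k / k.factorial)
            + D₀ * B ^ n * y ^ n / n.factorial with hg
        have hg_cont : Continuous g := by
          apply Continuous.add
          · exact continuous_const.mul (continuous_finset_sum _ fun k _ =>
              (continuous_const.mul (continuous_pow k)).div_const _)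
          · exact (continuous_const.mul (continuous_pow n)).div_const _
        have hmono : ∫ y in (0:ℝ)..t, u y ≤ ∫ y in (0:ℝ)..t, g y := by
          apply intervalIntegral.integral_mono_on ht0 hu_int
            (hg_cont.intervalIntegrable 0 t)
          intro y hy
          exact ihn y ⟨hy.1, hy.2.trans htx⟩
        have hgint : ∫ y in (0:ℝ)..t, g y
            = E * (∑ k ∈ Finset.range (n+1), B ^ k * t ^ (k+1) / ((k+1) * k.factorial))
              + D₀ * B ^ n * t ^ (n+1) / ((n+1) * n.factorial) := by
          rw [hg]
          rw [intervalIntegral.integral_add, intervalIntegral.integral_const_mul,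
            intervalIntegral.integral_finset_sum]
          · have : ∀ k ∈ Finset.range (n+1),
                ∫ y in (0:ℝ)..t, B ^ k * y ^ k / (k.factorial : ℝ)
                  = B ^ k * t ^ (k+1) / ((k+1) * k.factorial) := by
              intro k _
              have : (fun y : ℝ => B ^ k * y ^ k / (k.factorial : ℝ))
                  = fun y : ℝ => (B ^ k / k.factorial) * y ^ k := by
                funext y; ring
              rw [this, intervalIntegral.integral_const_mul, integral_pow,
                zero_pow (Nat.succ_ne_zero k)]
              push_cast
              rw [sub_zero, div_mul_div_comm, mul_comm ((k.factorial : ℝ))]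
            rw [Finset.sum_congr rfl this]
            have : (fun y : ℝ => D₀ * B ^ n * y ^ n / (n.factorial : ℝ))
                = fun y : ℝ => (D₀ * B ^ n / n.factorial) * y ^ n := by
              funext y; ring
            rw [this, intervalIntegral.integral_const_mul, integral_pow,
              zero_pow (Nat.succ_ne_zero n)]
            push_cast
            rw [sub_zero, div_mul_div_comm, mul_comm ((n.factorial : ℝ))]
          · intro k _
            exact ((continuous_const.mul (continuous_pow k)).div_const _).intervalIntegrable 0 t
          · exact (continuous_const.mul (continuous_finset_sum _ fun k _ =>
              (continuous_const.mul (continuous_pow k)).div_const _)).intervalIntegrable 0 t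
          · exact ((continuous_const.mul (continuous_pow n)).div_const _).intervalIntegrable 0 t
        calc u t ≤ E + B * ∫ y in (0:ℝ)..t, u y := hrec t ⟨ht0, htx⟩
          _ ≤ E + B * ∫ y in (0:ℝ)..t, g y := by
              have := mul_le_mul_of_nonneg_left hmono hB
              linarith
          _ = E + (E * (∑ k ∈ Finset.range (n+1),
                B ^ (k+1) * t ^ (k+1) / (k+1).factorial)
              + D₀ * B ^ (n+1) * t ^ (n+1) / (n+1).factorial) := by
              rw [hgint]
              rw [Finset.mul_sum, Finset.mul_sum]
              have hsum : ∀ k ∈ Finset.range (n+1),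
                  B * (E * (B ^ k * t ^ (k+1) / ((k+1) * k.factorial)))
                    = E * (B ^ (k+1) * t ^ (k+1) / (k+1).factorial) := by
                intro k _
                rw [Nat.factorial_succ]
                push_cast
                have := fact_pos k
                field_simp
                ring
              rw [mul_add, Finset.mul_sum]
              rw [Finset.sum_congr rfl hsum]
              rw [Nat.factorial_succ]
              push_cast
              have := fact_pos n
              field_simp
              ring
          _ = E * (∑ k ∈ Finset.range (n+2), B ^ k * t ^ k / k.factorial)
              + D₀ * B ^ (n+1) * t ^ (n+1) / (n+1).factorial := by
              rw [Finset.sum_range_succ' (fun k => B ^ k * t ^ k / (k.factorial : ℝ)) (n+1)]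
              simp only [pow_zero, Nat.factorial_zero, Nat.cast_one]
              rw [mul_add]
              ring
  intro t htm
  obtain ⟨ht0, htx⟩ := htm
  have hbound : ∀ n : ℕ,
      u t ≤ E * Real.exp (B * x) + D₀ * ((B * x) ^ n / n.factorial) := by
    intro n
    refine (key n t ⟨ht0, htx⟩).trans ?_
    have h1 : ∑ k ∈ Finset.range (n+1), B ^ k * t ^ k / (k.factorial : ℝ)
        ≤ Real.exp (B * x) := by
      calc ∑ k ∈ Finset.range (n+1), B ^ k * t ^ k / (k.factorial : ℝ)
          ≤ ∑ k ∈ Finset.range (n+1), (B * x) ^ k / (k.factorial : ℝ) := by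
            apply Finset.sum_le_sum
            intro k _
            rw [mul_pow]
            gcongr
        _ ≤ Real.exp (B * x) := Real.sum_le_exp_of_nonneg (by positivity) _
    have h2 : D₀ * B ^ n * t ^ n / n.factorial ≤ D₀ * ((B * x) ^ n / n.factorial) := by
      have he : D₀ * B ^ n * t ^ n / (n.factorial : ℝ)
          = D₀ * (B ^ n * t ^ n / (n.factorial : ℝ)) := by ring
      rw [he, mul_pow]
      gcongr
    have h3 : E * (∑ k ∈ Finset.range (n+1), B ^ k * t ^ k / (k.factorial : ℝ))
        ≤ E * Real.exp (B * x) := mul_le_mul_of_nonneg_left h1 hE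
    linarith
  have htend : Filter.Tendsto
      (fun n : ℕ => E * Real.exp (B * x) + D₀ * ((B * x) ^ n / n.factorial))
      Filter.atTop (nhds (E * Real.exp (B * x))) := by
    have h0 : Filter.Tendsto (fun n : ℕ => (B * x) ^ n / (n.factorial : ℝ))
        Filter.atTop (nhds 0) := FloorSemiring.tendsto_pow_div_factorial_atTop (B * x)
    have := (h0.const_mul D₀).const_add (E * Real.exp (B * x))
    simpa using this
  exact ge_of_tendsto' htend hbound

/-- For each fixed `x ≥ 0`, the regular solution `φ(x,·)` is an entire function
of `ζ`, and `φ(x,ζ) = φ(x,−ζ)`. -/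
theorem regular_solution_entire_and_even
    (v : ℝ → ℝ) (hv_meas : Measurable v) (C₀ ρ : ℝ)
    (hC₀ : 0 < C₀) (hρ : 2 < ρ)
    (hv : ∀ x : ℝ, 0 ≤ x → |v x| ≤ C₀ * (1 + x) ^ (-ρ))
    (φ : ℂ → ℝ → ℂ)
    (hφcont : ∀ ζ : ℂ, ContinuousOn (φ ζ) (Set.Ici 0))
    (hφeq : ∀ ζ : ℂ, ∀ x : ℝ, 0 ≤ x →
      φ ζ x = S ζ x + ∫ y in (0:ℝ)..x, S ζ (x - y) * (v y : ℂ) * φ ζ y) :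
    ∀ x : ℝ, 0 ≤ x →
      Differentiable ℂ (fun ζ : ℂ => φ ζ x) ∧ ∀ ζ : ℂ, φ ζ x = φ (-ζ) x := by
  have hCb : (0:ℝ) ≤ C₀ := hC₀.le
  have hvb : ∀ y : ℝ, 0 ≤ y → |v y| ≤ C₀ := by
    intro y hy
    refine (hv y hy).trans ?_
    have h1 : (1 + y) ^ (-ρ) ≤ 1 :=
      Real.rpow_le_one_of_one_le_of_nonpos (by linarith) (by linarith)
    calc C₀ * (1 + y) ^ (-ρ) ≤ C₀ * 1 := by
          apply mul_le_mul_of_nonneg_left h1 hCb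
      _ = C₀ := mul_one _
  have hprops := picard_props hv_meas hCb hvb
  have hvC : ∀ y : ℝ, 0 ≤ y → ‖(v y : ℂ)‖ ≤ C₀ := by
    intro y hy
    rw [Complex.norm_real, Real.norm_eq_abs]
    exact hvb y hy
  intro x hx
  -- interval integrability of the kernels
  have hφII : ∀ (ζ : ℂ) (t : ℝ), 0 ≤ t →
      IntervalIntegrable (fun y => S ζ (t - y) * (v y : ℂ) * φ ζ y) volume 0 t := by
    intro ζ t ht
    obtain ⟨Cφ, hCφ⟩ := isCompact_Icc.exists_bound_of_continuousOn
      ((hφcont ζ).mono (Icc_subset_Ici_self : Icc (0:ℝ) t ⊆ Ici 0))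
    apply II_of_bound ht
      ((aesm_kernel_Icc hv_meas
          ((continuous_S ζ).comp (continuous_const.sub continuous_id))
          ((hφcont ζ).mono Icc_subset_Ici_self)).mono_measure
        (Measure.restrict_mono Ioc_subset_Icc_self le_rfl))
      (C := t * Real.exp (‖ζ‖ * t) * C₀ * max Cφ 0)
    intro y hy
    rw [norm_mul, norm_mul]
    have h1 : ‖S ζ (t - y)‖ ≤ t * Real.exp (‖ζ‖ * t) :=
      norm_S_le' (by linarith [hy.2]) (by linarith [hy.1]) le_rfl (norm_nonneg ζ)
    have h3 : ‖φ ζ y‖ ≤ max Cφ 0 := (hCφ y ⟨hy.1.le, hy.2⟩).trans (le_max_left _ _)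
    exact mul_le_mul (mul_le_mul h1 (hvC y hy.1.le) (norm_nonneg _) (by positivity)) h3
      (norm_nonneg _) (by positivity)
  have hpII : ∀ (n : ℕ) (ζ : ℂ) (t : ℝ), 0 ≤ t →
      IntervalIntegrable (fun y => S ζ (t - y) * (v y : ℂ) * picard v n ζ y) volume 0 t := by
    intro n ζ t ht
    obtain ⟨P, hP0, hP⟩ := (hprops n).2.1 ‖ζ‖ (norm_nonneg ζ) t ht
    apply II_of_bound ht
      ((aesm_kernel_Icc hv_meas
          ((continuous_S ζ).comp (continuous_const.sub continuous_id))
          ((hprops n).1 ζ t ht)).mono_measure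
        (Measure.restrict_mono Ioc_subset_Icc_self le_rfl))
      (C := t * Real.exp (‖ζ‖ * t) * C₀ * P)
    intro y hy
    rw [norm_mul, norm_mul]
    have h1 : ‖S ζ (t - y)‖ ≤ t * Real.exp (‖ζ‖ * t) :=
      norm_S_le' (by linarith [hy.2]) (by linarith [hy.1]) le_rfl (norm_nonneg ζ)
    have h3 : ‖picard v n ζ y‖ ≤ P := hP ζ le_rfl y ⟨hy.1.le, hy.2⟩
    exact mul_le_mul (mul_le_mul h1 (hvC y hy.1.le) (norm_nonneg _) (by positivity)) h3
      (norm_nonneg _) (by positivity)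
  -- the key convergence estimate
  have key : ∀ R : ℝ, 0 ≤ R → ∃ D : ℝ, 0 ≤ D ∧ ∀ (n : ℕ) (ζ : ℂ), ‖ζ‖ ≤ R →
      ∀ t ∈ Icc (0:ℝ) x, ‖φ ζ t - picard v n ζ t‖
        ≤ D * ((x * Real.exp (R * x) * C₀) ^ n * t ^ n / (n.factorial : ℝ)) := by
    intro R hR
    set E := x * Real.exp (R * x) with hEdef
    set B := E * C₀ with hBdef
    have hE0 : 0 ≤ E := by positivity
    have hB0 : 0 ≤ B := by rw [hBdef]; positivity
    -- uniform bound on φ over the ball of radius R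
    have hφb : ∀ ζ : ℂ, ‖ζ‖ ≤ R → ∀ t ∈ Icc (0:ℝ) x, ‖φ ζ t‖ ≤ E * Real.exp (B * x) := by
      intro ζ hζ
      obtain ⟨Cφ, hCφ⟩ := isCompact_Icc.exists_bound_of_continuousOn
        ((hφcont ζ).mono (Icc_subset_Ici_self : Icc (0:ℝ) x ⊆ Ici 0))
      apply gronwall_sum hE0 hB0 (le_max_right Cφ 0) hx
        ((hφcont ζ).mono Icc_subset_Ici_self).norm
        (fun t _ => norm_nonneg _)
        (fun t htm => (hCφ t htm).trans (le_max_left _ _))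
      intro t htm
      obtain ⟨ht0, htx⟩ := htm
      have hnorm : ‖∫ y in (0:ℝ)..t, S ζ (t - y) * (v y : ℂ) * φ ζ y‖
          ≤ B * ∫ y in (0:ℝ)..t, ‖φ ζ y‖ := by
        have hφn_int : IntervalIntegrable (fun y => B * ‖φ ζ y‖) volume 0 t := by
          apply ContinuousOn.intervalIntegrable
          apply ContinuousOn.mul continuousOn_const
          apply ContinuousOn.norm
          apply (hφcont ζ).mono
          rw [uIcc_of_le ht0]
          exact fun y hy => hy.1
        calc ‖∫ y in (0:ℝ)..t, S ζ (t - y) * (v y : ℂ) * φ ζ y‖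
            ≤ ∫ y in (0:ℝ)..t, ‖S ζ (t - y) * (v y : ℂ) * φ ζ y‖ :=
              intervalIntegral.norm_integral_le_integral_norm ht0
          _ ≤ ∫ y in (0:ℝ)..t, B * ‖φ ζ y‖ := by
              apply intervalIntegral.integral_mono_on ht0 (hφII ζ t ht0).norm hφn_int
              intro y hym
              rw [norm_mul, norm_mul]
              have h1 : ‖S ζ (t - y)‖ ≤ E :=
                norm_S_le' (by linarith [hym.2]) (by linarith [hym.1]) hζ hR
              have h2 : ‖(v y : ℂ)‖ ≤ C₀ := hvC y hym.1
              calc ‖S ζ (t - y)‖ * ‖(v y : ℂ)‖ * ‖φ ζ y‖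
                  ≤ E * C₀ * ‖φ ζ y‖ := by
                    apply mul_le_mul_of_nonneg_right _ (norm_nonneg _)
                    exact mul_le_mul h1 h2 (norm_nonneg _) hE0
                _ = B * ‖φ ζ y‖ := by rw [hBdef]
          _ = B * ∫ y in (0:ℝ)..t, ‖φ ζ y‖ := by
              rw [← intervalIntegral.integral_const_mul]
      calc ‖φ ζ t‖ = ‖S ζ t + ∫ y in (0:ℝ)..t, S ζ (t - y) * (v y : ℂ) * φ ζ y‖ := by
            rw [← hφeq ζ t ht0]
        _ ≤ ‖S ζ t‖ + ‖∫ y in (0:ℝ)..t, S ζ (t - y) * (v y : ℂ) * φ ζ y‖ := norm_add_le _ _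
        _ ≤ E + B * ∫ y in (0:ℝ)..t, ‖φ ζ y‖ :=
            add_le_add (norm_S_le' ht0 htx hζ hR) hnorm
    refine ⟨E * Real.exp (B * x) + E, by positivity, ?_⟩
    intro n
    induction n with
    | zero =>
        intro ζ hζ t htm
        have h1 : ‖φ ζ t - picard v 0 ζ t‖ ≤ ‖φ ζ t‖ + ‖S ζ t‖ := by
          show ‖φ ζ t - S ζ t‖ ≤ _
          exact norm_sub_le _ _
        refine h1.trans ?_
        have h2 := hφb ζ hζ t htm
        have h3 := norm_S_le' htm.1 htm.2 hζ hR
        simp only [pow_zero, Nat.factorial_zero, Nat.cast_one]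
        have h4 : (E * Real.exp (B * x) + E) * (1 * 1 / 1) = E * Real.exp (B * x) + E := by
          ring
        rw [h4]
        linarith
    | succ n ihn =>
        intro ζ hζ t htm
        obtain ⟨ht0, htx⟩ := htm
        have hdiff_eq : φ ζ t - picard v (n+1) ζ t
            = ∫ y in (0:ℝ)..t, (S ζ (t - y) * (v y:ℂ) * φ ζ y
                - S ζ (t - y) * (v y:ℂ) * picard v n ζ y) := by
          rw [hφeq ζ t ht0]
          show _ + _ - (S ζ t + _) = _
          rw [intervalIntegral.integral_sub (hφII ζ t ht0) (hpII n ζ t ht0)]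
          ring
        rw [hdiff_eq]
        set D := E * Real.exp (B * x) + E with hDdef
        have hD0 : 0 ≤ D := by rw [hDdef]; positivity
        have hfact : (0:ℝ) < n.factorial := by exact_mod_cast Nat.factorial_pos n
        have hstep := integral_pow_bound (n := n) ht0
          (c := B * (D * B ^ n / n.factorial)) (by positivity)
          ((hφII ζ t ht0).sub (hpII n ζ t ht0)) ?_
        · refine hstep.trans ?_
          rw [Nat.factorial_succ]
          push_cast
          apply le_of_eq
          field_simp
          ring
        · intro y hym
          have hfac : S ζ (t - y) * (v y:ℂ) * φ ζ y
              - S ζ (t - y) * (v y:ℂ) * picard v n ζ y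
              = S ζ (t - y) * (v y:ℂ) * (φ ζ y - picard v n ζ y) := by ring
          rw [hfac, norm_mul, norm_mul]
          have h1 : ‖S ζ (t - y)‖ ≤ E :=
            norm_S_le' (by linarith [hym.2]) (by linarith [hym.1]) hζ hR
          have h2 : ‖(v y : ℂ)‖ ≤ C₀ := hvC y hym.1
          have h3 : ‖φ ζ y - picard v n ζ y‖ ≤ D * (B ^ n * y ^ n / n.factorial) :=
            ihn ζ hζ y ⟨hym.1, hym.2.trans htx⟩
          calc ‖S ζ (t - y)‖ * ‖(v y : ℂ)‖ * ‖φ ζ y - picard v n ζ y‖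
              ≤ E * C₀ * (D * (B ^ n * y ^ n / n.factorial)) := by
                apply mul_le_mul (mul_le_mul h1 h2 (norm_nonneg _) hE0) h3 (norm_nonneg _)
                  (by positivity)
            _ = B * (D * B ^ n / n.factorial) * y ^ n := by
                rw [hBdef]; ring
  -- pointwise convergence of the iterates to φ
  have hBx : ∀ R : ℝ, Filter.Tendsto
      (fun n : ℕ => (x * Real.exp (R * x) * C₀) ^ n * x ^ n / (n.factorial : ℝ))
      Filter.atTop (nhds 0) := by
    intro R
    have h0 := FloorSemiring.tendsto_pow_div_factorial_atTop
      (K := ℝ) (x * Real.exp (R * x) * C₀ * x)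
    have heq : (fun n : ℕ => (x * Real.exp (R * x) * C₀ * x) ^ n / (n.factorial : ℝ))
        = fun n : ℕ => (x * Real.exp (R * x) * C₀) ^ n * x ^ n / (n.factorial : ℝ) := by
      funext n
      rw [mul_pow]
    rwa [heq] at h0
  have hconv : ∀ ζ : ℂ, Filter.Tendsto (fun n => picard v n ζ x) Filter.atTop
      (nhds (φ ζ x)) := by
    intro ζ
    obtain ⟨D, hD0, hkey⟩ := key ‖ζ‖ (norm_nonneg ζ)
    rw [tendsto_iff_dist_tendsto_zero]
    have hb : ∀ n : ℕ, dist (picard v n ζ x) (φ ζ x)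
        ≤ D * ((x * Real.exp (‖ζ‖ * x) * C₀) ^ n * x ^ n / (n.factorial : ℝ)) := by
      intro n
      rw [dist_eq_norm, ← norm_neg, neg_sub]
      exact hkey n ζ le_rfl x ⟨hx, le_rfl⟩
    have hg : Filter.Tendsto (fun n : ℕ =>
        D * ((x * Real.exp (‖ζ‖ * x) * C₀) ^ n * x ^ n / (n.factorial : ℝ)))
        Filter.atTop (nhds 0) := by
      have := (hBx ‖ζ‖).const_mul D
      simpa using this
    exact squeeze_zero (fun n => dist_nonneg) hb hg
  constructor
  · -- differentiability
    intro ζ₀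
    obtain ⟨D, hD0, hkey⟩ := key (‖ζ₀‖ + 1) (by positivity)
    have hunif : TendstoUniformlyOn (fun n ζ => picard v n ζ x) (fun ζ => φ ζ x)
        Filter.atTop (ball (0:ℂ) (‖ζ₀‖ + 1)) := by
      rw [Metric.tendstoUniformlyOn_iff]
      intro ε hε
      have hlim := (hBx (‖ζ₀‖ + 1)).const_mul D
      rw [mul_zero] at hlim
      filter_upwards [hlim.eventually_lt_const hε] with n hn ζ hζ
      rw [dist_eq_norm]
      exact lt_of_le_of_lt
        (hkey n ζ (mem_ball_zero_iff.mp hζ).le x ⟨hx, le_rfl⟩) hn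
    have hdiffOn : DifferentiableOn ℂ (fun ζ => φ ζ x) (ball (0:ℂ) (‖ζ₀‖ + 1)) :=
      hunif.tendstoLocallyUniformlyOn.differentiableOn
        (Filter.Eventually.of_forall fun n => ((hprops n).2.2 x hx).differentiableOn)
        isOpen_ball
    exact hdiffOn.differentiableAt (isOpen_ball.mem_nhds
      (mem_ball_zero_iff.mpr (lt_add_one _)))
  · -- evenness
    intro ζ
    have h1 := hconv ζ
    have h2 := hconv (-ζ)
    have h3 : (fun n => picard v n (-ζ) x) = fun n => picard v n ζ x :=
      funext fun n => picard_neg v n ζ x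
    rw [h3] at h2
    exact tendsto_nhds_unique h1 h2
end

section
/- For every ζ ∈ ℂ with Im ζ ≥ 0 and ζ ≠ 0 there exists a unique continuous function θ : [0,∞) → ℂ with sup_{x≥0} e^{Im(ζ)x}|θ(x)| < ∞ satisfying the Volterra integral equation θ(x) = e^{iζx} + ζ^{−1} ∫ₓ^∞ sin(ζ(x−y)) v(y) θ(y) dy for all x ≥ 0 (this unique solution is called the Jost solution θ(·,ζ)). -/
open MeasureTheory Set Filter Topology BoundedContinuousFunction

namespace JostProof


lemma abs_sin_le (z : ℂ) : ‖Complex.sin z‖ ≤ Real.exp |z.im| := by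
  have h1 : ‖Complex.exp (-z * Complex.I)‖ = Real.exp z.im := by
    rw [Complex.norm_exp]; congr 1; simp [Complex.mul_re]
  have h2 : ‖Complex.exp (z * Complex.I)‖ = Real.exp (-z.im) := by
    rw [Complex.norm_exp]; congr 1; simp [Complex.mul_re]
  have hle : ‖Complex.sin z‖ ≤ (Real.exp z.im + Real.exp (-z.im)) / 2 := by
    rw [Complex.sin, norm_div, norm_mul, Complex.norm_I, Complex.norm_two, mul_one]
    have h3 : ‖Complex.exp (-z * Complex.I) - Complex.exp (z * Complex.I)‖ ≤
        ‖Complex.exp (-z * Complex.I)‖ + ‖Complex.exp (z * Complex.I)‖ := by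
      simpa using
        norm_sub_le (Complex.exp (-z * Complex.I)) (Complex.exp (z * Complex.I))
    rw [h1, h2] at h3
    linarith
  refine hle.trans ?_
  have e1 : Real.exp z.im ≤ Real.exp |z.im| := Real.exp_le_exp.2 (le_abs_self _)
  have e2 : Real.exp (-z.im) ≤ Real.exp |z.im| := Real.exp_le_exp.2 (neg_le_abs _)
  linarith

noncomputable def jV (v : ℝ → ℝ) : ℝ → ℝ := (Set.Ici (0:ℝ)).indicator v

noncomputable def jκ (C ρ : ℝ) (y : ℝ) : ℝ := C * (1 + |y|) ^ (-ρ)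

noncomputable def jker (v : ℝ → ℝ) (ζ : ℂ) (s y : ℝ) : ℂ :=
  Complex.exp ((ζ.im : ℂ) * ((s : ℂ) - (y : ℂ))) *
    (ζ⁻¹ * Complex.sin (ζ * ((s : ℂ) - (y : ℂ)))) * ((jV v y : ℝ) : ℂ)

noncomputable def jσ (C ρ : ℝ) (s : ℝ) : ℝ := ∫ y in Ioi s, jκ C ρ y

noncomputable def jT (v : ℝ → ℝ) (ζ : ℂ) (φ : ℝ → ℂ) (x : ℝ) : ℂ :=
  Complex.exp (((ζ.im : ℂ) + Complex.I * ζ) * ((max x 0 : ℝ) : ℂ)) +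
    ∫ y in Set.Ioi (max x 0), jker v ζ (max x 0) y * φ y

lemma jκ_nonneg {C : ℝ} (hC : 0 ≤ C) (ρ y : ℝ) : 0 ≤ jκ C ρ y := by
  unfold jκ; positivity

lemma jκ_cont (C ρ : ℝ) : Continuous (jκ C ρ) := by
  apply continuous_const.mul
  apply Continuous.rpow_const (by continuity)
  intro y; left; positivity

lemma jκ_integrable {C ρ : ℝ} (hρ : 1 < ρ) : Integrable (jκ C ρ) := by
  have h : Integrable (fun y : ℝ => (1 + ‖y‖) ^ (-ρ)) := by
    apply integrable_one_add_norm
    simpa using hρ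
  have h2 := h.const_mul C
  simp only [Real.norm_eq_abs] at h2
  exact h2

lemma jV_meas {v : ℝ → ℝ} (hvm : Measurable v) : Measurable (jV v) :=
  hvm.indicator measurableSet_Ici

lemma jker_meas {v : ℝ → ℝ} (hvm : Measurable v) (ζ : ℂ) (s : ℝ) :
    Measurable (fun y => jker v ζ s y) := by
  unfold jker
  apply Measurable.mul
  · fun_prop
  · exact Complex.measurable_ofReal.comp (jV_meas hvm)

lemma jker_abs_le {v : ℝ → ℝ} {ζ : ℂ} (hτ : 0 ≤ ζ.im) {s y : ℝ} (hsy : s ≤ y) :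
    ‖jker v ζ s y‖ ≤ ‖ζ‖⁻¹ * |jV v y| := by
  have hcast : ((s : ℂ) - (y : ℂ)) = ((s - y : ℝ) : ℂ) := by push_cast; ring
  have h1 : ‖Complex.exp ((ζ.im : ℂ) * ((s:ℂ) - (y:ℂ)))‖ =
      Real.exp (ζ.im * (s - y)) := by
    rw [hcast, ← Complex.ofReal_mul, Complex.norm_exp, Complex.ofReal_re]
  have h2 : ‖Complex.sin (ζ * ((s:ℂ) - (y:ℂ)))‖ ≤ Real.exp (ζ.im * (y - s)) := by
    refine (abs_sin_le _).trans_eq ?_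
    congr 1
    have him : (ζ * ((s:ℂ) - (y:ℂ))).im = ζ.im * (s - y) := by
      rw [hcast, Complex.mul_im]; simp
    rw [him, abs_mul, abs_of_nonneg hτ, abs_of_nonpos (by linarith : s - y ≤ 0)]
    ring
  calc ‖jker v ζ s y‖
      = Real.exp (ζ.im * (s - y)) *
        (‖ζ‖⁻¹ * ‖Complex.sin (ζ * ((s:ℂ) - (y:ℂ)))‖) * |jV v y| := by
        rw [jker, norm_mul, norm_mul, norm_mul, norm_inv, h1, Complex.norm_real, Real.norm_eq_abs]
    _ ≤ Real.exp (ζ.im * (s - y)) *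
        (‖ζ‖⁻¹ * Real.exp (ζ.im * (y - s))) * |jV v y| := by
        gcongr
    _ = (Real.exp (ζ.im * (s - y)) * Real.exp (ζ.im * (y - s))) * (‖ζ‖⁻¹ * |jV v y|) := by
        ring
    _ = ‖ζ‖⁻¹ * |jV v y| := by
        rw [← Real.exp_add]
        ring_nf
        rw [Real.exp_zero]
        ring

set_option linter.unusedSectionVars false


variable {C ρ : ℝ}

section
variable (hC : 0 ≤ C) (hρ : 1 < ρ)
include hC hρ

lemma jσ_nonneg (s : ℝ) : 0 ≤ jσ C ρ s :=
  setIntegral_nonneg measurableSet_Ioi (fun y _ => jκ_nonneg hC ρ y)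

lemma jσ_anti : Antitone (jσ C ρ) := by
  intro a b hab
  apply setIntegral_mono_set (jκ_integrable hρ).integrableOn
  · exact Eventually.of_forall (fun y => jκ_nonneg hC ρ y)
  · exact HasSubset.Subset.eventuallyLE (Ioi_subset_Ioi hab)

lemma jσ_le (s : ℝ) : jσ C ρ s ≤ ∫ y, jκ C ρ y :=
  setIntegral_le_integral (jκ_integrable hρ) (Eventually.of_forall (fun y => jκ_nonneg hC ρ y))

lemma jσ_eq (y : ℝ) : jσ C ρ y = jσ C ρ 0 - ∫ t in (0:ℝ)..y, jκ C ρ t := by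
  have key : ∀ a b : ℝ, a ≤ b → jσ C ρ a = (∫ t in Ioc a b, jκ C ρ t) + jσ C ρ b := by
    intro a b hab
    rw [jσ, jσ, ← setIntegral_union (Ioc_disjoint_Ioi le_rfl) measurableSet_Ioi
      ((jκ_integrable hρ).integrableOn) ((jκ_integrable hρ).integrableOn),
      Ioc_union_Ioi_eq_Ioi hab]
  rcases le_total 0 y with h | h
  · rw [intervalIntegral.integral_of_le h, key 0 y h]; ring
  · rw [intervalIntegral.integral_symm, intervalIntegral.integral_of_le h, key y 0 h]; ring

lemma jσ_hasDeriv (t : ℝ) : HasDerivAt (jσ C ρ) (-(jκ C ρ t)) t := by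
  have h : jσ C ρ = fun y => jσ C ρ 0 - ∫ u in (0:ℝ)..y, jκ C ρ u := funext (jσ_eq hC hρ)
  rw [h]
  have hd : HasDerivAt (fun y => ∫ u in (0:ℝ)..y, jκ C ρ u) (jκ C ρ t) t := by
    apply intervalIntegral.integral_hasDerivAt_right
      ((jκ_integrable hρ).intervalIntegrable)
      ((jκ_cont C ρ).stronglyMeasurableAtFilter _ _)
      (jκ_cont C ρ).continuousAt
  simpa using hd.const_sub (jσ C ρ 0)

lemma jσ_cont : Continuous (jσ C ρ) := by
  have := fun t => (jσ_hasDeriv hC hρ t).continuousAt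
  exact continuous_iff_continuousAt.2 this

lemma jσ_tendsto : Tendsto (jσ C ρ) atTop (𝓝 0) := by
  have h2 : Tendsto (fun y => ∫ t in (0:ℝ)..y, jκ C ρ t) atTop (𝓝 (jσ C ρ 0)) :=
    intervalIntegral_tendsto_integral_Ioi 0 ((jκ_integrable hρ).integrableOn) tendsto_id
  have h3 : Tendsto (fun y => jσ C ρ 0 - ∫ t in (0:ℝ)..y, jκ C ρ t) atTop (𝓝 (jσ C ρ 0 - jσ C ρ 0)) :=
    (tendsto_const_nhds).sub h2
  simpa [← jσ_eq hC hρ] using h3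

lemma jκσ_integrable (n : ℕ) : Integrable (fun y => jκ C ρ y * jσ C ρ y ^ n) := by
  have h := (jκ_integrable (C := C) (ρ := ρ) hρ).bdd_mul
    ((jσ_cont hC hρ).pow n).aestronglyMeasurable
    (c := (∫ y, jκ C ρ y) ^ n) (Eventually.of_forall fun y => ?_)
  · simpa [mul_comm] using h
  · rw [Real.norm_eq_abs, Pi.pow_apply, abs_of_nonneg (pow_nonneg (jσ_nonneg hC hρ y) n)]
    exact pow_le_pow_left₀ (jσ_nonneg hC hρ y) (jσ_le hC hρ y) n

lemma jint_eq (n : ℕ) (s : ℝ) :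
    ∫ y in Ioi s, jκ C ρ y * jσ C ρ y ^ n = jσ C ρ s ^ (n + 1) / (n + 1) := by
  have hF : ∀ y ∈ Ici s, HasDerivAt (fun t => -(jσ C ρ t ^ (n + 1)) / ((n : ℝ) + 1))
      (jκ C ρ y * jσ C ρ y ^ n) y := by
    intro y _
    have h1 : HasDerivAt (fun t => jσ C ρ t ^ (n + 1))
        ((n + 1 : ℕ) * jσ C ρ y ^ n * (-(jκ C ρ y))) y := by
      simpa using (jσ_hasDeriv hC hρ y).fun_pow (n + 1)
    have h2 := (h1.neg).div_const ((n : ℝ) + 1)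
    refine h2.congr_deriv ?_
    have : ((n:ℝ) + 1) ≠ 0 := by positivity
    rw [div_eq_iff this]
    push_cast
    ring
  have hten : Tendsto (fun t => -(jσ C ρ t ^ (n + 1)) / ((n : ℝ) + 1)) atTop (𝓝 0) := by
    have hc : Continuous (fun u : ℝ => -(u ^ (n + 1)) / ((n : ℝ) + 1)) := by continuity
    have := (hc.tendsto 0).comp (jσ_tendsto hC hρ)
    simpa [Function.comp_def] using this
  have := integral_Ioi_of_hasDerivAt_of_tendsto' hF
    ((jκσ_integrable hC hρ n).integrableOn) hten
  rw [this]
  ring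

end
variable {v : ℝ → ℝ} {ζ : ℂ} {C ρ : ℝ}

section
variable (hvm : Measurable v) (hC : 0 ≤ C) (hρ : 1 < ρ)
  (hker : ∀ ⦃s y : ℝ⦄, s ≤ y → ‖jker v ζ s y‖ ≤ jκ C ρ y)
include hvm hC hρ hker

lemma integrand_integrable (φ : ℝ → ℂ) (hφm : AEStronglyMeasurable φ volume)
    {B : ℝ} (hB : ∀ y, ‖φ y‖ ≤ B) (s : ℝ) :
    IntegrableOn (fun y => jker v ζ s y * φ y) (Ioi s) := by
  apply Integrable.mono' (((jκ_integrable hρ).mul_const B).integrableOn)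
  · exact ((jker_meas hvm ζ s).aestronglyMeasurable.mul hφm).restrict
  · filter_upwards [ae_restrict_mem measurableSet_Ioi] with y hy
    rw [norm_mul]
    have h1 : ‖jker v ζ s y‖ ≤ jκ C ρ y := hker (le_of_lt hy)
    have h2 : (0:ℝ) ≤ ‖jker v ζ s y‖ := norm_nonneg _
    have h3 : (0:ℝ) ≤ ‖φ y‖ := norm_nonneg _
    exact mul_le_mul h1 (hB y) h3 (jκ_nonneg hC ρ y)

lemma jT_integral_cont (φ : ℝ → ℂ) (hφc : Continuous φ) {B : ℝ} (hB : ∀ y, ‖φ y‖ ≤ B) :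
    Continuous (fun s : ℝ => ∫ y in Ioi s, jker v ζ s y * φ y) := by
  have hrw : (fun s : ℝ => ∫ y in Ioi s, jker v ζ s y * φ y) =
      fun s : ℝ => ∫ y, (Ioi s).indicator (fun y => jker v ζ s y * φ y) y := by
    funext s; rw [integral_indicator measurableSet_Ioi]
  rw [hrw]
  rw [continuous_iff_continuousAt]
  intro s₀
  apply continuousAt_of_dominated (bound := fun y => jκ C ρ y * B)
  · filter_upwards with s
    exact (((jker_meas hvm ζ s).aestronglyMeasurable.mul
      hφc.aestronglyMeasurable).indicator measurableSet_Ioi)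
  · filter_upwards with s
    filter_upwards with y
    by_cases hy : y ∈ Ioi s
    · rw [indicator_of_mem hy, norm_mul]
      exact mul_le_mul (hker (le_of_lt hy)) (hB y) (norm_nonneg _) (jκ_nonneg hC ρ y)
    · rw [indicator_of_notMem hy, norm_zero]
      have h3 : ‖φ y‖ ≤ B := hB y
      have := norm_nonneg (φ y)
      exact mul_nonneg (jκ_nonneg hC ρ y) (by linarith)
  · exact (jκ_integrable hρ).mul_const B
  · have hae : ∀ᵐ (y : ℝ), y ≠ s₀ := by
      rw [ae_iff]
      simpa [not_not, setOf_eq_eq_singleton] using measure_singleton s₀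
    filter_upwards [hae] with y hy
    rcases lt_or_gt_of_ne hy with hlt | hgt
    · -- y < s₀ : eventually 0
      have hev : ∀ᶠ s in 𝓝 s₀, y < s := eventually_gt_nhds hlt
      apply continuousAt_const.congr
      filter_upwards [hev] with s hs
      rw [indicator_of_notMem (by simpa using le_of_lt hs : y ∉ Ioi s)]
    · -- y > s₀ : eventually equals the smooth function
      have hev : ∀ᶠ s in 𝓝 s₀, s < y := eventually_lt_nhds hgt
      have hc : Continuous (fun s : ℝ => jker v ζ s y * φ y) := by
        unfold jker
        fun_prop
      apply hc.continuousAt.congr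
      filter_upwards [hev] with s hs
      rw [indicator_of_mem (by simpa using hs : y ∈ Ioi s)]

lemma jT_cont (φ : ℝ → ℂ) (hφc : Continuous φ) {B : ℝ} (hB : ∀ y, ‖φ y‖ ≤ B) :
    Continuous (jT v ζ φ) := by
  have h1 : Continuous (fun x : ℝ => max x 0) := continuous_id.max continuous_const
  have h2 : Continuous (fun x : ℝ =>
      Complex.exp (((ζ.im : ℂ) + Complex.I * ζ) * ((max x 0 : ℝ) : ℂ))) := by fun_prop
  exact h2.add ((jT_integral_cont hvm hC hρ hker φ hφc hB).comp h1)

lemma jT_bdd (φ : ℝ → ℂ) (hφm : AEStronglyMeasurable φ volume)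
    {B : ℝ} (hB : ∀ y, ‖φ y‖ ≤ B) (hB0 : 0 ≤ B) (x : ℝ) :
    ‖jT v ζ φ x‖ ≤ 1 + (∫ y, jκ C ρ y) * B := by
  set s := max x 0
  have h1 : ‖Complex.exp (((ζ.im : ℂ) + Complex.I * ζ) * ((s : ℝ) : ℂ))‖ = 1 := by
    rw [Complex.norm_exp]
    have : ((((ζ.im : ℂ) + Complex.I * ζ) * ((s : ℝ) : ℂ))).re = 0 := by
      simp [Complex.mul_re, Complex.add_re, Complex.add_im]
    rw [this, Real.exp_zero]
  have h2 : ‖∫ y in Ioi s, jker v ζ s y * φ y‖ ≤ ∫ y in Ioi s, jκ C ρ y * B := by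
    apply norm_integral_le_of_norm_le (((jκ_integrable hρ).mul_const B).integrableOn)
    filter_upwards [ae_restrict_mem measurableSet_Ioi] with y hy
    rw [norm_mul]
    exact mul_le_mul (hker (le_of_lt hy)) (hB y) (norm_nonneg _) (jκ_nonneg hC ρ y)
  have h3 : ∫ y in Ioi s, jκ C ρ y * B ≤ ∫ y, jκ C ρ y * B :=
    setIntegral_le_integral ((jκ_integrable hρ).mul_const B)
      (Eventually.of_forall (fun y => mul_nonneg (jκ_nonneg hC ρ y) hB0))
  calc ‖jT v ζ φ x‖ ≤ ‖Complex.exp (((ζ.im : ℂ) + Complex.I * ζ) * ((s : ℝ) : ℂ))‖ +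
        ‖∫ y in Ioi s, jker v ζ s y * φ y‖ := norm_add_le _ _
    _ ≤ 1 + ∫ y, jκ C ρ y * B := by rw [h1]; gcongr; exact h2.trans h3
    _ = 1 + (∫ y, jκ C ρ y) * B := by rw [integral_mul_const]

end

section
variable {v : ℝ → ℝ} {ζ : ℂ} {C ρ : ℝ}
variable (hvm : Measurable v) (hC : 0 ≤ C) (hρ : 1 < ρ)
  (hker : ∀ ⦃s y : ℝ⦄, s ≤ y → ‖jker v ζ s y‖ ≤ jκ C ρ y)

lemma transfer (s : ℝ) (hs : 0 ≤ s) (φ : ℝ → ℂ) :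
    ∫ y in Ioi s, jker v ζ s y * φ y =
      Complex.exp ((ζ.im : ℂ) * (s : ℂ)) * (ζ⁻¹ *
        ∫ y in Ioi s, Complex.sin (ζ * ((s : ℂ) - (y : ℂ))) * ((v y : ℝ) : ℂ) *
          (Complex.exp (-(ζ.im : ℂ) * (y : ℂ)) * φ y)) := by
  have hpt : ∀ y ∈ Ioi s, jker v ζ s y * φ y =
      Complex.exp ((ζ.im : ℂ) * (s : ℂ)) * (ζ⁻¹ *
        (Complex.sin (ζ * ((s : ℂ) - (y : ℂ))) * ((v y : ℝ) : ℂ) *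
          (Complex.exp (-(ζ.im : ℂ) * (y : ℂ)) * φ y))) := by
    intro y hy
    have hy0 : (0:ℝ) ≤ y := le_trans hs (le_of_lt hy)
    have hV : jV v y = v y := indicator_of_mem hy0 v
    have hexp : Complex.exp ((ζ.im : ℂ) * ((s : ℂ) - (y : ℂ))) =
        Complex.exp ((ζ.im : ℂ) * (s : ℂ)) * Complex.exp (-(ζ.im : ℂ) * (y : ℂ)) := by
      rw [← Complex.exp_add]; congr 1; ring
    rw [jker, hV, hexp]; ring
  rw [setIntegral_congr_fun measurableSet_Ioi hpt, integral_const_mul, integral_const_mul]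

include hvm hC hρ hker in
lemma iter_bound (Tb : (ℝ →ᵇ ℂ) → (ℝ →ᵇ ℂ)) (hTb : ∀ φ x, Tb φ x = jT v ζ (⇑φ) x)
    (n : ℕ) (φ ψ : ℝ →ᵇ ℂ) (x : ℝ) :
    ‖(Tb^[n] φ) x - (Tb^[n] ψ) x‖ ≤
      jσ C ρ (max x 0) ^ n / (n.factorial : ℝ) * dist φ ψ := by
  induction n generalizing x with
  | zero =>
    simpa [dist_eq_norm] using BoundedContinuousFunction.dist_coe_le_dist (f := φ) (g := ψ) x
  | succ n IH =>
    set s := max x 0 with hs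
    set A := Tb^[n] φ with hA
    set B := Tb^[n] ψ with hB
    have hAi : IntegrableOn (fun y => jker v ζ s y * A y) (Ioi s) :=
      integrand_integrable hvm hC hρ hker _ A.continuous.aestronglyMeasurable
        (fun y => A.norm_coe_le_norm y) s
    have hBi : IntegrableOn (fun y => jker v ζ s y * B y) (Ioi s) :=
      integrand_integrable hvm hC hρ hker _ B.continuous.aestronglyMeasurable
        (fun y => B.norm_coe_le_norm y) s
    have hstep : (Tb^[n+1] φ) x - (Tb^[n+1] ψ) x =
        ∫ y in Ioi s, (jker v ζ s y * A y - jker v ζ s y * B y) := by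
      rw [Function.iterate_succ_apply', Function.iterate_succ_apply', hTb, hTb, jT, jT,
        add_sub_add_left_eq_sub, ← integral_sub hAi hBi]
    rw [hstep]
    have hbound : ‖∫ y in Ioi s, (jker v ζ s y * A y - jker v ζ s y * B y)‖ ≤
        ∫ y in Ioi s, (jκ C ρ y * jσ C ρ y ^ n) * (dist φ ψ / (n.factorial : ℝ)) := by
      apply norm_integral_le_of_norm_le
        (((jκσ_integrable hC hρ n).mul_const _).integrableOn)
      filter_upwards [ae_restrict_mem measurableSet_Ioi] with y hy
      rw [← mul_sub, norm_mul]
      have h1 : ‖jker v ζ s y‖ ≤ jκ C ρ y := hker (le_of_lt hy)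
      have h2 : ‖A y - B y‖ ≤ jσ C ρ (max y 0) ^ n / (n.factorial : ℝ) * dist φ ψ := IH y
      have h3 : jσ C ρ (max y 0) ≤ jσ C ρ y := jσ_anti hC hρ (le_max_left y 0)
      have h4 : jσ C ρ (max y 0) ^ n ≤ jσ C ρ y ^ n :=
        pow_le_pow_left₀ (jσ_nonneg hC hρ _) h3 n
      have h5 : ‖A y - B y‖ ≤ jσ C ρ y ^ n / (n.factorial : ℝ) * dist φ ψ := by
        refine h2.trans ?_
        gcongr
      calc ‖jker v ζ s y‖ * ‖A y - B y‖
          ≤ jκ C ρ y * (jσ C ρ y ^ n / (n.factorial : ℝ) * dist φ ψ) :=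
            mul_le_mul h1 h5 (norm_nonneg _) (jκ_nonneg hC ρ y)
        _ = (jκ C ρ y * jσ C ρ y ^ n) * (dist φ ψ / (n.factorial : ℝ)) := by ring
    refine hbound.trans_eq ?_
    rw [integral_mul_const, jint_eq hC hρ n s]
    rw [Nat.factorial_succ]
    have hfac : ((n.factorial : ℝ)) ≠ 0 := Nat.cast_ne_zero.2 n.factorial_ne_zero
    have hn1 : ((n:ℝ) + 1) ≠ 0 := by positivity
    push_cast
    field_simp
end
end JostProof

open JostProof

/-- Existence and uniqueness of the Jost solution of the Volterra integral
equation `θ(x) = e^{iζx} + ζ⁻¹ ∫ₓ^∞ sin(ζ(x−y)) v(y) θ(y) dy` among continuous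
functions on `[0,∞)` with `sup_{x ≥ 0} e^{Im(ζ)x} |θ(x)| < ∞`. -/
theorem jost_solution_exists_unique
    (v : ℝ → ℝ) (hv_meas : Measurable v) (C₀ ρ : ℝ)
    (hC₀ : 0 < C₀) (hρ : 2 < ρ)
    (hv : ∀ x : ℝ, 0 ≤ x → |v x| ≤ C₀ * (1 + x) ^ (-ρ))
    (ζ : ℂ) (hζim : 0 ≤ ζ.im) (hζ : ζ ≠ 0) :
    ∃ θ : ℝ → ℂ,
      (ContinuousOn θ (Set.Ici 0) ∧
        (∃ M : ℝ, ∀ x : ℝ, 0 ≤ x → Real.exp (ζ.im * x) * ‖θ x‖ ≤ M) ∧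
        ∀ x : ℝ, 0 ≤ x →
          θ x = Complex.exp (Complex.I * ζ * x) +
            ζ⁻¹ * ∫ y in Set.Ioi x, Complex.sin (ζ * ((x : ℂ) - (y : ℂ))) * (v y : ℂ) * θ y) ∧
      ∀ θ' : ℝ → ℂ,
        ContinuousOn θ' (Set.Ici 0) →
        (∃ M : ℝ, ∀ x : ℝ, 0 ≤ x → Real.exp (ζ.im * x) * ‖θ' x‖ ≤ M) →
        (∀ x : ℝ, 0 ≤ x →
          θ' x = Complex.exp (Complex.I * ζ * x) +
            ζ⁻¹ * ∫ y in Set.Ioi x, Complex.sin (ζ * ((x : ℂ) - (y : ℂ))) * (v y : ℂ) * θ' y) →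
        Set.EqOn θ' θ (Set.Ici 0) := by
  classical
  have hρ1 : (1:ℝ) < ρ := by linarith
  have habs : 0 < ‖ζ‖ := norm_pos_iff.mpr hζ
  set C : ℝ := C₀ * ‖ζ‖⁻¹ with hCdef
  have hC : 0 ≤ C := by positivity
  -- kernel bound
  have hker : ∀ ⦃s y : ℝ⦄, s ≤ y → ‖jker v ζ s y‖ ≤ jκ C ρ y := by
    intro s y hsy
    refine (jker_abs_le hζim hsy).trans ?_
    have hVb : |jV v y| ≤ C₀ * (1 + |y|) ^ (-ρ) := by
      by_cases h : (0:ℝ) ≤ y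
      · have h0 := hv y h
        have hJ : jV v y = v y := by simp [jV, h]
        rw [hJ, abs_of_nonneg h]
        exact h0
      · have hJ : jV v y = 0 := by simp [jV, h]
        rw [hJ, abs_zero]
        positivity
    calc ‖ζ‖⁻¹ * |jV v y| ≤ ‖ζ‖⁻¹ * (C₀ * (1 + |y|) ^ (-ρ)) := by
          gcongr
      _ = jκ C ρ y := by rw [jκ, hCdef]; ring
  -- the operator on bounded continuous functions
  set Ktot : ℝ := ∫ y, jκ C ρ y with hKtotdef
  have hKtot0 : 0 ≤ Ktot := integral_nonneg (fun y => jκ_nonneg hC ρ y)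
  set Tb : (ℝ →ᵇ ℂ) → (ℝ →ᵇ ℂ) := fun φ =>
    BoundedContinuousFunction.ofNormedAddCommGroup (jT v ζ ⇑φ)
      (jT_cont hv_meas hC hρ1 hker _ φ.continuous φ.norm_coe_le_norm)
      (1 + Ktot * ‖φ‖)
      (jT_bdd hv_meas hC hρ1 hker _ φ.continuous.aestronglyMeasurable
        φ.norm_coe_le_norm (norm_nonneg φ)) with hTbdef
  have hTb : ∀ (φ : ℝ →ᵇ ℂ) (x : ℝ), Tb φ x = jT v ζ (⇑φ) x := fun φ x => rfl
  -- contraction for some iterate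
  obtain ⟨n₀, hn₀⟩ : ∃ n : ℕ, Ktot ^ n / (n.factorial : ℝ) < 1 := by
    have h := FloorSemiring.tendsto_pow_div_factorial_atTop (K := ℝ) Ktot
    exact (h.eventually (eventually_lt_nhds (by norm_num : (0:ℝ) < 1))).exists
  set Kq : NNReal := Real.toNNReal (Ktot ^ n₀ / (n₀.factorial : ℝ)) with hKqdef
  have hKq1 : Kq < 1 := by
    rw [hKqdef]
    exact_mod_cast Real.toNNReal_lt_one.2 hn₀
  have hlip : LipschitzWith Kq (Tb^[n₀]) := by
    apply LipschitzWith.of_dist_le_mul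
    intro φ ψ
    rw [BoundedContinuousFunction.dist_le (by positivity)]
    intro x
    rw [dist_eq_norm]
    refine (iter_bound hv_meas hC hρ1 hker Tb hTb n₀ φ ψ x).trans ?_
    have h3 : Ktot ^ n₀ / (n₀.factorial : ℝ) ≤ (Kq : ℝ) := by
      rw [hKqdef, Real.coe_toNNReal']
      exact le_max_left _ _
    have h2 : jσ C ρ (max x 0) ^ n₀ / (n₀.factorial : ℝ) ≤ Ktot ^ n₀ / (n₀.factorial : ℝ) := by
      gcongr
      · exact jσ_nonneg hC hρ1 _
      · exact jσ_le hC hρ1 _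
    exact mul_le_mul_of_nonneg_right (h2.trans h3) dist_nonneg
  have hcontr : ContractingWith Kq (Tb^[n₀]) := ⟨hKq1, hlip⟩
  set φs : ℝ →ᵇ ℂ := ContractingWith.fixedPoint (Tb^[n₀]) hcontr with hφsdef
  have hfix : Tb φs = φs := hcontr.isFixedPt_fixedPoint_iterate
  -- the Jost solution
  set θ : ℝ → ℂ := fun x => Complex.exp (-(ζ.im : ℂ) * (x : ℂ)) * φs x with hθdef
  have hmax : ∀ x : ℝ, 0 ≤ x → max x 0 = x := fun x hx => max_eq_left hx
  refine ⟨θ, ⟨?_, ⟨‖φs‖, ?_⟩, ?_⟩, ?_⟩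
  · -- continuity
    have : Continuous θ := by
      rw [hθdef]
      exact (by fun_prop : Continuous fun x : ℝ => Complex.exp (-(ζ.im:ℂ) * (x:ℂ))).mul
        φs.continuous
    exact this.continuousOn
  · -- bound
    intro x hx
    have h1 : ‖θ x‖ = Real.exp (-(ζ.im * x)) * ‖φs x‖ := by
      rw [hθdef]
      simp only [norm_mul, Complex.norm_exp]
      congr 2
      simp
    rw [h1, ← mul_assoc, ← Real.exp_add, add_neg_cancel, Real.exp_zero, one_mul]
    simpa using φs.norm_coe_le_norm x
  · -- the integral equation
    intro x hx
    have h0 : φs x = jT v ζ (⇑φs) x := by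
      conv_lhs => rw [← hfix]
      exact hTb φs x
    have h1 : jT v ζ (⇑φs) x =
        Complex.exp (((ζ.im:ℂ) + Complex.I * ζ) * (x:ℂ)) +
        Complex.exp ((ζ.im:ℂ) * (x:ℂ)) * (ζ⁻¹ *
          ∫ y in Ioi x, Complex.sin (ζ * ((x:ℂ) - (y:ℂ))) * ((v y : ℝ):ℂ) *
            (Complex.exp (-(ζ.im:ℂ) * (y:ℂ)) * φs y)) := by
      rw [jT, hmax x hx, transfer x hx]
    have h2 : θ x = Complex.exp (-(ζ.im:ℂ) * (x:ℂ)) * jT v ζ (⇑φs) x := by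
      rw [hθdef, ← h0]
    rw [h2, h1, mul_add]
    congr 1
    · rw [← Complex.exp_add]
      congr 1
      ring
    · rw [← mul_assoc, ← Complex.exp_add, neg_mul, neg_add_cancel, Complex.exp_zero, one_mul]
  · -- uniqueness
    rintro θ' hθ'c ⟨M, hM'⟩ hEq'
    have hψcont : Continuous (fun x : ℝ =>
        Complex.exp ((ζ.im:ℂ) * ((max x 0 : ℝ):ℂ)) * θ' (max x 0)) := by
      apply Continuous.mul
      · fun_prop
      · exact hθ'c.comp_continuous (continuous_id.max continuous_const)
          (fun x => le_max_right x 0)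
    have hψbd : ∀ x : ℝ, ‖Complex.exp ((ζ.im:ℂ) * ((max x 0:ℝ):ℂ)) * θ' (max x 0)‖ ≤ max M 0 := by
      intro x
      rw [norm_mul, Complex.norm_exp]
      have hre : ((ζ.im:ℂ) * ((max x 0:ℝ):ℂ)).re = ζ.im * max x 0 := by simp
      rw [hre]
      exact le_trans (hM' _ (le_max_right x 0)) (le_max_left M 0)
    set ψ' : ℝ →ᵇ ℂ := BoundedContinuousFunction.ofNormedAddCommGroup _ hψcont (max M 0) hψbd
      with hψ'def
    have hψ'app : ∀ x : ℝ, ψ' x =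
        Complex.exp ((ζ.im:ℂ) * ((max x 0:ℝ):ℂ)) * θ' (max x 0) := fun x => rfl
    have hψfix : Tb ψ' = ψ' := by
      ext x
      rw [hTb, jT]
      have hs0 : (0:ℝ) ≤ max x 0 := le_max_right x 0
      rw [transfer (max x 0) hs0 ⇑ψ']
      have hint : ∫ y in Ioi (max x 0),
          Complex.sin (ζ * (((max x 0 : ℝ):ℂ) - (y:ℂ))) * ((v y : ℝ):ℂ) *
            (Complex.exp (-(ζ.im:ℂ) * (y:ℂ)) * ψ' y) =
          ∫ y in Ioi (max x 0),
          Complex.sin (ζ * (((max x 0 : ℝ):ℂ) - (y:ℂ))) * ((v y : ℝ):ℂ) * θ' y := by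
        apply setIntegral_congr_fun measurableSet_Ioi
        intro y hy
        have hy0 : (0:ℝ) ≤ y := le_trans hs0 (le_of_lt hy)
        beta_reduce
        rw [hψ'app, hmax y hy0, ← mul_assoc (Complex.exp (-(ζ.im:ℂ) * (y:ℂ))),
          ← Complex.exp_add, neg_mul, neg_add_cancel, Complex.exp_zero, one_mul]
      rw [hint]
      have heq := hEq' (max x 0) hs0
      have hψx : ψ' x = Complex.exp ((ζ.im:ℂ) * ((max x 0:ℝ):ℂ)) * θ' (max x 0) := hψ'app x
      rw [hψx, heq]
      rw [mul_add, ← Complex.exp_add]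
      congr 1
      congr 1
      ring
    have hψeq : ψ' = φs :=
      hcontr.fixedPoint_unique (Function.IsFixedPt.iterate hψfix n₀)
    intro x hx
    have h1 : ψ' x = Complex.exp ((ζ.im:ℂ) * (x:ℂ)) * θ' x := by
      rw [hψ'app, hmax x hx]
    have h2 : Complex.exp ((ζ.im:ℂ) * (x:ℂ)) * θ' x = φs x := by
      rw [← h1, hψeq]
    show θ' x = θ x
    rw [hθdef]
    have : θ' x = Complex.exp (-(ζ.im:ℂ) * (x:ℂ)) *
        (Complex.exp ((ζ.im:ℂ) * (x:ℂ)) * θ' x) := by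
      rw [← mul_assoc, ← Complex.exp_add, neg_mul, neg_add_cancel, Complex.exp_zero, one_mul]
    rw [this, h2]
end

section
/- For each fixed x ≥ 0, the map ζ ↦ θ(x,ζ) is holomorphic on the open upper half-plane ℂ₊ = {ζ ∈ ℂ : Im ζ > 0} and is continuous on {ζ ∈ ℂ : Im ζ ≥ 0, ζ ≠ 0}. -/
open MeasureTheory Set Complex Filter


lemma abs_sin_le_exp (z : ℂ) : ‖Complex.sin z‖ ≤ Real.exp |z.im| := by
  have e1 : Real.exp z.im ≤ Real.exp |z.im| := Real.exp_le_exp.2 (le_abs_self _)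
  have e2 : Real.exp (-z.im) ≤ Real.exp |z.im| := Real.exp_le_exp.2 (neg_le_abs _)
  rw [Complex.sin.eq_1]
  have h1 : (-z * Complex.I).re = z.im := by simp
  have h2 : (z * Complex.I).re = -z.im := by simp
  calc ‖(Complex.exp (-z * Complex.I) - Complex.exp (z * Complex.I)) * Complex.I / 2‖
      = ‖Complex.exp (-z * Complex.I) - Complex.exp (z * Complex.I)‖ / 2 := by
        rw [norm_div, norm_mul, Complex.norm_I, mul_one]; norm_num
    _ ≤ (‖Complex.exp (-z * Complex.I)‖ + ‖Complex.exp (z * Complex.I)‖) / 2 := by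
        gcongr; exact norm_sub_le _ _
    _ ≤ Real.exp |z.im| := by
        rw [Complex.norm_exp, Complex.norm_exp, h1, h2]; linarith

lemma abs_cos_le_exp (z : ℂ) : ‖Complex.cos z‖ ≤ Real.exp |z.im| := by
  have e1 : Real.exp z.im ≤ Real.exp |z.im| := Real.exp_le_exp.2 (le_abs_self _)
  have e2 : Real.exp (-z.im) ≤ Real.exp |z.im| := Real.exp_le_exp.2 (neg_le_abs _)
  rw [Complex.cos.eq_1]
  have h1 : (-z * Complex.I).re = z.im := by simp
  have h2 : (z * Complex.I).re = -z.im := by simp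
  calc ‖(Complex.exp (z * Complex.I) + Complex.exp (-z * Complex.I)) / 2‖
      ≤ (‖Complex.exp (z * Complex.I)‖ + ‖Complex.exp (-z * Complex.I)‖) / 2 := by
        rw [norm_div, show ‖(2:ℂ)‖ = 2 by norm_num]
        gcongr; exact norm_add_le _ _
    _ ≤ Real.exp |z.im| := by
        rw [Complex.norm_exp, Complex.norm_exp, h1, h2]; linarith

lemma tail_hasDerivAt (p : ℝ) (hp : 1 < p) (y : ℝ) (hy : 0 ≤ y) :
    HasDerivAt (fun t : ℝ => -(1 + t) ^ (1 - p) / (p - 1)) ((1 + y) ^ (-p)) y := by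
  have h1 : HasDerivAt (fun t : ℝ => 1 + t) 1 y := by
    simpa using (hasDerivAt_id y).const_add 1
  have h2 : HasDerivAt (fun t : ℝ => (1 + t) ^ (1 - p)) ((1 - p) * (1 + y) ^ (1 - p - 1) * 1) y :=
    (Real.hasDerivAt_rpow_const (p := 1 - p) (Or.inl (by linarith))).comp y h1
  have h3 := (h2.neg.div_const (p - 1))
  refine h3.congr_deriv ?_
  have h4 : 1 - p - 1 = -p := by ring
  rw [h4]
  have hp1 : p - 1 ≠ 0 := by linarith
  field_simp
  ring

lemma tail_tendsto (p : ℝ) (hp : 1 < p) :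
    Tendsto (fun t : ℝ => -(1 + t) ^ (1 - p) / (p - 1)) atTop (nhds 0) := by
  have h : Tendsto (fun t : ℝ => (1 + t) ^ (-(p - 1))) atTop (nhds 0) :=
    (tendsto_rpow_neg_atTop (by linarith : (0:ℝ) < p - 1)).comp
      (tendsto_atTop_add_const_left _ 1 tendsto_id)
  have h2 : Tendsto (fun t : ℝ => (1 + t) ^ (1 - p)) atTop (nhds 0) := by
    rw [show (1 : ℝ) - p = -(p - 1) by ring]; exact h
  simpa using h2.neg.div_const (p - 1)

lemma tail_integrable (p : ℝ) (hp : 1 < p) (x : ℝ) (hx : 0 ≤ x) :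
    IntegrableOn (fun y : ℝ => (1 + y) ^ (-p)) (Ioi x) := by
  refine integrableOn_Ioi_deriv_of_nonneg
    (((tail_hasDerivAt p hp x hx).continuousAt).continuousWithinAt)
    (fun y hy => tail_hasDerivAt p hp y (le_trans hx (le_of_lt hy)))
    (fun y hy => Real.rpow_nonneg (by simp at hy; linarith) _) (tail_tendsto p hp)

lemma tail_integral (p : ℝ) (hp : 1 < p) (x : ℝ) (hx : 0 ≤ x) :
    ∫ y in Ioi x, (1 + y) ^ (-p) = (1 + x) ^ (1 - p) / (p - 1) := by
  have := integral_Ioi_of_hasDerivAt_of_nonneg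
    (((tail_hasDerivAt p hp x hx).continuousAt).continuousWithinAt)
    (fun y hy => tail_hasDerivAt p hp y (le_trans hx (le_of_lt hy)))
    (fun y hy => Real.rpow_nonneg (by simp at hy; linarith) _) (tail_tendsto p hp)
  rw [this]
  ring

lemma int_est {p M : ℝ} (hp : 1 < p) {x : ℝ} (hx : 0 ≤ x) {f : ℝ → ℂ}
    (hf : AEStronglyMeasurable f (volume.restrict (Ioi x)))
    (hb : ∀ y ∈ Ioi x, ‖f y‖ ≤ M * (1 + y) ^ (-p)) :
    IntegrableOn f (Ioi x) ∧ ‖∫ y in Ioi x, f y‖ ≤ M * (1 + x) ^ (1 - p) / (p - 1) := by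
  have hM : 0 ≤ M := by
    have := hb (x + 1) (by simp)
    have hnn : (0:ℝ) ≤ (1 + (x+1)) ^ (-p) := Real.rpow_nonneg (by linarith) _
    nlinarith [norm_nonneg (f (x+1)), Real.rpow_pos_of_pos (show (0:ℝ) < 1 + (x+1) by linarith) (-p)]
  have hgint : IntegrableOn (fun y : ℝ => M * (1 + y) ^ (-p)) (Ioi x) :=
    (tail_integrable p hp x hx).const_mul M
  have hbae : ∀ᵐ y ∂(volume.restrict (Ioi x)), ‖f y‖ ≤ M * (1 + y) ^ (-p) :=
    (ae_restrict_iff' measurableSet_Ioi).2 (Filter.Eventually.of_forall hb)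
  have hint : IntegrableOn f (Ioi x) := Integrable.mono' hgint hf hbae
  refine ⟨hint, ?_⟩
  calc ‖∫ y in Ioi x, f y‖ ≤ ∫ y in Ioi x, M * (1 + y) ^ (-p) :=
        norm_integral_le_of_norm_le hgint hbae
    _ = M * (1 + x) ^ (1 - p) / (p - 1) := by
        rw [integral_const_mul, tail_integral p hp x hx]; ring

lemma ker_sin_bound (ζ : ℂ) (him : 0 ≤ ζ.im) {x y : ℝ} (hxy : x ≤ y) :
    ‖Complex.sin (ζ * ((x : ℂ) - (y : ℂ)))‖ ≤ Real.exp (ζ.im * (y - x)) := by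
  refine le_trans (abs_sin_le_exp _) (le_of_eq ?_)
  congr 1
  have h : (ζ * ((x : ℂ) - (y : ℂ))).im = ζ.im * (x - y) := by
    simp [Complex.mul_im]
  rw [h, abs_mul, _root_.abs_of_nonneg him, _root_.abs_of_nonpos (by linarith : x - y ≤ 0)]
  ring

lemma ker_cos_bound (ζ : ℂ) (him : 0 ≤ ζ.im) {x y : ℝ} (hxy : x ≤ y) :
    ‖Complex.cos (ζ * ((x : ℂ) - (y : ℂ)))‖ ≤ Real.exp (ζ.im * (y - x)) := by
  refine le_trans (abs_cos_le_exp _) (le_of_eq ?_)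
  congr 1
  have h : (ζ * ((x : ℂ) - (y : ℂ))).im = ζ.im * (x - y) := by
    simp [Complex.mul_im]
  rw [h, abs_mul, _root_.abs_of_nonneg him, _root_.abs_of_nonpos (by linarith : x - y ≤ 0)]
  ring

section Kernel

variable {v : ℝ → ℝ} {C₀ ρ : ℝ} {K : ℂ → ℝ → ℝ → ℂ} {S : Set ℂ} {G : ℂ → ℝ → ℂ} {B j k : ℝ}

/-- pointwise bound on the integrand -/
lemma gen_ptbound (hv_meas : Measurable v) (hC₀ : 0 < C₀) (hρ : 2 < ρ)
    (hv : ∀ x : ℝ, 0 ≤ x → |v x| ≤ C₀ * (1 + x) ^ (-ρ))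
    (hSim : ∀ ζ ∈ S, 0 ≤ ζ.im)
    (hKb : ∀ ζ ∈ S, ∀ x y : ℝ, 0 ≤ x → x ≤ y →
      ‖K ζ x y‖ ≤ (1 + y) ^ j * Real.exp (ζ.im * (y - x)))
    (hGb : ∀ ζ ∈ S, ∀ y : ℝ, 0 ≤ y → ‖G ζ y‖ ≤ B * (1 + y) ^ k * Real.exp (-ζ.im * y))
    (hB : 0 ≤ B) {ζ : ℂ} (hζ : ζ ∈ S) {x : ℝ} (hx : 0 ≤ x) {y : ℝ} (hy : y ∈ Ioi x) :
    ‖K ζ x y * (v y : ℂ) * G ζ y‖ ≤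
      C₀ * B * Real.exp (-ζ.im * x) * (1 + y) ^ (-(ρ - (j + k))) := by
  have hxy : x ≤ y := le_of_lt hy
  have hy0 : (0:ℝ) ≤ y := le_trans hx hxy
  have h1y : (0:ℝ) < 1 + y := by linarith
  have hK := hKb ζ hζ x y hx hxy
  have hG := hGb ζ hζ y hy0
  have hV : ‖(v y : ℂ)‖ ≤ C₀ * (1 + y) ^ (-ρ) := by
    rw [Complex.norm_real, Real.norm_eq_abs]; exact hv y hy0
  calc ‖K ζ x y * (v y : ℂ) * G ζ y‖ = ‖K ζ x y‖ * ‖(v y : ℂ)‖ * ‖G ζ y‖ := by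
        rw [norm_mul, norm_mul]
    _ ≤ ((1 + y) ^ j * Real.exp (ζ.im * (y - x))) * (C₀ * (1 + y) ^ (-ρ)) *
          (B * (1 + y) ^ k * Real.exp (-ζ.im * y)) := by
        gcongr <;> positivity
    _ = C₀ * B * Real.exp (-ζ.im * x) * (1 + y) ^ (-(ρ - (j + k))) := by
        have he : Real.exp (ζ.im * (y - x)) * Real.exp (-ζ.im * y) = Real.exp (-ζ.im * x) := by
          rw [← Real.exp_add]; congr 1; ring
        rw [show -(ρ - (j + k)) = j + -ρ + k by ring, Real.rpow_add h1y, Real.rpow_add h1y, ← he]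
        ring

/-- integrability and a norm bound for the kernel integral -/
lemma gen_int (hv_meas : Measurable v) (hC₀ : 0 < C₀) (hρ : 2 < ρ)
    (hv : ∀ x : ℝ, 0 ≤ x → |v x| ≤ C₀ * (1 + x) ^ (-ρ))
    (hSim : ∀ ζ ∈ S, 0 ≤ ζ.im)
    (hKc : ∀ ζ ∈ S, ∀ x : ℝ, Continuous (fun y => K ζ x y))
    (hKb : ∀ ζ ∈ S, ∀ x y : ℝ, 0 ≤ x → x ≤ y →
      ‖K ζ x y‖ ≤ (1 + y) ^ j * Real.exp (ζ.im * (y - x)))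
    (hGc : ∀ ζ ∈ S, ContinuousOn (G ζ) (Ici 0))
    (hGb : ∀ ζ ∈ S, ∀ y : ℝ, 0 ≤ y → ‖G ζ y‖ ≤ B * (1 + y) ^ k * Real.exp (-ζ.im * y))
    (hB : 0 ≤ B) (hp : 1 < ρ - (j + k))
    {ζ : ℂ} (hζ : ζ ∈ S) {x : ℝ} (hx : 0 ≤ x) :
    IntegrableOn (fun y => K ζ x y * (v y : ℂ) * G ζ y) (Ioi x) ∧
    ‖∫ y in Ioi x, K ζ x y * (v y : ℂ) * G ζ y‖ ≤
      C₀ * B * Real.exp (-ζ.im * x) *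
        (1 + x) ^ (1 - (ρ - (j + k))) / (ρ - (j + k) - 1) := by
  have haesm : AEStronglyMeasurable (fun y => K ζ x y * (v y : ℂ) * G ζ y)
      (volume.restrict (Ioi x)) := by
    refine (((hKc ζ hζ x).aestronglyMeasurable).mul
      ((Complex.measurable_ofReal.comp hv_meas).aestronglyMeasurable)).mul ?_
    exact (((hGc ζ hζ).mono (Ioi_subset_Ici hx)).aestronglyMeasurable measurableSet_Ioi)
  have := int_est (M := C₀ * B * Real.exp (-ζ.im * x)) hp hx haesm
    (fun y hy => gen_ptbound hv_meas hC₀ hρ hv hSim hKb hGb hB hζ hx hy)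
  exact this

end Kernel

section Kernel2

variable {v : ℝ → ℝ} {C₀ ρ : ℝ} {K : ℂ → ℝ → ℝ → ℂ} {S : Set ℂ} {G : ℂ → ℝ → ℂ} {B j k : ℝ}

lemma bound_integrable_gen (hC₀ : 0 < C₀) (hρ : 2 < ρ) (hB : 0 ≤ B) {a : ℝ} (ha : 0 ≤ a) :
    Integrable (fun y : ℝ => C₀ * B * (1 + y) ^ (1 - ρ)) (volume.restrict (Ioi a)) := by
  have : IntegrableOn (fun y : ℝ => (1 + y) ^ (-(ρ - 1))) (Ioi a) :=
    tail_integrable (ρ - 1) (by linarith) a ha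
  have h2 := this.const_mul (C₀ * B)
  have he : (fun y : ℝ => C₀ * B * (1 + y) ^ (1 - ρ)) =
      fun y : ℝ => C₀ * B * (1 + y) ^ (-(ρ - 1)) := by
    funext y; rw [show (1:ℝ) - ρ = -(ρ-1) by ring]
  rw [he]; exact h2

/-- the uniform (in `ζ ∈ S` and `x`) bound on the integrand -/
lemma gen_unif_bound (hv_meas : Measurable v) (hC₀ : 0 < C₀) (hρ : 2 < ρ)
    (hv : ∀ x : ℝ, 0 ≤ x → |v x| ≤ C₀ * (1 + x) ^ (-ρ))
    (hSim : ∀ ζ ∈ S, 0 ≤ ζ.im)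
    (hKb : ∀ ζ ∈ S, ∀ x y : ℝ, 0 ≤ x → x ≤ y →
      ‖K ζ x y‖ ≤ (1 + y) ^ j * Real.exp (ζ.im * (y - x)))
    (hGb : ∀ ζ ∈ S, ∀ y : ℝ, 0 ≤ y → ‖G ζ y‖ ≤ B * (1 + y) ^ k * Real.exp (-ζ.im * y))
    (hB : 0 ≤ B) (hjk : 0 ≤ j) (hk : 0 ≤ k) (hjk1 : j + k ≤ 1)
    {ζ : ℂ} (hζ : ζ ∈ S) {x : ℝ} (hx : 0 ≤ x) {y : ℝ} (hy : y ∈ Ioi x) :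
    ‖K ζ x y * (v y : ℂ) * G ζ y‖ ≤ C₀ * B * (1 + y) ^ (1 - ρ) := by
  have h1 := gen_ptbound hv_meas hC₀ hρ hv hSim hKb hGb hB hζ hx hy
  have hy0 : (0:ℝ) ≤ y := le_trans hx (le_of_lt hy)
  have h1y : (1:ℝ) ≤ 1 + y := by linarith
  have he : Real.exp (-ζ.im * x) ≤ 1 := by
    rw [Real.exp_le_one_iff]
    have := hSim ζ hζ
    nlinarith
  have hr : (1 + y) ^ (-(ρ - (j + k))) ≤ (1 + y) ^ (1 - ρ) :=
    Real.rpow_le_rpow_of_exponent_le h1y (by linarith)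
  calc ‖K ζ x y * (v y : ℂ) * G ζ y‖ ≤ C₀ * B * Real.exp (-ζ.im * x) * (1 + y) ^ (-(ρ - (j + k))) := h1
    _ ≤ C₀ * B * 1 * (1 + y) ^ (1 - ρ) := by
        gcongr
    _ = C₀ * B * (1 + y) ^ (1 - ρ) := by ring

/-- continuity in `x` of the kernel integral -/
lemma gen_contx (hv_meas : Measurable v) (hC₀ : 0 < C₀) (hρ : 2 < ρ)
    (hv : ∀ x : ℝ, 0 ≤ x → |v x| ≤ C₀ * (1 + x) ^ (-ρ))
    (hSim : ∀ ζ ∈ S, 0 ≤ ζ.im)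
    (hKx : ∀ ζ ∈ S, Continuous (fun q : ℝ × ℝ => K ζ q.1 q.2))
    (hK0 : ∀ ζ ∈ S, ∀ x : ℝ, K ζ x x = 0)
    (hKb : ∀ ζ ∈ S, ∀ x y : ℝ, 0 ≤ x → x ≤ y →
      ‖K ζ x y‖ ≤ (1 + y) ^ j * Real.exp (ζ.im * (y - x)))
    (hGc : ∀ ζ ∈ S, ContinuousOn (G ζ) (Ici 0))
    (hGb : ∀ ζ ∈ S, ∀ y : ℝ, 0 ≤ y → ‖G ζ y‖ ≤ B * (1 + y) ^ k * Real.exp (-ζ.im * y))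
    (hB : 0 ≤ B) (hjk : 0 ≤ j) (hk : 0 ≤ k) (hjk1 : j + k ≤ 1)
    {ζ : ℂ} (hζ : ζ ∈ S) :
    ContinuousOn (fun x => ∫ y in Ioi x, K ζ x y * (v y : ℂ) * G ζ y) (Ici 0) := by
  set f : ℝ → ℝ → ℂ := fun x y => K ζ x y * (v y : ℂ) * G ζ y with hf
  have key : ∀ x ∈ Ici (0:ℝ), (∫ y in Ioi x, f x y) =
      ∫ y, (Ioi x).indicator (f x) y ∂(volume.restrict (Ioi (0:ℝ))) := by
    intro x hx
    rw [integral_indicator measurableSet_Ioi, Measure.restrict_restrict measurableSet_Ioi,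
      Set.inter_eq_left.2 (Ioi_subset_Ioi hx)]
  refine ContinuousOn.congr ?_ key
  intro x₀ hx₀
  have hne : ∀ᵐ y ∂(volume.restrict (Ioi (0:ℝ))), y ≠ x₀ := by
    refine ae_restrict_of_ae ?_
    refine ae_iff.2 ?_
    simp [Real.volume_singleton]
  refine continuousWithinAt_of_dominated (bound := fun y => C₀ * B * (1 + y) ^ (1 - ρ)) ?_ ?_ ?_ ?_
  · filter_upwards [eventually_mem_nhdsWithin] with x hx
    refine AEStronglyMeasurable.indicator ?_ measurableSet_Ioi
    have hKcont : Continuous (fun y => K ζ x y) :=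
      (hKx ζ hζ).comp (continuous_const.prodMk continuous_id)
    show AEStronglyMeasurable (fun y => K ζ x y * (v y : ℂ) * G ζ y) _
    refine ((hKcont.aestronglyMeasurable).mul
      ((Complex.measurable_ofReal.comp hv_meas).aestronglyMeasurable)).mul ?_
    exact ((hGc ζ hζ).mono (fun y (hy : y ∈ Ioi (0:ℝ)) => mem_Ici.2 (le_of_lt hy))).aestronglyMeasurable
      measurableSet_Ioi
  · filter_upwards [eventually_mem_nhdsWithin] with x (hx : x ∈ Ici (0:ℝ))
    refine (ae_restrict_iff' measurableSet_Ioi).2 (Filter.Eventually.of_forall fun y hy => ?_)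
    by_cases hxy : y ∈ Ioi x
    · rw [Set.indicator_of_mem hxy]
      exact gen_unif_bound hv_meas hC₀ hρ hv hSim hKb hGb hB hjk hk hjk1 hζ hx hxy
    · rw [Set.indicator_of_notMem hxy, norm_zero]
      have : (0:ℝ) < 1 + y := by simp at hy; linarith
      positivity
  · exact bound_integrable_gen hC₀ hρ hB le_rfl
  · filter_upwards [hne, ae_restrict_mem measurableSet_Ioi] with y hyne (hy : y ∈ Ioi (0:ℝ))
    rcases lt_or_gt_of_ne hyne with hlt | hgt
    · -- y < x₀ : eventually the indicator vanishes
      have hev : ∀ᶠ x in nhdsWithin x₀ (Ici (0:ℝ)),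
          (Ioi x).indicator (f x) y = (0 : ℂ) := by
        have : ∀ᶠ x in nhdsWithin x₀ (Ici (0:ℝ)), y < x :=
          eventually_nhdsWithin_of_eventually_nhds (eventually_gt_nhds hlt)
        filter_upwards [this] with x hx
        exact Set.indicator_of_notMem (by simpa using le_of_lt hx) _
      have h0 : (Ioi x₀).indicator (f x₀) y = (0:ℂ) :=
        Set.indicator_of_notMem (by simpa using le_of_lt hlt) _
      refine ContinuousWithinAt.congr_of_eventuallyEq continuousWithinAt_const hev h0
    · -- y > x₀ : eventually the indicator is the function itself, continuous in x
      have hev : ∀ᶠ x in nhdsWithin x₀ (Ici (0:ℝ)),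
          (Ioi x).indicator (f x) y = f x y := by
        have : ∀ᶠ x in nhdsWithin x₀ (Ici (0:ℝ)), x < y :=
          eventually_nhdsWithin_of_eventually_nhds (eventually_lt_nhds hgt)
        filter_upwards [this] with x hx
        exact Set.indicator_of_mem (by simpa using hx) _
      have h0 : (Ioi x₀).indicator (f x₀) y = f x₀ y :=
        Set.indicator_of_mem (by simpa using hgt) _
      refine ContinuousWithinAt.congr_of_eventuallyEq ?_ hev h0
      have hKcont : Continuous (fun x => K ζ x y) :=
        (hKx ζ hζ).comp (continuous_id.prodMk continuous_const)
      exact ((hKcont.mul continuous_const).mul continuous_const).continuousWithinAt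

/-- continuity in `ζ` of the kernel integral -/
lemma gen_contzeta (hv_meas : Measurable v) (hC₀ : 0 < C₀) (hρ : 2 < ρ)
    (hv : ∀ x : ℝ, 0 ≤ x → |v x| ≤ C₀ * (1 + x) ^ (-ρ))
    (hSim : ∀ ζ ∈ S, 0 ≤ ζ.im)
    (hKζ : ∀ x y : ℝ, Continuous (fun ζ => K ζ x y))
    (hKc : ∀ ζ ∈ S, ∀ x : ℝ, Continuous (fun y => K ζ x y))
    (hKb : ∀ ζ ∈ S, ∀ x y : ℝ, 0 ≤ x → x ≤ y →
      ‖K ζ x y‖ ≤ (1 + y) ^ j * Real.exp (ζ.im * (y - x)))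
    (hGc : ∀ ζ ∈ S, ContinuousOn (G ζ) (Ici 0))
    (hGζc : ∀ y : ℝ, 0 ≤ y → ContinuousOn (fun ζ => G ζ y) S)
    (hGb : ∀ ζ ∈ S, ∀ y : ℝ, 0 ≤ y → ‖G ζ y‖ ≤ B * (1 + y) ^ k * Real.exp (-ζ.im * y))
    (hB : 0 ≤ B) (hjk : 0 ≤ j) (hk : 0 ≤ k) (hjk1 : j + k ≤ 1)
    {x : ℝ} (hx : 0 ≤ x) :
    ContinuousOn (fun ζ => ∫ y in Ioi x, K ζ x y * (v y : ℂ) * G ζ y) S := by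
  intro ζ₀ hζ₀
  refine continuousWithinAt_of_dominated (bound := fun y => C₀ * B * (1 + y) ^ (1 - ρ)) ?_ ?_ ?_ ?_
  · filter_upwards [eventually_mem_nhdsWithin] with ζ hζ
    refine (((hKc ζ hζ x).aestronglyMeasurable).mul
      ((Complex.measurable_ofReal.comp hv_meas).aestronglyMeasurable)).mul ?_
    exact ((hGc ζ hζ).mono (Ioi_subset_Ici hx)).aestronglyMeasurable measurableSet_Ioi
  · filter_upwards [eventually_mem_nhdsWithin] with ζ hζ
    refine (ae_restrict_iff' measurableSet_Ioi).2 (Filter.Eventually.of_forall fun y hy => ?_)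
    exact gen_unif_bound hv_meas hC₀ hρ hv hSim hKb hGb hB hjk hk hjk1 hζ hx hy
  · exact bound_integrable_gen hC₀ hρ hB hx
  · filter_upwards [ae_restrict_mem measurableSet_Ioi] with y (hy : y ∈ Ioi x)
    have hy0 : (0:ℝ) ≤ y := le_trans hx (le_of_lt hy)
    exact (((hKζ x y).continuousWithinAt).mul continuousWithinAt_const).mul
      ((hGζc y hy0) ζ₀ hζ₀)

end Kernel2

noncomputable def FF (v : ℝ → ℝ) : ℕ → ℂ → ℝ → ℂ
  | 0 => fun ζ x => Complex.exp (Complex.I * ζ * x)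
  | (n+1) => fun ζ x => Complex.exp (Complex.I * ζ * x) +
      ζ⁻¹ * ∫ y in Ioi x, Complex.sin (ζ * ((x:ℂ) - (y:ℂ))) * (v y : ℂ) * FF v n ζ y

noncomputable def DD (v : ℝ → ℝ) : ℕ → ℂ → ℝ → ℂ
  | 0 => fun ζ x => Complex.I * x * Complex.exp (Complex.I * ζ * x)
  | (n+1) => fun ζ x => Complex.I * x * Complex.exp (Complex.I * ζ * x) +
      (-(ζ^2)⁻¹ * (∫ y in Ioi x, Complex.sin (ζ * ((x:ℂ) - (y:ℂ))) * (v y : ℂ) * FF v n ζ y) +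
       ζ⁻¹ * ∫ y in Ioi x,
         (((x:ℂ) - (y:ℂ)) * Complex.cos (ζ * ((x:ℂ) - (y:ℂ))) * (v y : ℂ) * FF v n ζ y +
          Complex.sin (ζ * ((x:ℂ) - (y:ℂ))) * (v y : ℂ) * DD v n ζ y))

def SS (δ : ℝ) : Set ℂ := {ζ | 0 ≤ ζ.im ∧ δ ≤ ‖ζ‖}
def UU (δ : ℝ) : Set ℂ := {ζ | 0 < ζ.im ∧ δ < ‖ζ‖}

lemma UU_subset_SS (δ : ℝ) : UU δ ⊆ SS δ := fun ζ hζ => ⟨le_of_lt hζ.1, le_of_lt hζ.2⟩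

lemma isOpen_UU (δ : ℝ) : IsOpen (UU δ) := by
  have h1 : IsOpen {ζ : ℂ | 0 < ζ.im} := isOpen_lt continuous_const Complex.continuous_im
  have h2 : IsOpen {ζ : ℂ | δ < ‖ζ‖} := isOpen_lt continuous_const continuous_norm
  exact h1.inter h2

lemma SS_ne_zero {δ : ℝ} (hδ : 0 < δ) {ζ : ℂ} (hζ : ζ ∈ SS δ) : ζ ≠ 0 := by
  intro h
  rw [h] at hζ
  simp only [SS, mem_setOf_eq, norm_zero] at hζ
  linarith [hζ.2]

lemma SS_inv_norm {δ : ℝ} (hδ : 0 < δ) {ζ : ℂ} (hζ : ζ ∈ SS δ) : ‖ζ⁻¹‖ ≤ δ⁻¹ := by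
  rw [norm_inv]
  exact inv_anti₀ hδ hζ.2

lemma normE (ζ : ℂ) (x : ℝ) :
    ‖Complex.exp (Complex.I * ζ * (x:ℂ))‖ = Real.exp (-ζ.im * x) := by
  rw [Complex.norm_exp]
  congr 1
  simp [Complex.mul_re, Complex.mul_im]

lemma hasDerivAt_E (ζ : ℂ) (x : ℝ) :
    HasDerivAt (fun ζ : ℂ => Complex.exp (Complex.I * ζ * (x:ℂ)))
      (Complex.I * (x:ℂ) * Complex.exp (Complex.I * ζ * (x:ℂ))) ζ := by
  have h1 : HasDerivAt (fun ζ : ℂ => Complex.I * ζ * (x:ℂ)) (Complex.I * (x:ℂ)) ζ := by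
    simpa using (((hasDerivAt_id ζ).const_mul Complex.I).mul_const (x:ℂ))
  have := (Complex.hasDerivAt_exp (Complex.I * ζ * (x:ℂ))).comp ζ h1
  refine this.congr_deriv ?_
  ring

noncomputable def Bseq (δ C₀ ρ : ℝ) : ℕ → ℝ
  | 0 => 1
  | n+1 => 1 + δ⁻¹ * (C₀ / (ρ - 1)) * Bseq δ C₀ ρ n

noncomputable def Cseq (δ C₀ ρ : ℝ) : ℕ → ℝ
  | 0 => 1
  | n+1 => 1 + δ⁻¹ * δ⁻¹ * (C₀ / (ρ - 1)) * Bseq δ C₀ ρ n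
      + δ⁻¹ * (C₀ / (ρ - 2)) * (Bseq δ C₀ ρ n + Cseq δ C₀ ρ n)

lemma Bseq_pos {δ C₀ ρ : ℝ} (hδ : 0 < δ) (hC₀ : 0 < C₀) (hρ : 2 < ρ) (n : ℕ) :
    1 ≤ Bseq δ C₀ ρ n := by
  induction n with
  | zero => simp [Bseq]
  | succ n ih =>
    have : 0 < δ⁻¹ * (C₀ / (ρ - 1)) := mul_pos (inv_pos.2 hδ) (div_pos hC₀ (by linarith))
    simp only [Bseq]
    nlinarith

lemma Cseq_pos {δ C₀ ρ : ℝ} (hδ : 0 < δ) (hC₀ : 0 < C₀) (hρ : 2 < ρ) (n : ℕ) :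
    1 ≤ Cseq δ C₀ ρ n := by
  induction n with
  | zero => simp [Cseq]
  | succ n ih =>
    have h1 : 0 < δ⁻¹ * δ⁻¹ * (C₀ / (ρ - 1)) :=
      mul_pos (mul_pos (inv_pos.2 hδ) (inv_pos.2 hδ)) (div_pos hC₀ (by linarith))
    have h2 : 0 < δ⁻¹ * (C₀ / (ρ - 2)) := mul_pos (inv_pos.2 hδ) (div_pos hC₀ (by linarith))
    have h3 := Bseq_pos hδ hC₀ hρ n
    simp only [Cseq]
    nlinarith

lemma ksin_cont_y (ζ : ℂ) (x : ℝ) :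
    Continuous (fun y : ℝ => Complex.sin (ζ * ((x:ℂ) - (y:ℂ)))) := by
  continuity

lemma ksin_cont_joint (ζ : ℂ) :
    Continuous (fun q : ℝ × ℝ => Complex.sin (ζ * ((q.1:ℂ) - (q.2:ℂ)))) := by
  continuity

lemma ksin_cont_zeta (x y : ℝ) :
    Continuous (fun ζ : ℂ => Complex.sin (ζ * ((x:ℂ) - (y:ℂ)))) := by
  continuity

lemma kcos_cont_joint (ζ : ℂ) :
    Continuous (fun q : ℝ × ℝ => ((q.1:ℂ) - (q.2:ℂ)) * Complex.cos (ζ * ((q.1:ℂ) - (q.2:ℂ)))) := by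
  continuity

lemma kcos_cont_y (ζ : ℂ) (x : ℝ) :
    Continuous (fun y : ℝ => ((x:ℂ) - (y:ℂ)) * Complex.cos (ζ * ((x:ℂ) - (y:ℂ)))) := by
  have hc : Continuous (fun y : ℝ => (x:ℂ) - (y:ℂ)) :=
    continuous_const.sub Complex.continuous_ofReal
  exact hc.mul (Complex.continuous_cos.comp (continuous_const.mul hc))

lemma contE_x (ζ : ℂ) : Continuous (fun x : ℝ => Complex.exp (Complex.I * ζ * (x:ℂ))) :=
  Complex.continuous_exp.comp (continuous_const.mul Complex.continuous_ofReal)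

lemma contE_zeta (x : ℝ) : Continuous (fun ζ : ℂ => Complex.exp (Complex.I * ζ * (x:ℂ))) :=
  Complex.continuous_exp.comp ((continuous_const.mul continuous_id).mul continuous_const)

lemma ksin_bound {ζ : ℂ} (him : 0 ≤ ζ.im) (x y : ℝ) (hx : 0 ≤ x) (hxy : x ≤ y) :
    ‖Complex.sin (ζ * ((x:ℂ) - (y:ℂ)))‖ ≤ (1 + y) ^ (0:ℝ) * Real.exp (ζ.im * (y - x)) := by
  rw [Real.rpow_zero, one_mul]
  exact ker_sin_bound ζ him hxy

lemma kcos_bound {ζ : ℂ} (him : 0 ≤ ζ.im) (x y : ℝ) (hx : 0 ≤ x) (hxy : x ≤ y) :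
    ‖((x:ℂ) - (y:ℂ)) * Complex.cos (ζ * ((x:ℂ) - (y:ℂ)))‖ ≤
      (1 + y) ^ (1:ℝ) * Real.exp (ζ.im * (y - x)) := by
  rw [Real.rpow_one, norm_mul]
  have h1 : ‖((x:ℂ) - (y:ℂ))‖ = |x - y| := by
    rw [show ((x:ℂ) - (y:ℂ)) = ((x - y : ℝ) : ℂ) by push_cast; ring, Complex.norm_real,
      Real.norm_eq_abs]
  have h2 : |x - y| ≤ 1 + y := by
    rw [_root_.abs_of_nonpos (by linarith)]
    linarith
  calc ‖((x:ℂ) - (y:ℂ))‖ * ‖Complex.cos (ζ * ((x:ℂ) - (y:ℂ)))‖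
      ≤ (1 + y) * Real.exp (ζ.im * (y - x)) := by
        refine mul_le_mul (h1 ▸ h2) (ker_cos_bound ζ him hxy) (norm_nonneg _) (by linarith)

section Main

variable {v : ℝ → ℝ} {C₀ ρ : ℝ}

lemma main_ind (hv_meas : Measurable v) (hC₀ : 0 < C₀) (hρ : 2 < ρ)
    (hv : ∀ x : ℝ, 0 ≤ x → |v x| ≤ C₀ * (1 + x) ^ (-ρ))
    {δ : ℝ} (hδ : 0 < δ) (n : ℕ) :
    (∀ ζ ∈ SS δ, ContinuousOn (FF v n ζ) (Ici 0)) ∧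
    (∀ ζ ∈ SS δ, ∀ y : ℝ, 0 ≤ y →
      ‖FF v n ζ y‖ ≤ Bseq δ C₀ ρ n * (1 + y) ^ (0:ℝ) * Real.exp (-ζ.im * y)) ∧
    (∀ x : ℝ, 0 ≤ x → ContinuousOn (fun ζ => FF v n ζ x) (SS δ)) ∧
    (∀ ζ ∈ UU δ, ContinuousOn (DD v n ζ) (Ici 0)) ∧
    (∀ ζ ∈ UU δ, ∀ y : ℝ, 0 ≤ y →
      ‖DD v n ζ y‖ ≤ Cseq δ C₀ ρ n * (1 + y) ^ (1:ℝ) * Real.exp (-ζ.im * y)) ∧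
    (∀ x : ℝ, 0 ≤ x → ∀ ζ ∈ UU δ, HasDerivAt (fun ζ => FF v n ζ x) (DD v n ζ x) ζ) := by
  have hSimS : ∀ ζ ∈ SS δ, 0 ≤ ζ.im := fun ζ h => h.1
  have hSimU : ∀ ζ ∈ UU δ, 0 ≤ ζ.im := fun ζ h => le_of_lt h.1
  induction n with
  | zero =>
    refine ⟨?_, ?_, ?_, ?_, ?_, ?_⟩
    · intro ζ _
      simp only [FF]
      exact (contE_x ζ).continuousOn
    · intro ζ hζ y hy
      simp only [FF, Bseq]
      rw [normE, Real.rpow_zero]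
      simp
    · intro x hx
      simp only [FF]
      exact (contE_zeta x).continuousOn
    · intro ζ _
      simp only [DD]
      exact ((continuous_const.mul Complex.continuous_ofReal).mul (contE_x ζ)).continuousOn
    · intro ζ hζ y hy
      simp only [DD, Cseq]
      rw [Real.rpow_one, one_mul, norm_mul, norm_mul, normE, Complex.norm_I, one_mul,
        Complex.norm_real, Real.norm_eq_abs, _root_.abs_of_nonneg hy]
      have : (0:ℝ) < Real.exp (-ζ.im * y) := Real.exp_pos _
      nlinarith
    · intro x hx ζ hζ
      exact hasDerivAt_E ζ x
  | succ n ih =>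
    obtain ⟨ih1, ih2, ih3, ih4, ih5, ih6⟩ := ih
    set Bn := Bseq δ C₀ ρ n with hBndef
    set Cn := Cseq δ C₀ ρ n with hCndef
    have hBn1 : 1 ≤ Bn := Bseq_pos hδ hC₀ hρ n
    have hCn1 : 1 ≤ Cn := Cseq_pos hδ hC₀ hρ n
    have hBn : 0 ≤ Bn := by linarith
    have hCn : 0 ≤ Cn := by linarith
    -- kernel facts for the sin kernel on SS δ
    have hsinKx : ∀ ζ ∈ SS δ, Continuous
        (fun q : ℝ × ℝ => Complex.sin (ζ * ((q.1:ℂ) - (q.2:ℂ)))) := fun ζ _ => ksin_cont_joint ζ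
    have hsinK0 : ∀ ζ ∈ SS δ, ∀ x : ℝ, Complex.sin (ζ * ((x:ℂ) - (x:ℂ))) = 0 := by
      intro ζ _ x; simp
    have hsinKb : ∀ ζ ∈ SS δ, ∀ x y : ℝ, 0 ≤ x → x ≤ y →
        ‖Complex.sin (ζ * ((x:ℂ) - (y:ℂ)))‖ ≤ (1 + y) ^ (0:ℝ) * Real.exp (ζ.im * (y - x)) :=
      fun ζ hζ x y hx hxy => ksin_bound (hSimS ζ hζ) x y hx hxy
    have hsinKc : ∀ ζ ∈ SS δ, ∀ x : ℝ, Continuous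
        (fun y : ℝ => Complex.sin (ζ * ((x:ℂ) - (y:ℂ)))) := fun ζ _ x => ksin_cont_y ζ x
    -- same on UU δ
    have hsinKxU : ∀ ζ ∈ UU δ, Continuous
        (fun q : ℝ × ℝ => Complex.sin (ζ * ((q.1:ℂ) - (q.2:ℂ)))) := fun ζ _ => ksin_cont_joint ζ
    have hsinK0U : ∀ ζ ∈ UU δ, ∀ x : ℝ, Complex.sin (ζ * ((x:ℂ) - (x:ℂ))) = 0 := by
      intro ζ _ x; simp
    have hsinKbU : ∀ ζ ∈ UU δ, ∀ x y : ℝ, 0 ≤ x → x ≤ y →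
        ‖Complex.sin (ζ * ((x:ℂ) - (y:ℂ)))‖ ≤ (1 + y) ^ (0:ℝ) * Real.exp (ζ.im * (y - x)) :=
      fun ζ hζ x y hx hxy => ksin_bound (hSimU ζ hζ) x y hx hxy
    have hsinKcU : ∀ ζ ∈ UU δ, ∀ x : ℝ, Continuous
        (fun y : ℝ => Complex.sin (ζ * ((x:ℂ) - (y:ℂ)))) := fun ζ _ x => ksin_cont_y ζ x
    -- cos kernel on UU δ
    have hcosKxU : ∀ ζ ∈ UU δ, Continuous (fun q : ℝ × ℝ =>
        ((q.1:ℂ) - (q.2:ℂ)) * Complex.cos (ζ * ((q.1:ℂ) - (q.2:ℂ)))) :=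
      fun ζ _ => kcos_cont_joint ζ
    have hcosK0U : ∀ ζ ∈ UU δ, ∀ x : ℝ,
        ((x:ℂ) - (x:ℂ)) * Complex.cos (ζ * ((x:ℂ) - (x:ℂ))) = 0 := by
      intro ζ _ x; simp
    have hcosKbU : ∀ ζ ∈ UU δ, ∀ x y : ℝ, 0 ≤ x → x ≤ y →
        ‖((x:ℂ) - (y:ℂ)) * Complex.cos (ζ * ((x:ℂ) - (y:ℂ)))‖ ≤
          (1 + y) ^ (1:ℝ) * Real.exp (ζ.im * (y - x)) :=
      fun ζ hζ x y hx hxy => kcos_bound (hSimU ζ hζ) x y hx hxy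
    have hcosKcU : ∀ ζ ∈ UU δ, ∀ x : ℝ, Continuous (fun y : ℝ =>
        ((x:ℂ) - (y:ℂ)) * Complex.cos (ζ * ((x:ℂ) - (y:ℂ)))) :=
      fun ζ _ x => kcos_cont_y ζ x
    -- density facts for FF v n on UU δ
    have hGcU : ∀ ζ ∈ UU δ, ContinuousOn (FF v n ζ) (Ici 0) :=
      fun ζ hζ => ih1 ζ (UU_subset_SS δ hζ)
    have hGbU : ∀ ζ ∈ UU δ, ∀ y : ℝ, 0 ≤ y →
        ‖FF v n ζ y‖ ≤ Bn * (1 + y) ^ (0:ℝ) * Real.exp (-ζ.im * y) :=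
      fun ζ hζ => ih2 ζ (UU_subset_SS δ hζ)
    have hρ00 : (1:ℝ) < ρ - (0 + 0) := by norm_num; linarith
    have hρ10 : (1:ℝ) < ρ - (1 + 0) := by norm_num; linarith
    have hρ01 : (1:ℝ) < ρ - (0 + 1) := by norm_num; linarith
    -- integrability of the three basic integrands
    have hIsinF : ∀ ζ ∈ SS δ, ∀ x : ℝ, 0 ≤ x →
        IntegrableOn (fun y : ℝ => Complex.sin (ζ * ((x:ℂ) - (y:ℂ))) * (v y : ℂ) * FF v n ζ y)
          (Ioi x) ∧
        ‖∫ y in Ioi x, Complex.sin (ζ * ((x:ℂ) - (y:ℂ))) * (v y : ℂ) * FF v n ζ y‖ ≤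
          C₀ * Bn * Real.exp (-ζ.im * x) * (1 + x) ^ (1 - (ρ - (0 + 0))) / (ρ - (0 + 0) - 1) :=
      fun ζ hζ x hx =>
        gen_int hv_meas hC₀ hρ hv hSimS hsinKc hsinKb ih1 ih2 hBn hρ00 hζ hx
    have hIcosF : ∀ ζ ∈ UU δ, ∀ x : ℝ, 0 ≤ x →
        IntegrableOn (fun y : ℝ => ((x:ℂ) - (y:ℂ)) * Complex.cos (ζ * ((x:ℂ) - (y:ℂ))) *
          (v y : ℂ) * FF v n ζ y) (Ioi x) ∧
        ‖∫ y in Ioi x, ((x:ℂ) - (y:ℂ)) * Complex.cos (ζ * ((x:ℂ) - (y:ℂ))) * (v y : ℂ) *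
          FF v n ζ y‖ ≤
          C₀ * Bn * Real.exp (-ζ.im * x) * (1 + x) ^ (1 - (ρ - (1 + 0))) / (ρ - (1 + 0) - 1) :=
      fun ζ hζ x hx =>
        gen_int hv_meas hC₀ hρ hv hSimU hcosKcU hcosKbU hGcU hGbU hBn hρ10 hζ hx
    have hIsinD : ∀ ζ ∈ UU δ, ∀ x : ℝ, 0 ≤ x →
        IntegrableOn (fun y : ℝ => Complex.sin (ζ * ((x:ℂ) - (y:ℂ))) * (v y : ℂ) * DD v n ζ y)
          (Ioi x) ∧
        ‖∫ y in Ioi x, Complex.sin (ζ * ((x:ℂ) - (y:ℂ))) * (v y : ℂ) * DD v n ζ y‖ ≤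
          C₀ * Cn * Real.exp (-ζ.im * x) * (1 + x) ^ (1 - (ρ - (0 + 1))) / (ρ - (0 + 1) - 1) :=
      fun ζ hζ x hx =>
        gen_int hv_meas hC₀ hρ hv hSimU hsinKcU hsinKbU ih4 ih5 hCn hρ01 hζ hx
    -- splitting of the DD integral
    have hsplit : ∀ ζ ∈ UU δ, ∀ x : ℝ, 0 ≤ x →
        (∫ y in Ioi x,
          (((x:ℂ) - (y:ℂ)) * Complex.cos (ζ * ((x:ℂ) - (y:ℂ))) * (v y : ℂ) * FF v n ζ y +
           Complex.sin (ζ * ((x:ℂ) - (y:ℂ))) * (v y : ℂ) * DD v n ζ y)) =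
        (∫ y in Ioi x, ((x:ℂ) - (y:ℂ)) * Complex.cos (ζ * ((x:ℂ) - (y:ℂ))) * (v y : ℂ) *
          FF v n ζ y) +
        (∫ y in Ioi x, Complex.sin (ζ * ((x:ℂ) - (y:ℂ))) * (v y : ℂ) * DD v n ζ y) :=
      fun ζ hζ x hx => integral_add (hIcosF ζ hζ x hx).1 (hIsinD ζ hζ x hx).1
    refine ⟨?_, ?_, ?_, ?_, ?_, ?_⟩
    · -- I1 : continuity in x of FF (n+1)
      intro ζ hζ
      simp only [FF]
      refine ContinuousOn.add ((contE_x ζ).continuousOn) ?_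
      exact continuousOn_const.mul
        (gen_contx hv_meas hC₀ hρ hv hSimS hsinKx hsinK0 hsinKb ih1 ih2 hBn le_rfl le_rfl
          (by norm_num) hζ)
    · -- I2 : bound for FF (n+1)
      intro ζ hζ y hy
      simp only [FF]
      have h1 := (hIsinF ζ hζ y hy).2
      have hnorminv := SS_inv_norm hδ hζ
      have he : (0:ℝ) < Real.exp (-ζ.im * y) := Real.exp_pos _
      have ht0 : (0:ℝ) ≤ (1 + y) ^ (1 - (ρ - (0 + 0))) := Real.rpow_nonneg (by linarith) _
      have ht1 : (1 + y) ^ (1 - (ρ - (0 + 0))) ≤ 1 :=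
        Real.rpow_le_one_of_one_le_of_nonpos (by linarith) (by norm_num; linarith)
      calc ‖Complex.exp (Complex.I * ζ * (y:ℂ)) +
            ζ⁻¹ * ∫ t in Ioi y, Complex.sin (ζ * ((y:ℂ) - (t:ℂ))) * (v t : ℂ) * FF v n ζ t‖
          ≤ ‖Complex.exp (Complex.I * ζ * (y:ℂ))‖ +
            ‖ζ⁻¹‖ * ‖∫ t in Ioi y, Complex.sin (ζ * ((y:ℂ) - (t:ℂ))) * (v t : ℂ) * FF v n ζ t‖ := by
            rw [← norm_mul]; exact norm_add_le _ _
        _ ≤ Real.exp (-ζ.im * y) +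
            δ⁻¹ * (C₀ * Bn * Real.exp (-ζ.im * y) * (1 + y) ^ (1 - (ρ - (0 + 0))) /
              (ρ - (0 + 0) - 1)) := by
            rw [normE]
            gcongr
        _ ≤ Bseq δ C₀ ρ (n+1) * (1 + y) ^ (0:ℝ) * Real.exp (-ζ.im * y) := by
            simp only [Bseq, ← hBndef]
            rw [Real.rpow_zero]
            have hδ' : (0:ℝ) < δ⁻¹ := inv_pos.2 hδ
            have key : δ⁻¹ * (C₀ * Bn * Real.exp (-ζ.im * y) * (1 + y) ^ (1 - (ρ - (0 + 0))) /
                (ρ - (0 + 0) - 1)) ≤ δ⁻¹ * (C₀ / (ρ - 1)) * Bn * Real.exp (-ζ.im * y) := by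
              rw [show ρ - (0 + 0) - 1 = ρ - 1 by ring]
              rw [div_eq_mul_inv, div_eq_mul_inv]
              have hρ1 : (0:ℝ) < (ρ - 1)⁻¹ := inv_pos.2 (by linarith)
              nlinarith [mul_le_of_le_one_right (mul_nonneg (mul_nonneg (mul_nonneg hC₀.le hBn) he.le) hρ1.le) ht1]
            nlinarith
    · -- I3 : continuity in ζ of FF (n+1)
      intro x hx
      simp only [FF]
      refine ContinuousOn.add ((contE_zeta x).continuousOn) ?_
      refine ContinuousOn.mul ?_
        (gen_contzeta hv_meas hC₀ hρ hv hSimS (fun x y => ksin_cont_zeta x y) hsinKc hsinKb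
          ih1 ih3 ih2 hBn le_rfl le_rfl (by norm_num) hx)
      exact fun ζ hζ => (continuousAt_inv₀ (SS_ne_zero hδ hζ)).continuousWithinAt
    · -- I4 : continuity in x of DD (n+1)
      intro ζ hζ
      simp only [DD]
      refine ContinuousOn.add
        (((continuous_const.mul Complex.continuous_ofReal).mul (contE_x ζ)).continuousOn) ?_
      refine ContinuousOn.add ?_ ?_
      · exact continuousOn_const.mul
          (gen_contx hv_meas hC₀ hρ hv hSimU hsinKxU hsinK0U hsinKbU hGcU hGbU hBn le_rfl le_rfl
            (by norm_num) hζ)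
      · refine ContinuousOn.mul continuousOn_const ?_
        refine ContinuousOn.congr (f := fun x : ℝ => (∫ y in Ioi x,
          ((x:ℂ) - (y:ℂ)) * Complex.cos (ζ * ((x:ℂ) - (y:ℂ))) * (v y : ℂ) * FF v n ζ y) +
          (∫ y in Ioi x, Complex.sin (ζ * ((x:ℂ) - (y:ℂ))) * (v y : ℂ) * DD v n ζ y)) ?_
          (fun x hx => hsplit ζ hζ x hx)
        refine ContinuousOn.add ?_ ?_
        · exact gen_contx hv_meas hC₀ hρ hv hSimU hcosKxU hcosK0U hcosKbU hGcU hGbU hBn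
            (by norm_num) le_rfl (by norm_num) hζ
        · exact gen_contx hv_meas hC₀ hρ hv hSimU hsinKxU hsinK0U hsinKbU ih4 ih5 hCn le_rfl
            (by norm_num) (by norm_num) hζ
    · -- I5 : bound for DD (n+1)
      intro ζ hζ y hy
      simp only [DD]
      rw [hsplit ζ hζ y hy]
      have e0 : (0:ℝ) < Real.exp (-ζ.im * y) := Real.exp_pos _
      have hρ1 : (0:ℝ) < ρ - 1 := by linarith
      have hρ2 : (0:ℝ) < ρ - 2 := by linarith
      have hζS := UU_subset_SS δ hζ
      have hinv1 : ‖ζ⁻¹‖ ≤ δ⁻¹ := SS_inv_norm hδ hζS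
      have hinv2 : ‖-(ζ^2)⁻¹‖ ≤ δ⁻¹ * δ⁻¹ := by
        rw [norm_neg, norm_inv, norm_pow, show δ⁻¹ * δ⁻¹ = (δ*δ)⁻¹ by rw [mul_inv]]
        apply inv_anti₀ (by positivity)
        have hδζ : δ ≤ ‖ζ‖ := by exact hζS.2
        calc δ * δ ≤ ‖ζ‖ * ‖ζ‖ := by nlinarith [hδ.le]
          _ = ‖ζ‖ ^ 2 := by ring
      have hA : ‖∫ t in Ioi y, Complex.sin (ζ * ((y:ℂ) - (t:ℂ))) * (v t : ℂ) * FF v n ζ t‖ ≤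
          C₀ * Bn / (ρ - 1) * Real.exp (-ζ.im * y) := by
        refine ((hIsinF ζ hζS y hy).2).trans ?_
        have ht1 : (1 + y) ^ (1 - (ρ - (0 + 0))) ≤ 1 :=
          Real.rpow_le_one_of_one_le_of_nonpos (by linarith) (by norm_num; linarith)
        have ht0 : (0:ℝ) ≤ (1 + y) ^ (1 - (ρ - (0 + 0))) := Real.rpow_nonneg (by linarith) _
        rw [show ρ - (0 + 0) - 1 = ρ - 1 by norm_num]
        calc C₀ * Bn * Real.exp (-ζ.im * y) * (1 + y) ^ (1 - (ρ - (0 + 0))) / (ρ - 1)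
            = (C₀ * Bn / (ρ - 1) * Real.exp (-ζ.im * y)) * ((1 + y) ^ (1 - (ρ - (0 + 0)))) := by
              ring
          _ ≤ C₀ * Bn / (ρ - 1) * Real.exp (-ζ.im * y) := mul_le_of_le_one_right
              (mul_nonneg (div_nonneg (mul_nonneg hC₀.le hBn) hρ1.le) e0.le) ht1
      have hB2a : ‖∫ t in Ioi y, ((y:ℂ) - (t:ℂ)) * Complex.cos (ζ * ((y:ℂ) - (t:ℂ))) *
          (v t : ℂ) * FF v n ζ t‖ ≤ C₀ * Bn / (ρ - 2) * Real.exp (-ζ.im * y) := by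
        refine ((hIcosF ζ hζ y hy).2).trans ?_
        have ht1 : (1 + y) ^ (1 - (ρ - (1 + 0))) ≤ 1 :=
          Real.rpow_le_one_of_one_le_of_nonpos (by linarith) (by norm_num; linarith)
        rw [show ρ - (1 + 0) - 1 = ρ - 2 by ring]
        calc C₀ * Bn * Real.exp (-ζ.im * y) * (1 + y) ^ (1 - (ρ - (1 + 0))) / (ρ - 2)
            = (C₀ * Bn / (ρ - 2) * Real.exp (-ζ.im * y)) * ((1 + y) ^ (1 - (ρ - (1 + 0)))) := by
              ring
          _ ≤ C₀ * Bn / (ρ - 2) * Real.exp (-ζ.im * y) := mul_le_of_le_one_right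
              (mul_nonneg (div_nonneg (mul_nonneg hC₀.le hBn) hρ2.le) e0.le) ht1
      have hB2b : ‖∫ t in Ioi y, Complex.sin (ζ * ((y:ℂ) - (t:ℂ))) * (v t : ℂ) * DD v n ζ t‖ ≤
          C₀ * Cn / (ρ - 2) * Real.exp (-ζ.im * y) := by
        refine ((hIsinD ζ hζ y hy).2).trans ?_
        have ht1 : (1 + y) ^ (1 - (ρ - (0 + 1))) ≤ 1 :=
          Real.rpow_le_one_of_one_le_of_nonpos (by linarith) (by norm_num; linarith)
        rw [show ρ - (0 + 1) - 1 = ρ - 2 by ring]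
        calc C₀ * Cn * Real.exp (-ζ.im * y) * (1 + y) ^ (1 - (ρ - (0 + 1))) / (ρ - 2)
            = (C₀ * Cn / (ρ - 2) * Real.exp (-ζ.im * y)) * ((1 + y) ^ (1 - (ρ - (0 + 1)))) := by
              ring
          _ ≤ C₀ * Cn / (ρ - 2) * Real.exp (-ζ.im * y) := mul_le_of_le_one_right
              (mul_nonneg (div_nonneg (mul_nonneg hC₀.le hCn) hρ2.le) e0.le) ht1
      have hX : ‖Complex.I * (y:ℂ) * Complex.exp (Complex.I * ζ * (y:ℂ))‖ =
          y * Real.exp (-ζ.im * y) := by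
        rw [norm_mul, norm_mul, Complex.norm_I, one_mul, Complex.norm_real, Real.norm_eq_abs,
          _root_.abs_of_nonneg hy, normE]
      have step1 : ‖Complex.I * (y:ℂ) * Complex.exp (Complex.I * ζ * (y:ℂ)) +
          (-(ζ^2)⁻¹ * (∫ t in Ioi y, Complex.sin (ζ * ((y:ℂ) - (t:ℂ))) * (v t : ℂ) * FF v n ζ t) +
           ζ⁻¹ * ((∫ t in Ioi y, ((y:ℂ) - (t:ℂ)) * Complex.cos (ζ * ((y:ℂ) - (t:ℂ))) *
              (v t : ℂ) * FF v n ζ t) +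
             (∫ t in Ioi y, Complex.sin (ζ * ((y:ℂ) - (t:ℂ))) * (v t : ℂ) * DD v n ζ t)))‖ ≤
          y * Real.exp (-ζ.im * y) +
          (δ⁻¹ * δ⁻¹ * (C₀ * Bn / (ρ - 1) * Real.exp (-ζ.im * y)) +
           δ⁻¹ * (C₀ * Bn / (ρ - 2) * Real.exp (-ζ.im * y) +
             C₀ * Cn / (ρ - 2) * Real.exp (-ζ.im * y))) := by
        refine (norm_add_le _ _).trans ?_
        rw [hX]
        gcongr
        refine (norm_add_le _ _).trans ?_
        gcongr
        · rw [norm_mul]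
          exact mul_le_mul hinv2 hA (norm_nonneg _)
            (mul_nonneg (inv_nonneg.2 hδ.le) (inv_nonneg.2 hδ.le))
        · rw [norm_mul]
          refine mul_le_mul hinv1 ((norm_add_le _ _).trans (add_le_add hB2a hB2b))
            (norm_nonneg _) (inv_nonneg.2 hδ.le)
      refine step1.trans ?_
      simp only [Cseq, ← hBndef, ← hCndef]
      rw [Real.rpow_one]
      have c1 : (0:ℝ) ≤ δ⁻¹ * δ⁻¹ * (C₀ / (ρ - 1)) * Bn := by
        have := div_pos hC₀ hρ1
        positivity
      have c2 : (0:ℝ) ≤ δ⁻¹ * (C₀ / (ρ - 2)) * (Bn + Cn) := by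
        have := div_pos hC₀ hρ2
        positivity
      have hL : y * Real.exp (-ζ.im * y) +
          (δ⁻¹ * δ⁻¹ * (C₀ * Bn / (ρ - 1) * Real.exp (-ζ.im * y)) +
           δ⁻¹ * (C₀ * Bn / (ρ - 2) * Real.exp (-ζ.im * y) +
             C₀ * Cn / (ρ - 2) * Real.exp (-ζ.im * y))) =
          y * Real.exp (-ζ.im * y) + (δ⁻¹ * δ⁻¹ * (C₀ / (ρ - 1)) * Bn) * Real.exp (-ζ.im * y) +
            (δ⁻¹ * (C₀ / (ρ - 2)) * (Bn + Cn)) * Real.exp (-ζ.im * y) := by ring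
      have hR : (1 + δ⁻¹ * δ⁻¹ * (C₀ / (ρ - 1)) * Bn + δ⁻¹ * (C₀ / (ρ - 2)) * (Bn + Cn)) *
            (1 + y) * Real.exp (-ζ.im * y) =
          Real.exp (-ζ.im * y) + y * Real.exp (-ζ.im * y) +
            (δ⁻¹ * δ⁻¹ * (C₀ / (ρ - 1)) * Bn) * Real.exp (-ζ.im * y) +
            (δ⁻¹ * (C₀ / (ρ - 2)) * (Bn + Cn)) * Real.exp (-ζ.im * y) +
            (δ⁻¹ * δ⁻¹ * (C₀ / (ρ - 1)) * Bn) * y * Real.exp (-ζ.im * y) +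
            (δ⁻¹ * (C₀ / (ρ - 2)) * (Bn + Cn)) * y * Real.exp (-ζ.im * y) := by ring
      rw [hL, hR]
      have p1 : 0 ≤ (δ⁻¹ * δ⁻¹ * (C₀ / (ρ - 1)) * Bn) * y * Real.exp (-ζ.im * y) :=
        mul_nonneg (mul_nonneg c1 hy) e0.le
      have p2 : 0 ≤ (δ⁻¹ * (C₀ / (ρ - 2)) * (Bn + Cn)) * y * Real.exp (-ζ.im * y) :=
        mul_nonneg (mul_nonneg c2 hy) e0.le
      linarith
    · -- I6 : derivative of FF (n+1)
      intro x hx ζ₀ hζ₀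
      obtain ⟨ε, hε, hball⟩ := Metric.isOpen_iff.1 (isOpen_UU δ) ζ₀ hζ₀
      have hζ₀S := UU_subset_SS δ hζ₀
      have hne : ζ₀ ≠ 0 := SS_ne_zero hδ hζ₀S
      -- the derivative of the integral
      have hkey := hasDerivAt_integral_of_dominated_loc_of_deriv_le (𝕜 := ℂ)
        (μ := volume.restrict (Ioi x)) (x₀ := ζ₀)
        (F := fun ζ y => Complex.sin (ζ * ((x:ℂ) - (y:ℂ))) * (v y : ℂ) * FF v n ζ y)
        (F' := fun ζ y => ((x:ℂ) - (y:ℂ)) * Complex.cos (ζ * ((x:ℂ) - (y:ℂ))) * (v y : ℂ) *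
            FF v n ζ y + Complex.sin (ζ * ((x:ℂ) - (y:ℂ))) * (v y : ℂ) * DD v n ζ y)
        (bound := fun y => C₀ * Bn * (1 + y) ^ (1 - ρ) + C₀ * Cn * (1 + y) ^ (1 - ρ))
        (Metric.ball_mem_nhds ζ₀ hε) ?_ ?_ ?_ ?_ ?_ ?_
      · -- assemble the full derivative
        have hINV : HasDerivAt (fun ζ : ℂ => ζ⁻¹) (-(ζ₀^2)⁻¹) ζ₀ := hasDerivAt_inv hne
        have hMUL := hINV.mul hkey.2
        have hE := hasDerivAt_E ζ₀ x
        have htotal := hE.add hMUL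
        simp only [FF, DD]
        exact htotal
      · -- measurability near ζ₀
        filter_upwards [Metric.ball_mem_nhds ζ₀ hε] with ζ hζ
        exact ((hIsinF ζ (UU_subset_SS δ (hball hζ)) x hx).1).aestronglyMeasurable
      · -- integrability at ζ₀
        exact (hIsinF ζ₀ hζ₀S x hx).1
      · -- measurability of the derivative integrand
        exact AEStronglyMeasurable.add ((hIcosF ζ₀ hζ₀ x hx).1).aestronglyMeasurable
          ((hIsinD ζ₀ hζ₀ x hx).1).aestronglyMeasurable
      · -- bound on the derivative integrand over the ball
        filter_upwards [ae_restrict_mem measurableSet_Ioi] with y hy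
        intro ζ hζb
        have hζU := hball hζb
        refine (norm_add_le _ _).trans ?_
        refine add_le_add ?_ ?_
        · exact gen_unif_bound hv_meas hC₀ hρ hv hSimU hcosKbU hGbU hBn (by norm_num) le_rfl
            (by norm_num) hζU hx hy
        · exact gen_unif_bound hv_meas hC₀ hρ hv hSimU hsinKbU ih5 hCn le_rfl (by norm_num)
            (by norm_num) hζU hx hy
      · -- integrability of the bound
        exact (bound_integrable_gen hC₀ hρ hBn hx).add (bound_integrable_gen hC₀ hρ hCn hx)
      · -- differentiability of the integrand on the ball
        filter_upwards [ae_restrict_mem measurableSet_Ioi] with y hy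
        intro ζ hζb
        have hζU := hball hζb
        have hy0 : (0:ℝ) ≤ y := le_trans hx (le_of_lt hy)
        have hc : HasDerivAt (fun ζ : ℂ => Complex.sin (ζ * ((x:ℂ) - (y:ℂ))))
            (((x:ℂ) - (y:ℂ)) * Complex.cos (ζ * ((x:ℂ) - (y:ℂ)))) ζ := by
          have h1 : HasDerivAt (fun ζ : ℂ => ζ * ((x:ℂ) - (y:ℂ))) ((x:ℂ) - (y:ℂ)) ζ :=
            hasDerivAt_mul_const _
          have := (Complex.hasDerivAt_sin (ζ * ((x:ℂ) - (y:ℂ)))).comp ζ h1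
          refine this.congr_deriv ?_
          ring
        have hF := ih6 y hy0 ζ hζU
        exact (hc.mul_const ((v y : ℂ))).mul hF

lemma diff_bound (hv_meas : Measurable v) (hC₀ : 0 < C₀) (hρ : 2 < ρ)
    (hv : ∀ x : ℝ, 0 ≤ x → |v x| ≤ C₀ * (1 + x) ^ (-ρ))
    {δ : ℝ} (hδ : 0 < δ) :
    ∀ n : ℕ, ∀ ζ ∈ SS δ, ∀ x : ℝ, 0 ≤ x →
      ‖FF v (n+1) ζ x - FF v n ζ x‖ ≤
        (δ⁻¹ * (C₀ / (ρ - 1)))^(n+1) * ((1+x) ^ ((1:ℝ)-ρ))^n / n.factorial *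
          Real.exp (-ζ.im * x) := by
  have hSimS : ∀ ζ ∈ SS δ, 0 ≤ ζ.im := fun ζ h => h.1
  have hρ1 : (0:ℝ) < ρ - 1 := by linarith
  have hρ00 : (1:ℝ) < ρ - (0 + 0) := by norm_num; linarith
  have hsinKb : ∀ ζ ∈ SS δ, ∀ x y : ℝ, 0 ≤ x → x ≤ y →
      ‖Complex.sin (ζ * ((x:ℂ) - (y:ℂ)))‖ ≤ (1 + y) ^ (0:ℝ) * Real.exp (ζ.im * (y - x)) :=
    fun ζ hζ x y hx hxy => ksin_bound (hSimS ζ hζ) x y hx hxy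
  have hsinKc : ∀ ζ ∈ SS δ, ∀ x : ℝ, Continuous
      (fun y : ℝ => Complex.sin (ζ * ((x:ℂ) - (y:ℂ)))) := fun ζ _ x => ksin_cont_y ζ x
  have hM := fun m => main_ind hv_meas hC₀ hρ hv hδ m
  have hBpos : ∀ m : ℕ, (0:ℝ) ≤ Bseq δ C₀ ρ m := fun m => by
    linarith [Bseq_pos hδ hC₀ hρ m]
  have hIsin : ∀ m : ℕ, ∀ ζ ∈ SS δ, ∀ x : ℝ, 0 ≤ x →
      IntegrableOn (fun y : ℝ => Complex.sin (ζ * ((x:ℂ) - (y:ℂ))) * (v y : ℂ) * FF v m ζ y)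
        (Ioi x) ∧
      ‖∫ y in Ioi x, Complex.sin (ζ * ((x:ℂ) - (y:ℂ))) * (v y : ℂ) * FF v m ζ y‖ ≤
        C₀ * Bseq δ C₀ ρ m * Real.exp (-ζ.im * x) * (1 + x) ^ (1 - (ρ - (0 + 0))) /
          (ρ - (0 + 0) - 1) :=
    fun m ζ hζ x hx => gen_int hv_meas hC₀ hρ hv hSimS hsinKc hsinKb (hM m).1 (hM m).2.1
      (hBpos m) hρ00 hζ hx
  intro n
  induction n with
  | zero =>
    intro ζ hζ x hx
    have e0 : (0:ℝ) < Real.exp (-ζ.im * x) := Real.exp_pos _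
    simp only [FF]
    rw [add_sub_cancel_left, norm_mul]
    have h1 := (hIsin 0 ζ hζ x hx).2
    have h2 : ‖∫ y in Ioi x, Complex.sin (ζ * ((x:ℂ) - (y:ℂ))) * (v y : ℂ) * FF v 0 ζ y‖ ≤
        C₀ * Real.exp (-ζ.im * x) * (1 + x) ^ (1 - (ρ - (0 + 0))) / (ρ - (0 + 0) - 1) := by
      refine h1.trans (le_of_eq ?_)
      simp [Bseq]
    have ht1 : (1 + x) ^ (1 - (ρ - (0 + 0))) ≤ 1 :=
      Real.rpow_le_one_of_one_le_of_nonpos (by linarith) (by norm_num; linarith)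
    have ht0 : (0:ℝ) ≤ (1 + x) ^ (1 - (ρ - (0 + 0))) := Real.rpow_nonneg (by linarith) _
    calc ‖ζ⁻¹‖ * ‖∫ y in Ioi x, Complex.sin (ζ * ((x:ℂ) - (y:ℂ))) * (v y : ℂ) * FF v 0 ζ y‖
        ≤ δ⁻¹ * (C₀ * Real.exp (-ζ.im * x) * (1 + x) ^ (1 - (ρ - (0 + 0))) /
            (ρ - (0 + 0) - 1)) :=
          mul_le_mul (SS_inv_norm hδ hζ) h2 (norm_nonneg _) (inv_nonneg.2 hδ.le)
      _ ≤ (δ⁻¹ * (C₀ / (ρ - 1)))^(0+1) * ((1+x) ^ ((1:ℝ)-ρ))^0 / Nat.factorial 0 *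
            Real.exp (-ζ.im * x) := by
          rw [pow_one, pow_zero, Nat.factorial_zero, show ρ - (0 + 0) - 1 = ρ - 1 by ring]
          rw [show (δ⁻¹ * (C₀ / (ρ - 1)) * 1 / (1:ℕ) * Real.exp (-ζ.im * x)) =
            δ⁻¹ * (C₀ / (ρ - 1)) * Real.exp (-ζ.im * x) by push_cast; ring]
          calc δ⁻¹ * (C₀ * Real.exp (-ζ.im * x) * (1 + x) ^ (1 - (ρ - (0 + 0))) / (ρ - 1))
              = (δ⁻¹ * (C₀ / (ρ - 1)) * Real.exp (-ζ.im * x)) *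
                  ((1 + x) ^ (1 - (ρ - (0 + 0)))) := by ring
            _ ≤ δ⁻¹ * (C₀ / (ρ - 1)) * Real.exp (-ζ.im * x) := mul_le_of_le_one_right
                (mul_nonneg (mul_nonneg (inv_nonneg.2 hδ.le)
                  (div_nonneg hC₀.le hρ1.le)) e0.le) ht1
  | succ n ihn =>
    intro ζ hζ x hx
    have e0 : (0:ℝ) < Real.exp (-ζ.im * x) := Real.exp_pos _
    set A := δ⁻¹ * (C₀ / (ρ - 1)) with hAdef
    have hA0 : 0 ≤ A := mul_nonneg (inv_nonneg.2 hδ.le) (div_nonneg hC₀.le hρ1.le)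
    set p := ρ + (n:ℝ) * (ρ - 1) with hpdef
    have hp : 1 < p := by
      have hn : (0:ℝ) ≤ (n:ℝ) := Nat.cast_nonneg n
      have : (0:ℝ) ≤ (n:ℝ) * (ρ - 1) := mul_nonneg hn (by linarith)
      simp only [hpdef]
      linarith
    have heq : FF v (n+1+1) ζ x - FF v (n+1) ζ x =
        ζ⁻¹ * ∫ y in Ioi x, Complex.sin (ζ * ((x:ℂ) - (y:ℂ))) * (v y : ℂ) *
          (FF v (n+1) ζ y - FF v n ζ y) := by
      have e1 : FF v (n+1+1) ζ x = Complex.exp (Complex.I * ζ * (x:ℂ)) +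
          ζ⁻¹ * ∫ y in Ioi x, Complex.sin (ζ * ((x:ℂ) - (y:ℂ))) * (v y : ℂ) *
            FF v (n+1) ζ y := rfl
      have e2 : FF v (n+1) ζ x = Complex.exp (Complex.I * ζ * (x:ℂ)) +
          ζ⁻¹ * ∫ y in Ioi x, Complex.sin (ζ * ((x:ℂ) - (y:ℂ))) * (v y : ℂ) *
            FF v n ζ y := rfl
      rw [e1, e2, add_sub_add_left_eq_sub, ← mul_sub,
        ← integral_sub (hIsin (n+1) ζ hζ x hx).1 (hIsin n ζ hζ x hx).1]
      congr 1
      refine integral_congr_ae (Filter.Eventually.of_forall fun y => ?_)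
      ring
    rw [heq, norm_mul]
    have haesm : AEStronglyMeasurable
        (fun y : ℝ => Complex.sin (ζ * ((x:ℂ) - (y:ℂ))) * (v y : ℂ) *
          (FF v (n+1) ζ y - FF v n ζ y)) (volume.restrict (Ioi x)) := by
      refine (((ksin_cont_y ζ x).aestronglyMeasurable).mul
        ((Complex.measurable_ofReal.comp hv_meas).aestronglyMeasurable)).mul ?_
      exact ((((hM (n+1)).1 ζ hζ).sub ((hM n).1 ζ hζ)).mono
        (Ioi_subset_Ici hx)).aestronglyMeasurable measurableSet_Ioi
    have hbnd : ∀ y ∈ Ioi x, ‖Complex.sin (ζ * ((x:ℂ) - (y:ℂ))) * (v y : ℂ) *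
        (FF v (n+1) ζ y - FF v n ζ y)‖ ≤
        (C₀ * (A^(n+1) / n.factorial) * Real.exp (-ζ.im * x)) * (1 + y) ^ (-p) := by
      intro y hy
      have hxy : x ≤ y := le_of_lt hy
      have hy0 : (0:ℝ) ≤ y := le_trans hx hxy
      have h1y : (0:ℝ) < 1 + y := by linarith
      have hsin := ker_sin_bound ζ (hSimS ζ hζ) hxy
      have hvb : ‖(v y : ℂ)‖ ≤ C₀ * (1 + y) ^ (-ρ) := by
        rw [Complex.norm_real, Real.norm_eq_abs]; exact hv y hy0
      have hu := ihn ζ hζ y hy0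
      have hfac : (0:ℝ) < n.factorial := by exact_mod_cast Nat.factorial_pos n
      calc ‖Complex.sin (ζ * ((x:ℂ) - (y:ℂ))) * (v y : ℂ) * (FF v (n+1) ζ y - FF v n ζ y)‖
          = ‖Complex.sin (ζ * ((x:ℂ) - (y:ℂ)))‖ * ‖(v y : ℂ)‖ *
            ‖FF v (n+1) ζ y - FF v n ζ y‖ := by rw [norm_mul, norm_mul]
        _ ≤ Real.exp (ζ.im * (y - x)) * (C₀ * (1 + y) ^ (-ρ)) *
            (A^(n+1) * ((1+y) ^ ((1:ℝ)-ρ))^n / n.factorial * Real.exp (-ζ.im * y)) := by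
            gcongr <;> positivity
        _ = C₀ * (A^(n+1) / n.factorial) * (Real.exp (ζ.im * (y - x)) * Real.exp (-ζ.im * y)) *
            ((1 + y) ^ (-ρ) * ((1+y) ^ ((1:ℝ)-ρ))^n) := by ring
        _ = (C₀ * (A^(n+1) / n.factorial) * Real.exp (-ζ.im * x)) * (1 + y) ^ (-p) := by
            have h3 : Real.exp (ζ.im * (y - x)) * Real.exp (-ζ.im * y) =
                Real.exp (-ζ.im * x) := by
              rw [← Real.exp_add]; congr 1; ring
            have h1 : ((1+y) ^ ((1:ℝ)-ρ))^n = (1+y) ^ (((1:ℝ)-ρ) * (n:ℝ)) := by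
              rw [Real.rpow_mul h1y.le, Real.rpow_natCast]
            have h2 : (1 + y) ^ (-ρ) * (1+y) ^ (((1:ℝ)-ρ) * (n:ℝ)) = (1 + y) ^ (-p) := by
              rw [← Real.rpow_add h1y]; congr 1; simp only [hpdef]; push_cast; ring
            rw [h3, h1, h2]
    have hie := int_est hp hx haesm hbnd
    calc ‖ζ⁻¹‖ * ‖∫ y in Ioi x, Complex.sin (ζ * ((x:ℂ) - (y:ℂ))) * (v y : ℂ) *
          (FF v (n+1) ζ y - FF v n ζ y)‖
        ≤ δ⁻¹ * ((C₀ * (A^(n+1) / n.factorial) * Real.exp (-ζ.im * x)) *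
            (1 + x) ^ (1 - p) / (p - 1)) :=
          mul_le_mul (SS_inv_norm hδ hζ) hie.2 (norm_nonneg _) (inv_nonneg.2 hδ.le)
      _ = A^(n+1+1) * ((1+x) ^ ((1:ℝ)-ρ))^(n+1) / (n+1).factorial * Real.exp (-ζ.im * x) := by
          have h1x : (0:ℝ) < 1 + x := by linarith
          have hτ : (1 + x) ^ ((1:ℝ) - p) = ((1+x) ^ ((1:ℝ)-ρ))^(n+1) := by
            rw [show (1:ℝ) - p = ((1:ℝ)-ρ) * ((n:ℝ)+1) by simp only [hpdef]; push_cast; ring,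
              Real.rpow_mul h1x.le]
            rw [show ((n:ℝ)+1) = ((n+1 : ℕ) : ℝ) by push_cast; ring, Real.rpow_natCast]
          have hpm1 : p - 1 = ((n:ℝ)+1) * (ρ - 1) := by simp only [hpdef]; push_cast; ring
          have hfac : ((n+1).factorial : ℝ) = ((n:ℝ)+1) * (n.factorial : ℝ) := by
            rw [Nat.factorial_succ]; push_cast; ring
          have hfacn : ((n.factorial : ℝ)) ≠ 0 := by
            exact_mod_cast Nat.factorial_ne_zero n
          have hn1 : ((n:ℝ)+1) ≠ 0 := by positivity
          have hρ1' : (ρ - 1) ≠ 0 := ne_of_gt hρ1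
          rw [hτ, hpm1, hfac]
          simp only [hAdef]
          generalize ((n:ℝ)+1) = a
          generalize ρ - 1 = b
          ring

noncomputable def Phi (v : ℝ → ℝ) (ζ : ℂ) (x : ℝ) : ℂ :=
  FF v 0 ζ x + ∑' n : ℕ, (FF v (n+1) ζ x - FF v n ζ x)

lemma phi_props (hv_meas : Measurable v) (hC₀ : 0 < C₀) (hρ : 2 < ρ)
    (hv : ∀ x : ℝ, 0 ≤ x → |v x| ≤ C₀ * (1 + x) ^ (-ρ))
    {δ : ℝ} (hδ : 0 < δ) :
    (∀ x : ℝ, 0 ≤ x → ContinuousOn (fun ζ => Phi v ζ x) (SS δ)) ∧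
    (∀ x : ℝ, 0 ≤ x → DifferentiableOn ℂ (fun ζ => Phi v ζ x) (UU δ)) ∧
    (∀ ζ ∈ SS δ, ContinuousOn (Phi v ζ) (Ici 0)) ∧
    (∃ M : ℝ, 0 ≤ M ∧ ∀ ζ ∈ SS δ, ∀ x : ℝ, 0 ≤ x → ‖Phi v ζ x‖ ≤ M * Real.exp (-ζ.im * x)) ∧
    (∀ ζ ∈ SS δ, ∀ x : ℝ, 0 ≤ x → Phi v ζ x = Complex.exp (Complex.I * ζ * (x:ℂ)) +
        ζ⁻¹ * ∫ y in Ioi x, Complex.sin (ζ * ((x:ℂ) - (y:ℂ))) * (v y : ℂ) * Phi v ζ y) := by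
  have hSimS : ∀ ζ ∈ SS δ, 0 ≤ ζ.im := fun ζ h => h.1
  have hρ1 : (0:ℝ) < ρ - 1 := by linarith
  set A := δ⁻¹ * (C₀ / (ρ - 1)) with hAdef
  have hA0 : 0 ≤ A := mul_nonneg (inv_nonneg.2 hδ.le) (div_nonneg hC₀.le hρ1.le)
  have hu : Summable (fun n : ℕ => A^(n+1) / (n.factorial : ℝ)) := by
    refine ((Real.summable_pow_div_factorial A).mul_left A).congr fun n => ?_
    rw [pow_succ]
    ring
  set EA := ∑' n : ℕ, A^(n+1) / (n.factorial : ℝ) with hEAdef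
  have hterm_nonneg : ∀ n : ℕ, (0:ℝ) ≤ A^(n+1) / (n.factorial : ℝ) := fun n => by positivity
  have hEA0 : 0 ≤ EA := tsum_nonneg hterm_nonneg
  have hdb := diff_bound hv_meas hC₀ hρ hv hδ
  have hM := fun m => main_ind hv_meas hC₀ hρ hv hδ m
  -- simplified difference bound
  have hdb' : ∀ n : ℕ, ∀ ζ ∈ SS δ, ∀ x : ℝ, 0 ≤ x →
      ‖FF v (n+1) ζ x - FF v n ζ x‖ ≤ A^(n+1) / (n.factorial : ℝ) * Real.exp (-ζ.im * x) := by
    intro n ζ hζ x hx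
    refine (hdb n ζ hζ x hx).trans ?_
    have ht1 : ((1+x) ^ ((1:ℝ)-ρ))^n ≤ 1 := by
      refine pow_le_one₀ (Real.rpow_nonneg (by linarith) _) ?_
      exact Real.rpow_le_one_of_one_le_of_nonpos (by linarith) (by linarith)
    have hfac : (0:ℝ) < (n.factorial : ℝ) := by exact_mod_cast Nat.factorial_pos n
    have e0 : (0:ℝ) < Real.exp (-ζ.im * x) := Real.exp_pos _
    calc A ^ (n + 1) * ((1 + x) ^ ((1:ℝ) - ρ)) ^ n / (n.factorial : ℝ) * Real.exp (-ζ.im * x)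
        = (A ^ (n + 1) / (n.factorial : ℝ) * Real.exp (-ζ.im * x)) *
            ((1 + x) ^ ((1:ℝ) - ρ)) ^ n := by ring
      _ ≤ A ^ (n + 1) / (n.factorial : ℝ) * Real.exp (-ζ.im * x) :=
          mul_le_of_le_one_right (by positivity) ht1
  have hdb'' : ∀ n : ℕ, ∀ ζ ∈ SS δ, ∀ x : ℝ, 0 ≤ x →
      ‖FF v (n+1) ζ x - FF v n ζ x‖ ≤ A^(n+1) / (n.factorial : ℝ) := by
    intro n ζ hζ x hx
    refine (hdb' n ζ hζ x hx).trans ?_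
    have he : Real.exp (-ζ.im * x) ≤ 1 := by
      rw [Real.exp_le_one_iff]
      nlinarith [hSimS ζ hζ]
    exact mul_le_of_le_one_right (hterm_nonneg n) he
  -- uniform convergence in ζ
  have hconvζ : ∀ x : ℝ, 0 ≤ x → TendstoUniformlyOn (fun m ζ => FF v m ζ x)
      (fun ζ => Phi v ζ x) atTop (SS δ) := by
    intro x hx
    have T := tendstoUniformlyOn_tsum_nat hu
      (fun n ζ hζ => hdb'' n ζ hζ x hx) (s := SS δ)
    have hc : TendstoUniformlyOn (fun (_ : ℕ) ζ => FF v 0 ζ x) (fun ζ => FF v 0 ζ x)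
        atTop (SS δ) := fun u hu' => Filter.Eventually.of_forall
          (fun m ζ _ => refl_mem_uniformity hu')
    have T2 := hc.add T
    refine T2.congr (Filter.Eventually.of_forall fun m => ?_)
    intro ζ hζ
    show FF v 0 ζ x + ∑ n ∈ Finset.range m, (FF v (n+1) ζ x - FF v n ζ x) = FF v m ζ x
    rw [Finset.sum_range_sub (fun k => FF v k ζ x), add_sub_cancel]
  -- uniform convergence in x for fixed ζ
  have hconvx : ∀ ζ ∈ SS δ, TendstoUniformlyOn (fun m x => FF v m ζ x)
      (Phi v ζ) atTop (Ici 0) := by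
    intro ζ hζ
    have T := tendstoUniformlyOn_tsum_nat hu
      (fun n x (hx : x ∈ Ici (0:ℝ)) => hdb'' n ζ hζ x hx) (s := Ici 0)
    have hc : TendstoUniformlyOn (fun (_ : ℕ) x => FF v 0 ζ x) (fun x => FF v 0 ζ x)
        atTop (Ici 0) := fun u hu' => Filter.Eventually.of_forall
          (fun m x _ => refl_mem_uniformity hu')
    have T2 := hc.add T
    refine T2.congr (Filter.Eventually.of_forall fun m => ?_)
    intro x hx
    show FF v 0 ζ x + ∑ n ∈ Finset.range m, (FF v (n+1) ζ x - FF v n ζ x) = FF v m ζ x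
    rw [Finset.sum_range_sub (fun k => FF v k ζ x), add_sub_cancel]
  -- uniform bound on the iterates
  have hFFb : ∀ m : ℕ, ∀ ζ ∈ SS δ, ∀ x : ℝ, 0 ≤ x →
      ‖FF v m ζ x‖ ≤ (1 + EA) * Real.exp (-ζ.im * x) := by
    intro m ζ hζ x hx
    have h0 : ‖FF v 0 ζ x‖ = Real.exp (-ζ.im * x) := by
      simp only [FF]; exact normE ζ x
    have hsum : FF v m ζ x - FF v 0 ζ x =
        ∑ k ∈ Finset.range m, (FF v (k+1) ζ x - FF v k ζ x) :=
      (Finset.sum_range_sub (fun k => FF v k ζ x) m).symm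
    have hdiff : ‖FF v m ζ x - FF v 0 ζ x‖ ≤ EA * Real.exp (-ζ.im * x) := by
      rw [hsum]
      refine (norm_sum_le _ _).trans ?_
      calc ∑ k ∈ Finset.range m, ‖FF v (k+1) ζ x - FF v k ζ x‖
          ≤ ∑ k ∈ Finset.range m, A^(k+1) / (k.factorial : ℝ) * Real.exp (-ζ.im * x) :=
            Finset.sum_le_sum (fun k _ => hdb' k ζ hζ x hx)
        _ = (∑ k ∈ Finset.range m, A^(k+1) / (k.factorial : ℝ)) * Real.exp (-ζ.im * x) := by
            rw [Finset.sum_mul]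
        _ ≤ EA * Real.exp (-ζ.im * x) := by
            have := hu.sum_le_tsum (Finset.range m) (fun k _ => hterm_nonneg k)
            have e0 : (0:ℝ) ≤ Real.exp (-ζ.im * x) := (Real.exp_pos _).le
            exact mul_le_mul_of_nonneg_right this e0
    calc ‖FF v m ζ x‖ = ‖FF v 0 ζ x + (FF v m ζ x - FF v 0 ζ x)‖ := by ring_nf
      _ ≤ ‖FF v 0 ζ x‖ + ‖FF v m ζ x - FF v 0 ζ x‖ := norm_add_le _ _
      _ ≤ Real.exp (-ζ.im * x) + EA * Real.exp (-ζ.im * x) := by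
          rw [h0]; exact add_le_add le_rfl hdiff
      _ = (1 + EA) * Real.exp (-ζ.im * x) := by ring
  refine ⟨?_, ?_, ?_, ?_, ?_⟩
  · -- continuity in ζ
    intro x hx
    exact (hconvζ x hx).continuousOn
      (Filter.Eventually.of_forall fun m => (hM m).2.2.1 x hx).frequently
  · -- differentiability on UU δ
    intro x hx
    refine TendstoLocallyUniformlyOn.differentiableOn
      (((hconvζ x hx).tendstoLocallyUniformlyOn).mono (UU_subset_SS δ))
      (Filter.Eventually.of_forall fun m => ?_) (isOpen_UU δ)
    intro ζ hζ
    exact (((hM m).2.2.2.2.2 x hx ζ hζ).differentiableAt).differentiableWithinAt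
  · -- continuity in x
    intro ζ hζ
    exact (hconvx ζ hζ).continuousOn
      (Filter.Eventually.of_forall fun m => (hM m).1 ζ hζ).frequently
  · -- bound
    refine ⟨1 + EA, by linarith, ?_⟩
    intro ζ hζ x hx
    have h1 := ((hconvζ x hx).tendsto_at hζ).norm
    exact le_of_tendsto h1 (Filter.Eventually.of_forall fun m => hFFb m ζ hζ x hx)
  · -- integral equation
    intro ζ hζ x hx
    have h1 : Filter.Tendsto (fun m => FF v (m+1) ζ x) atTop (nhds (Phi v ζ x)) :=
      ((hconvζ x hx).tendsto_at hζ).comp (Filter.tendsto_add_atTop_nat 1)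
    have h2 : Filter.Tendsto
        (fun m => ∫ y in Ioi x, Complex.sin (ζ * ((x:ℂ) - (y:ℂ))) * (v y : ℂ) * FF v m ζ y)
        atTop (nhds (∫ y in Ioi x,
          Complex.sin (ζ * ((x:ℂ) - (y:ℂ))) * (v y : ℂ) * Phi v ζ y)) := by
      refine tendsto_integral_of_dominated_convergence
        (fun y => C₀ * (1 + EA) * (1 + y) ^ (1 - ρ)) ?_ ?_ ?_ ?_
      · intro m
        refine (((ksin_cont_y ζ x).aestronglyMeasurable).mul
          ((Complex.measurable_ofReal.comp hv_meas).aestronglyMeasurable)).mul ?_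
        exact (((hM m).1 ζ hζ).mono (Ioi_subset_Ici hx)).aestronglyMeasurable measurableSet_Ioi
      · exact bound_integrable_gen hC₀ hρ (by linarith) hx
      · intro m
        refine (ae_restrict_iff' measurableSet_Ioi).2 (Filter.Eventually.of_forall fun y hy => ?_)
        refine gen_unif_bound (k := 0) (j := 0) (B := 1 + EA)
          (K := fun ζ x y => Complex.sin (ζ * ((x:ℂ) - (y:ℂ)))) (G := FF v m) (S := SS δ)
          hv_meas hC₀ hρ hv hSimS
          (fun ζ' hζ' x' y' hx' hxy' => ksin_bound (hSimS ζ' hζ') x' y' hx' hxy')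
          (fun ζ' hζ' y' hy' => by
            rw [Real.rpow_zero, mul_one]
            exact hFFb m ζ' hζ' y' hy')
          (by linarith) le_rfl le_rfl (by norm_num) hζ hx hy
      · refine (ae_restrict_iff' measurableSet_Ioi).2 (Filter.Eventually.of_forall fun y hy => ?_)
        have hy0 : (0:ℝ) ≤ y := le_trans hx (le_of_lt hy)
        have hp := (hconvζ y hy0).tendsto_at hζ
        have := hp.const_mul (Complex.sin (ζ * ((x:ℂ) - (y:ℂ))) * (v y : ℂ))
        simpa [mul_assoc] using this
    have h3 : Filter.Tendsto (fun m => FF v (m+1) ζ x) atTop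
        (nhds (Complex.exp (Complex.I * ζ * (x:ℂ)) + ζ⁻¹ * ∫ y in Ioi x,
          Complex.sin (ζ * ((x:ℂ) - (y:ℂ))) * (v y : ℂ) * Phi v ζ y)) := by
      have := (tendsto_const_nhds (x := Complex.exp (Complex.I * ζ * (x:ℂ)))
        (f := atTop (α := ℕ))).add (h2.const_mul ζ⁻¹)
      exact this.congr fun m => rfl
    exact tendsto_nhds_unique h1 h3

lemma jost_unique (hv_meas : Measurable v) (hC₀ : 0 < C₀) (hρ : 2 < ρ)
    (hv : ∀ x : ℝ, 0 ≤ x → |v x| ≤ C₀ * (1 + x) ^ (-ρ))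
    (ζ : ℂ) (him : 0 ≤ ζ.im) (hζ0 : ζ ≠ 0) (f g : ℝ → ℂ)
    (hfc : ContinuousOn f (Ici 0)) (hgc : ContinuousOn g (Ici 0))
    (Mf Mg : ℝ)
    (hMf : ∀ x : ℝ, 0 ≤ x → ‖f x‖ ≤ Mf * Real.exp (-ζ.im * x))
    (hMg : ∀ x : ℝ, 0 ≤ x → ‖g x‖ ≤ Mg * Real.exp (-ζ.im * x))
    (hfe : ∀ x : ℝ, 0 ≤ x → f x = Complex.exp (Complex.I * ζ * (x:ℂ)) +
      ζ⁻¹ * ∫ y in Ioi x, Complex.sin (ζ * ((x:ℂ) - (y:ℂ))) * (v y : ℂ) * f y)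
    (hge : ∀ x : ℝ, 0 ≤ x → g x = Complex.exp (Complex.I * ζ * (x:ℂ)) +
      ζ⁻¹ * ∫ y in Ioi x, Complex.sin (ζ * ((x:ℂ) - (y:ℂ))) * (v y : ℂ) * g y) :
    ∀ x : ℝ, 0 ≤ x → f x = g x := by
  have hρ1 : (0:ℝ) < ρ - 1 := by linarith
  set δζ := ‖ζ‖ with hδζdef
  have hδζ : 0 < δζ := norm_pos_iff.mpr hζ0
  set Aζ := δζ⁻¹ * (C₀ / (ρ - 1)) with hAdef
  have hA0 : 0 ≤ Aζ := mul_nonneg (inv_nonneg.2 hδζ.le) (div_nonneg hC₀.le hρ1.le)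
  set M := Mf + Mg with hMdef
  have hub : ∀ x : ℝ, 0 ≤ x → ‖f x - g x‖ ≤ M * Real.exp (-ζ.im * x) := by
    intro x hx
    calc ‖f x - g x‖ ≤ ‖f x‖ + ‖g x‖ := norm_sub_le _ _
      _ ≤ Mf * Real.exp (-ζ.im * x) + Mg * Real.exp (-ζ.im * x) :=
          add_le_add (hMf x hx) (hMg x hx)
      _ = M * Real.exp (-ζ.im * x) := by rw [hMdef]; ring
  have hM0 : 0 ≤ M := by
    have h1 := hub 0 le_rfl
    have h2 : Real.exp (-ζ.im * 0) = 1 := by rw [mul_zero, Real.exp_zero]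
    rw [h2, mul_one] at h1
    exact le_trans (norm_nonneg _) h1
  -- integrability of the two integrands
  have hint : ∀ (h : ℝ → ℂ) (Mh : ℝ), ContinuousOn h (Ici 0) →
      (∀ x : ℝ, 0 ≤ x → ‖h x‖ ≤ Mh * Real.exp (-ζ.im * x)) →
      ∀ x : ℝ, 0 ≤ x →
        IntegrableOn (fun y : ℝ => Complex.sin (ζ * ((x:ℂ) - (y:ℂ))) * (v y : ℂ) * h y)
          (Ioi x) := by
    intro h Mh hc hb x hx
    have haesm : AEStronglyMeasurable
        (fun y : ℝ => Complex.sin (ζ * ((x:ℂ) - (y:ℂ))) * (v y : ℂ) * h y)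
        (volume.restrict (Ioi x)) := by
      refine (((ksin_cont_y ζ x).aestronglyMeasurable).mul
        ((Complex.measurable_ofReal.comp hv_meas).aestronglyMeasurable)).mul ?_
      exact (hc.mono (Ioi_subset_Ici hx)).aestronglyMeasurable measurableSet_Ioi
    refine (int_est (M := C₀ * Mh * Real.exp (-ζ.im * x)) (by linarith : (1:ℝ) < ρ) hx haesm
      ?_).1
    intro y hy
    have hxy : x ≤ y := le_of_lt hy
    have hy0 : (0:ℝ) ≤ y := le_trans hx hxy
    have h1y : (0:ℝ) < 1 + y := by linarith
    have hvb : ‖(v y : ℂ)‖ ≤ C₀ * (1 + y) ^ (-ρ) := by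
      rw [Complex.norm_real, Real.norm_eq_abs]; exact hv y hy0
    have hMh0 : 0 ≤ Mh := by
      have h1 := hb 0 le_rfl
      have h2 : Real.exp (-ζ.im * 0) = 1 := by rw [mul_zero, Real.exp_zero]
      rw [h2, mul_one] at h1
      exact le_trans (norm_nonneg _) h1
    calc ‖Complex.sin (ζ * ((x:ℂ) - (y:ℂ))) * (v y : ℂ) * h y‖
        = ‖Complex.sin (ζ * ((x:ℂ) - (y:ℂ)))‖ * ‖(v y : ℂ)‖ * ‖h y‖ := by
          rw [norm_mul, norm_mul]
      _ ≤ Real.exp (ζ.im * (y - x)) * (C₀ * (1 + y) ^ (-ρ)) *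
          (Mh * Real.exp (-ζ.im * y)) := by
          have t1 : ‖Complex.sin (ζ * ((x:ℂ) - (y:ℂ)))‖ * ‖(v y : ℂ)‖ ≤
              Real.exp (ζ.im * (y - x)) * (C₀ * (1 + y) ^ (-ρ)) :=
            mul_le_mul (ker_sin_bound ζ him hxy) hvb (norm_nonneg _) (Real.exp_pos _).le
          exact mul_le_mul t1 (hb y hy0) (norm_nonneg _)
            (mul_nonneg (Real.exp_pos _).le
              (mul_nonneg hC₀.le (Real.rpow_nonneg h1y.le _)))
      _ = (C₀ * Mh * (Real.exp (ζ.im * (y - x)) * Real.exp (-ζ.im * y))) *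
          (1 + y) ^ (-ρ) := by ring
      _ = C₀ * Mh * Real.exp (-ζ.im * x) * (1 + y) ^ (-ρ) := by
          rw [← Real.exp_add, show ζ.im * (y - x) + -ζ.im * y = -ζ.im * x by ring]
  have hueq : ∀ x : ℝ, 0 ≤ x → f x - g x =
      ζ⁻¹ * ∫ y in Ioi x, Complex.sin (ζ * ((x:ℂ) - (y:ℂ))) * (v y : ℂ) * (f y - g y) := by
    intro x hx
    rw [hfe x hx, hge x hx, add_sub_add_left_eq_sub, ← mul_sub,
      ← integral_sub (hint f Mf hfc hMf x hx) (hint g Mg hgc hMg x hx)]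
    congr 1
    refine integral_congr_ae (Filter.Eventually.of_forall fun y => ?_)
    ring
  have claim : ∀ n : ℕ, ∀ x : ℝ, 0 ≤ x → ‖f x - g x‖ ≤
      M * Aζ^n * ((1+x) ^ ((1:ℝ)-ρ))^n / (n.factorial : ℝ) * Real.exp (-ζ.im * x) := by
    intro n
    induction n with
    | zero =>
      intro x hx
      simpa using hub x hx
    | succ n ihn =>
      intro x hx
      have e0 : (0:ℝ) < Real.exp (-ζ.im * x) := Real.exp_pos _
      set p := ρ + (n:ℝ) * (ρ - 1) with hpdef
      have hp : 1 < p := by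
        have hn : (0:ℝ) ≤ (n:ℝ) := Nat.cast_nonneg n
        have : (0:ℝ) ≤ (n:ℝ) * (ρ - 1) := mul_nonneg hn (by linarith)
        simp only [hpdef]; linarith
      rw [hueq x hx, norm_mul]
      have haesm : AEStronglyMeasurable
          (fun y : ℝ => Complex.sin (ζ * ((x:ℂ) - (y:ℂ))) * (v y : ℂ) * (f y - g y))
          (volume.restrict (Ioi x)) := by
        refine (((ksin_cont_y ζ x).aestronglyMeasurable).mul
          ((Complex.measurable_ofReal.comp hv_meas).aestronglyMeasurable)).mul ?_
        exact ((hfc.sub hgc).mono (Ioi_subset_Ici hx)).aestronglyMeasurable measurableSet_Ioi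
      have hbnd : ∀ y ∈ Ioi x, ‖Complex.sin (ζ * ((x:ℂ) - (y:ℂ))) * (v y : ℂ) * (f y - g y)‖ ≤
          (C₀ * (M * Aζ^n / (n.factorial : ℝ)) * Real.exp (-ζ.im * x)) * (1 + y) ^ (-p) := by
        intro y hy
        have hxy : x ≤ y := le_of_lt hy
        have hy0 : (0:ℝ) ≤ y := le_trans hx hxy
        have h1y : (0:ℝ) < 1 + y := by linarith
        have hvb : ‖(v y : ℂ)‖ ≤ C₀ * (1 + y) ^ (-ρ) := by
          rw [Complex.norm_real, Real.norm_eq_abs]; exact hv y hy0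
        have hfac : (0:ℝ) < (n.factorial : ℝ) := by exact_mod_cast Nat.factorial_pos n
        calc ‖Complex.sin (ζ * ((x:ℂ) - (y:ℂ))) * (v y : ℂ) * (f y - g y)‖
            = ‖Complex.sin (ζ * ((x:ℂ) - (y:ℂ)))‖ * ‖(v y : ℂ)‖ * ‖f y - g y‖ := by
              rw [norm_mul, norm_mul]
          _ ≤ Real.exp (ζ.im * (y - x)) * (C₀ * (1 + y) ^ (-ρ)) *
              (M * Aζ^n * ((1+y) ^ ((1:ℝ)-ρ))^n / (n.factorial : ℝ) *
                Real.exp (-ζ.im * y)) := by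
              have t1 : ‖Complex.sin (ζ * ((x:ℂ) - (y:ℂ)))‖ * ‖(v y : ℂ)‖ ≤
                  Real.exp (ζ.im * (y - x)) * (C₀ * (1 + y) ^ (-ρ)) :=
                mul_le_mul (ker_sin_bound ζ him hxy) hvb (norm_nonneg _) (Real.exp_pos _).le
              exact mul_le_mul t1 (ihn y hy0) (norm_nonneg _)
                (mul_nonneg (Real.exp_pos _).le
                  (mul_nonneg hC₀.le (Real.rpow_nonneg h1y.le _)))
          _ = C₀ * (M * Aζ^n / (n.factorial : ℝ)) *
              (Real.exp (ζ.im * (y - x)) * Real.exp (-ζ.im * y)) *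
              ((1 + y) ^ (-ρ) * ((1+y) ^ ((1:ℝ)-ρ))^n) := by ring
          _ = (C₀ * (M * Aζ^n / (n.factorial : ℝ)) * Real.exp (-ζ.im * x)) *
              (1 + y) ^ (-p) := by
              have h3 : Real.exp (ζ.im * (y - x)) * Real.exp (-ζ.im * y) =
                  Real.exp (-ζ.im * x) := by
                rw [← Real.exp_add]; congr 1; ring
              have h1 : ((1+y) ^ ((1:ℝ)-ρ))^n = (1+y) ^ (((1:ℝ)-ρ) * (n:ℝ)) := by
                rw [Real.rpow_mul h1y.le, Real.rpow_natCast]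
              have h2 : (1 + y) ^ (-ρ) * (1+y) ^ (((1:ℝ)-ρ) * (n:ℝ)) = (1 + y) ^ (-p) := by
                rw [← Real.rpow_add h1y]; congr 1; simp only [hpdef]; push_cast; ring
              rw [h3, h1, h2]
      have hie := int_est hp hx haesm hbnd
      have hninv : ‖ζ⁻¹‖ = δζ⁻¹ := by
        rw [norm_inv]
      calc ‖ζ⁻¹‖ * ‖∫ y in Ioi x, Complex.sin (ζ * ((x:ℂ) - (y:ℂ))) * (v y : ℂ) *
            (f y - g y)‖
          ≤ δζ⁻¹ * ((C₀ * (M * Aζ^n / (n.factorial : ℝ)) * Real.exp (-ζ.im * x)) *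
              (1 + x) ^ (1 - p) / (p - 1)) := by
            rw [hninv]
            exact mul_le_mul_of_nonneg_left hie.2 (inv_nonneg.2 hδζ.le)
        _ = M * Aζ^(n+1) * ((1+x) ^ ((1:ℝ)-ρ))^(n+1) / ((n+1).factorial : ℝ) *
              Real.exp (-ζ.im * x) := by
            have h1x : (0:ℝ) < 1 + x := by linarith
            have hτ : (1 + x) ^ ((1:ℝ) - p) = ((1+x) ^ ((1:ℝ)-ρ))^(n+1) := by
              rw [show (1:ℝ) - p = ((1:ℝ)-ρ) * ((n:ℝ)+1) by simp only [hpdef]; push_cast; ring,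
                Real.rpow_mul h1x.le]
              rw [show ((n:ℝ)+1) = ((n+1 : ℕ) : ℝ) by push_cast; ring, Real.rpow_natCast]
            have hpm1 : p - 1 = ((n:ℝ)+1) * (ρ - 1) := by simp only [hpdef]; push_cast; ring
            have hfac : (((n+1).factorial : ℕ) : ℝ) = ((n:ℝ)+1) * (n.factorial : ℝ) := by
              rw [Nat.factorial_succ]; push_cast; ring
            have hfacn : ((n.factorial : ℝ)) ≠ 0 := by
              exact_mod_cast Nat.factorial_ne_zero n
            have hn1 : ((n:ℝ)+1) ≠ 0 := by positivity
            have hρ1' : (ρ - 1) ≠ 0 := ne_of_gt hρ1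
            rw [hτ, hpm1, hfac]
            simp only [hAdef]
            generalize ((n:ℝ)+1) = a
            generalize ρ - 1 = b
            ring
  -- conclude
  intro x hx
  have e0 : (0:ℝ) < Real.exp (-ζ.im * x) := Real.exp_pos _
  have hfinal : ∀ n : ℕ, ‖f x - g x‖ ≤ M * Real.exp (-ζ.im * x) * (Aζ^n / (n.factorial : ℝ)) := by
    intro n
    refine (claim n x hx).trans ?_
    have ht1 : ((1+x) ^ ((1:ℝ)-ρ))^n ≤ 1 := by
      refine pow_le_one₀ (Real.rpow_nonneg (by linarith) _) ?_
      exact Real.rpow_le_one_of_one_le_of_nonpos (by linarith) (by linarith)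
    have hfac : (0:ℝ) < (n.factorial : ℝ) := by exact_mod_cast Nat.factorial_pos n
    calc M * Aζ^n * ((1+x) ^ ((1:ℝ)-ρ))^n / (n.factorial : ℝ) * Real.exp (-ζ.im * x)
        = (M * Real.exp (-ζ.im * x) * (Aζ^n / (n.factorial : ℝ))) *
            ((1+x) ^ ((1:ℝ)-ρ))^n := by ring
      _ ≤ M * Real.exp (-ζ.im * x) * (Aζ^n / (n.factorial : ℝ)) :=
          mul_le_of_le_one_right (by positivity) ht1
  have htend : Filter.Tendsto (fun n : ℕ => M * Real.exp (-ζ.im * x) *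
      (Aζ^n / (n.factorial : ℝ))) atTop (nhds 0) := by
    have h1 := (Real.summable_pow_div_factorial Aζ).tendsto_atTop_zero
    have := h1.const_mul (M * Real.exp (-ζ.im * x))
    simpa using this
  have hle : ‖f x - g x‖ ≤ 0 :=
    ge_of_tendsto htend (Filter.Eventually.of_forall hfinal)
  have : f x - g x = 0 := norm_le_zero_iff.1 hle
  exact sub_eq_zero.1 this

end Main

/-- For each fixed `x ≥ 0`, the Jost solution `ζ ↦ θ(x,ζ)` is holomorphic on the
open upper half-plane and continuous on `{Im ζ ≥ 0, ζ ≠ 0}`. -/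
theorem jost_solution_holomorphic_continuous
    (v : ℝ → ℝ) (hv_meas : Measurable v) (C₀ ρ : ℝ)
    (hC₀ : 0 < C₀) (hρ : 2 < ρ)
    (hv : ∀ x : ℝ, 0 ≤ x → |v x| ≤ C₀ * (1 + x) ^ (-ρ))
    (θ : ℂ → ℝ → ℂ)
    (hθcont : ∀ ζ : ℂ, 0 ≤ ζ.im → ζ ≠ 0 → ContinuousOn (θ ζ) (Set.Ici 0))
    (hθbdd : ∀ ζ : ℂ, 0 ≤ ζ.im → ζ ≠ 0 →
      ∃ M : ℝ, ∀ x : ℝ, 0 ≤ x → Real.exp (ζ.im * x) * ‖θ ζ x‖ ≤ M)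
    (hθeq : ∀ ζ : ℂ, 0 ≤ ζ.im → ζ ≠ 0 → ∀ x : ℝ, 0 ≤ x →
      θ ζ x = Complex.exp (Complex.I * ζ * x) +
        ζ⁻¹ * ∫ y in Set.Ioi x, Complex.sin (ζ * ((x : ℂ) - (y : ℂ))) * (v y : ℂ) * θ ζ y) :
    ∀ x : ℝ, 0 ≤ x →
      DifferentiableOn ℂ (fun ζ : ℂ => θ ζ x) {ζ : ℂ | 0 < ζ.im} ∧
      ContinuousOn (fun ζ : ℂ => θ ζ x) {ζ : ℂ | 0 ≤ ζ.im ∧ ζ ≠ 0} := by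
  have hθb' : ∀ ζ : ℂ, 0 ≤ ζ.im → ζ ≠ 0 →
      ∃ M : ℝ, ∀ x : ℝ, 0 ≤ x → ‖θ ζ x‖ ≤ M * Real.exp (-ζ.im * x) := by
    intro ζ him h0
    obtain ⟨M, hM⟩ := hθbdd ζ him h0
    refine ⟨M, fun x hx => ?_⟩
    have h1 := hM x hx
    have key : Real.exp (-ζ.im * x) * Real.exp (ζ.im * x) = 1 := by
      rw [← Real.exp_add]; simp
    have h2 := mul_le_mul_of_nonneg_left h1 (Real.exp_pos (-ζ.im * x)).le
    nlinarith [norm_nonneg (θ ζ x)]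
  have hprops := fun (δ : ℝ) (hδ : 0 < δ) => phi_props hv_meas hC₀ hρ hv hδ
  have hagree : ∀ ζ : ℂ, 0 ≤ ζ.im → ζ ≠ 0 → ∀ x : ℝ, 0 ≤ x → θ ζ x = Phi v ζ x := by
    intro ζ him h0
    have hδζ : 0 < ‖ζ‖ := norm_pos_iff.mpr h0
    obtain ⟨P1, P2, P3, ⟨MP, hMP0, hMP⟩, P5⟩ := hprops ‖ζ‖ hδζ
    have hζS : ζ ∈ SS ‖ζ‖ := ⟨him, le_rfl⟩
    obtain ⟨Mθ, hMθ⟩ := hθb' ζ him h0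
    exact jost_unique hv_meas hC₀ hρ hv ζ him h0 (θ ζ) (Phi v ζ) (hθcont ζ him h0)
      (P3 ζ hζS) Mθ MP hMθ (fun x hx => hMP ζ hζS x hx)
      (fun x hx => hθeq ζ him h0 x hx) (fun x hx => P5 ζ hζS x hx)
  intro x hx
  constructor
  · -- holomorphy on the upper half-plane
    intro ζ₀ hζ₀
    have him : 0 < ζ₀.im := hζ₀
    have h0 : ζ₀ ≠ 0 := by
      intro h; rw [h] at him; simp at him
    have hδζ : 0 < ‖ζ₀‖ := norm_pos_iff.mpr h0
    set δ := ‖ζ₀‖ / 2 with hδdef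
    have hδ : 0 < δ := half_pos hδζ
    have hζ₀U : ζ₀ ∈ UU δ := ⟨him, by simp only [hδdef]; linarith⟩
    obtain ⟨P1, P2, P3, P4, P5⟩ := hprops δ hδ
    have hd : DifferentiableAt ℂ (fun ζ => Phi v ζ x) ζ₀ :=
      (P2 x hx ζ₀ hζ₀U).differentiableAt ((isOpen_UU δ).mem_nhds hζ₀U)
    have heq : (fun ζ => θ ζ x) =ᶠ[nhds ζ₀] (fun ζ => Phi v ζ x) := by
      filter_upwards [(isOpen_UU δ).mem_nhds hζ₀U] with ζ hζ
      exact hagree ζ (le_of_lt hζ.1) (SS_ne_zero hδ (UU_subset_SS δ hζ)) x hx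
    exact (hd.congr_of_eventuallyEq heq).differentiableWithinAt
  · -- continuity on the closed region
    intro ζ₀ hζ₀
    obtain ⟨him, h0⟩ := hζ₀
    have hδζ : 0 < ‖ζ₀‖ := norm_pos_iff.mpr h0
    set δ := ‖ζ₀‖ / 2 with hδdef
    have hδ : 0 < δ := half_pos hδζ
    obtain ⟨P1, P2, P3, P4, P5⟩ := hprops δ hδ
    have hζ₀S : ζ₀ ∈ SS δ := ⟨him, by simp only [hδdef]; linarith⟩
    have hc : ContinuousWithinAt (fun ζ => Phi v ζ x) (SS δ) ζ₀ := P1 x hx ζ₀ hζ₀S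
    have hmem : SS δ ∈ nhdsWithin ζ₀ {ζ : ℂ | 0 ≤ ζ.im ∧ ζ ≠ 0} := by
      rw [mem_nhdsWithin]
      refine ⟨Metric.ball ζ₀ δ, Metric.isOpen_ball, Metric.mem_ball_self hδ, ?_⟩
      rintro ζ ⟨hb, him2, -⟩
      refine ⟨him2, ?_⟩
      have hd1 : dist ζ ζ₀ < δ := Metric.mem_ball.1 hb
      have h2 : |‖ζ₀‖ - ‖ζ‖| ≤ ‖ζ₀ - ζ‖ := abs_norm_sub_norm_le _ _
      rw [dist_eq_norm] at hd1
      have h3 : ‖ζ₀ - ζ‖ = ‖ζ - ζ₀‖ := by rw [norm_sub_rev]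
      rw [h3] at h2
      have h4 := (abs_le.1 h2).2
      simp only [hδdef] at hd1 ⊢
      linarith
    have hcw : ContinuousWithinAt (fun ζ => Phi v ζ x)
        {ζ : ℂ | 0 ≤ ζ.im ∧ ζ ≠ 0} ζ₀ := hc.mono_of_mem_nhdsWithin hmem
    refine hcw.congr ?_ ?_
    · intro ζ hζ
      exact hagree ζ hζ.1 hζ.2 x hx
    · exact hagree ζ₀ him h0 x hx
end
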